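/- arXiv:1812.03548 — 9 statements merged into one kernel-verified Lean document; each statement's English description precedes it below -/
import Mathlib

section
/- Suppose Z and W are random variables such that for every λ > 0 one has Ent(e^{λZ}) ≤ λ²·E[W·e^{λZ}], and W satisfies the tail bound P(W > L + θt) ≤ e^{−t} for all t > 0, where L, θ > 0. Then there is an absolute constant c > 0 such that for all t > 0, P(Z − E Z > t) ≤ exp(−c·min{t²/(L + θ), t/√θ}). -/
open MeasureTheory ProbabilityTheory Real
open Filter Set
open scoped ENNReal Topology

/-- Entropy of a nonnegative random variable: `Ent(Z) = E[Z log Z] - E[Z] log E[Z]`. -/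
noncomputable def entropy {Ω : Type*} [MeasurableSpace Ω] (μ : Measure Ω) (Z : Ω → ℝ) : ℝ :=
  (∫ ω, Z ω * Real.log (Z ω) ∂μ) - (∫ ω, Z ω ∂μ) * Real.log (∫ ω, Z ω ∂μ)

/-- Young's inequality: `u*v ≤ u log u - u + e^v` for `u ≥ 0`. -/
lemma young_ineq {u v : ℝ} (hu : 0 ≤ u) : u * v ≤ u * Real.log u - u + Real.exp v := by
  rcases eq_or_lt_of_le hu with h | h
  · simp [← h, (Real.exp_pos v).le]
  · have h1 : (v - Real.log u) + 1 ≤ Real.exp (v - Real.log u) := Real.add_one_le_exp _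
    have h2 : u * Real.exp (v - Real.log u) = Real.exp v := by
      rw [Real.exp_sub, Real.exp_log h]; field_simp
    nlinarith [mul_le_mul_of_nonneg_left h1 h.le]


/-- tangent line bound : `e^a (x - a + 1) ≤ e^x`. -/
lemma tangent_exp (a x : ℝ) : Real.exp a * (x - a + 1) ≤ Real.exp x := by
  have h := Real.add_one_le_exp (x - a)
  have := mul_le_mul_of_nonneg_left h (Real.exp_pos a).le
  rwa [← Real.exp_add, add_sub_cancel] at this

lemma abs_mul_exp_le (l z : ℝ) (hl : 0 < l) :
    |z * Real.exp (l * z)| ≤ |z| + Real.exp ((l + 1) * z) := by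
  rcases le_or_gt z 0 with hz | hz
  · have h1 : Real.exp (l * z) ≤ 1 := Real.exp_le_one_iff.mpr (by nlinarith)
    have h2 : |z * Real.exp (l * z)| = |z| * Real.exp (l * z) := by
      rw [abs_mul, abs_of_pos (Real.exp_pos _)]
    nlinarith [abs_nonneg z, Real.exp_pos ((l+1)*z), Real.exp_pos (l*z)]
  · have h1 : z ≤ Real.exp z := by nlinarith [Real.add_one_le_exp z]
    have h2 : |z * Real.exp (l * z)| = z * Real.exp (l * z) :=
      abs_of_nonneg (by positivity)
    have h3 : z * Real.exp (l * z) ≤ Real.exp z * Real.exp (l * z) :=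
      mul_le_mul_of_nonneg_right h1 (Real.exp_pos _).le
    rw [h2, ← Real.exp_add] at *
    have : z + l * z = (l + 1) * z := by ring
    rw [this] at h3
    nlinarith [abs_nonneg z]

/-- `e^x - 1 - x ≤ x * e^x` for `x ≥ 0` (actually all x, but we need x ≥ 0). -/
lemma exp_sub_one_sub_le {x : ℝ} (hx : 0 ≤ x) :
    Real.exp x - 1 - x ≤ x * Real.exp x := by
  have h := Real.add_one_le_exp (-x)
  have := mul_le_mul_of_nonneg_left h (Real.exp_pos x).le
  rw [← Real.exp_add, add_neg_cancel, Real.exp_zero] at this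
  nlinarith

/-- scaled Young inequality. -/
lemma young_ineq' {u v F : ℝ} (hu : 0 ≤ u) (hF : 0 < F) :
    u * v ≤ u * (Real.log u - Real.log F) - u + F * Real.exp v := by
  rcases eq_or_lt_of_le hu with h | h
  · rw [← h]; simp; positivity
  · have hlog : Real.log (u / F) = Real.log u - Real.log F := Real.log_div h.ne' hF.ne'
    calc u * v = F * (u / F * v) := by field_simp
      _ ≤ F * (u / F * (Real.log u - Real.log F) - u / F + Real.exp v) := by
          rw [← hlog]
          exact mul_le_mul_of_nonneg_left (young_ineq (by positivity)) hF.le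
      _ = u * (Real.log u - Real.log F) - u + F * Real.exp v := by field_simp

lemma iter_lemma {f : ℝ → ℝ} {K b l : ℝ} (hK : 0 ≤ K) (hl : 0 < l) (hlb : l ≤ b)
    (hstep : ∀ x : ℝ, 0 < x → x ≤ b → f x ≤ 2 * f (x / 2) + K * x ^ 2) :
    ∀ n : ℕ, f l ≤ 2 ^ n * f (l / 2 ^ n) + 2 * K * l ^ 2 * (1 - (1/2 : ℝ) ^ n) := by
  intro n
  induction n with
  | zero => simp
  | succ n ih =>
    have h2n : (0:ℝ) < 2 ^ n := by positivity
    have hx : 0 < l / 2 ^ n := by positivity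
    have hxb : l / 2 ^ n ≤ b := by
      refine le_trans ?_ hlb
      rw [div_le_iff₀ h2n]
      nlinarith [one_le_pow₀ (by norm_num : (1:ℝ) ≤ 2) (n := n)]
    have hs := hstep _ hx hxb
    have hdiv : l / 2 ^ n / 2 = l / 2 ^ (n+1) := by
      rw [div_div, ← pow_succ]
    rw [hdiv] at hs
    have hmul := mul_le_mul_of_nonneg_left hs (le_of_lt h2n)
    have hexp : (2:ℝ) ^ n * (2 * f (l / 2 ^ (n+1)) + K * (l / 2 ^ n) ^ 2) =
        2 ^ (n+1) * f (l / 2 ^ (n+1)) + K * l ^ 2 * (1/2 : ℝ) ^ n := by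
      rw [pow_succ, one_div_pow]
      field_simp
    rw [hexp] at hmul
    have : (2:ℝ) ^ n * f (l / 2 ^ n) ≤
        2 ^ (n+1) * f (l / 2 ^ (n+1)) + K * l ^ 2 * (1/2:ℝ) ^ n := hmul
    have hgeo : 2 * K * l ^ 2 * (1 - (1/2:ℝ) ^ (n+1)) =
        2 * K * l ^ 2 * (1 - (1/2:ℝ) ^ n) + K * l ^ 2 * (1/2:ℝ) ^ n := by
      rw [pow_succ]; ring
    linarith

section AuxProb
variable {Ω : Type} [MeasurableSpace Ω] {μ : Measure Ω} {Z W : Ω → ℝ} {L θ : ℝ}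

/-- Integrability of `Z e^{lZ}`. -/
lemma integrable_mul_exp (hZ : Integrable Z μ)
    (hexp : ∀ l : ℝ, 0 < l → Integrable (fun ω => Real.exp (l * Z ω)) μ)
    {l : ℝ} (hl : 0 < l) :
    Integrable (fun ω => Z ω * Real.exp (l * Z ω)) μ := by
  have hmeas : AEStronglyMeasurable (fun ω => Z ω * Real.exp (l * Z ω)) μ :=
    hZ.1.mul (Real.continuous_exp.comp_aestronglyMeasurable (hZ.1.const_mul l))
  refine (hZ.abs.add (hexp (l + 1) (by linarith))).mono hmeas ?_
  filter_upwards with ω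
  simp only [Real.norm_eq_abs]
  exact (abs_mul_exp_le l (Z ω) hl).trans (le_abs_self _)

/-- Jensen lower bound : `e^{l E Z} ≤ E e^{lZ}`. -/
lemma exp_le_integral_exp [IsProbabilityMeasure μ] (hZ : Integrable Z μ) (l : ℝ)
    (hexp : Integrable (fun ω => Real.exp (l * Z ω)) μ) :
    Real.exp (l * ∫ ω, Z ω ∂μ) ≤ ∫ ω, Real.exp (l * Z ω) ∂μ := by
  set m := ∫ ω, Z ω ∂μ with hm
  have hint : Integrable (fun ω => Real.exp (l * m) * (l * Z ω - l * m + 1)) μ :=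
    (((hZ.const_mul l).sub (integrable_const _)).add (integrable_const 1)).const_mul _
  have h := integral_mono hint hexp (fun ω => tangent_exp (l * m) (l * Z ω))
  have h1 : Integrable (fun a => l * Z a - l * m) μ :=
    (hZ.const_mul l).sub (integrable_const _)
  have h2 : Integrable (fun a : Ω => l * Z a) μ := hZ.const_mul l
  calc Real.exp (l * m)
      = ∫ ω, Real.exp (l * m) * (l * Z ω - l * m + 1) ∂μ := by
        rw [integral_const_mul, integral_add h1 (integrable_const 1),
          integral_sub h2 (integrable_const _), integral_const_mul,
          integral_const, integral_const]
        simp [← hm]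
    _ ≤ _ := h

/-- positivity of the mgf. -/
lemma integral_exp_pos' [IsProbabilityMeasure μ] (hZ : Integrable Z μ) (l : ℝ)
    (hexp : Integrable (fun ω => Real.exp (l * Z ω)) μ) :
    0 < ∫ ω, Real.exp (l * Z ω) ∂μ :=
  lt_of_lt_of_le (Real.exp_pos _) (exp_le_integral_exp hZ l hexp)

/-- If `U` has tail `μ(U > s) ≤ e^{-2s}` then `e^U` is integrable with `E e^U ≤ 2`. -/
lemma integral_exp_tail [IsProbabilityMeasure μ] {U : Ω → ℝ} (hU : AEMeasurable U μ)
    (htail : ∀ s : ℝ, 0 < s → μ {ω | U ω > s} ≤ ENNReal.ofReal (Real.exp (-(2*s)))) :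
    Integrable (fun ω => Real.exp (U ω)) μ ∧ ∫ ω, Real.exp (U ω) ∂μ ≤ 2 := by
  have hUm : AEMeasurable (fun ω => Real.exp (U ω)) μ := Real.measurable_exp.comp_aemeasurable hU
  have key : ∫⁻ ω, ENNReal.ofReal (Real.exp (U ω)) ∂μ ≤ 2 := by
    rw [lintegral_eq_lintegral_meas_lt μ (ae_of_all _ fun ω => (Real.exp_pos _).le) hUm]
    have hsplit : (Ioi (0:ℝ)) = Ioc (0:ℝ) 1 ∪ Ioi 1 := (Ioc_union_Ioi_eq_Ioi zero_le_one).symm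
    rw [hsplit, lintegral_union measurableSet_Ioi Ioc_disjoint_Ioi_same]
    have hb1 : ∫⁻ t in Ioc (0:ℝ) 1, μ {a | t < Real.exp (U a)} ≤ 1 := by
      calc ∫⁻ t in Ioc (0:ℝ) 1, μ {a | t < Real.exp (U a)}
          ≤ ∫⁻ _ in Ioc (0:ℝ) 1, 1 :=
            setLIntegral_mono_ae' measurableSet_Ioc (ae_of_all _ fun t _ => prob_le_one)
        _ = 1 := by rw [setLIntegral_one]; simp [Real.volume_Ioc]
    have hb2 : ∫⁻ t in Ioi (1:ℝ), μ {a | t < Real.exp (U a)} ≤ 1 := by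
      have hmono : ∀ (t : ℝ), t ∈ Ioi (1:ℝ) → μ {a | t < Real.exp (U a)} ≤
          ENNReal.ofReal (t ^ (-2 : ℝ)) := by
        intro t ht
        have ht1 : (1:ℝ) < t := ht
        have ht0 : (0:ℝ) < t := by linarith
        have hset : {a | t < Real.exp (U a)} = {a | U a > Real.log t} := by
          ext a; simp only [mem_setOf_eq, gt_iff_lt]
          exact (Real.log_lt_iff_lt_exp ht0).symm
        rw [hset]
        refine (htail (Real.log t) (Real.log_pos ht1)).trans (le_of_eq ?_)
        congr 1
        rw [Real.rpow_def_of_pos ht0]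
        ring_nf
      calc ∫⁻ t in Ioi (1:ℝ), μ {a | t < Real.exp (U a)}
          ≤ ∫⁻ t in Ioi (1:ℝ), ENNReal.ofReal (t ^ (-2 : ℝ)) :=
            setLIntegral_mono_ae' measurableSet_Ioi (ae_of_all _ hmono)
        _ = ENNReal.ofReal (∫ t in Ioi (1:ℝ), t ^ (-2 : ℝ)) := by
            rw [← ofReal_integral_eq_lintegral_ofReal
              (integrableOn_Ioi_rpow_of_lt (by norm_num) one_pos)
              (((ae_restrict_mem measurableSet_Ioi).mono (fun t ht => by
                have : (0:ℝ) < t := lt_trans one_pos ht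
                positivity)))]
        _ ≤ 1 := by
            rw [integral_Ioi_rpow_of_lt (by norm_num) one_pos]
            norm_num
    calc _ ≤ (1 : ℝ≥0∞) + 1 := add_le_add hb1 hb2
      _ = 2 := by norm_num
  have hfin : HasFiniteIntegral (fun ω => Real.exp (U ω)) μ := by
    rw [hasFiniteIntegral_iff_ofReal (ae_of_all _ fun ω => (Real.exp_pos _).le)]
    exact lt_of_le_of_lt key (by norm_num)
  have hint : Integrable (fun ω => Real.exp (U ω)) μ := ⟨hUm.aestronglyMeasurable, hfin⟩
  refine ⟨hint, ?_⟩
  rw [integral_eq_lintegral_of_nonneg_ae (ae_of_all _ fun ω => (Real.exp_pos _).le)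
    hUm.aestronglyMeasurable]
  refine ENNReal.toReal_le_of_le_ofReal (by norm_num) ?_
  rw [show ENNReal.ofReal (2:ℝ) = 2 by norm_num]
  exact key

lemma entropy_exp_eq (hZ : Integrable Z μ) {l : ℝ} :
    entropy μ (fun ω => Real.exp (l * Z ω)) =
      l * (∫ ω, Z ω * Real.exp (l * Z ω) ∂μ) -
        (∫ ω, Real.exp (l * Z ω) ∂μ) * Real.log (∫ ω, Real.exp (l * Z ω) ∂μ) := by
  unfold entropy
  have : (fun ω => Real.exp (l * Z ω) * Real.log (Real.exp (l * Z ω))) =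
      fun ω => l * (Z ω * Real.exp (l * Z ω)) := by
    funext ω; rw [Real.log_exp]; ring
  rw [this, integral_const_mul]

/-- The normalized remainder integrals tend to zero. -/
lemma tendsto_remainder [IsProbabilityMeasure μ] (hZ : Integrable Z μ)
    (hexps : ∀ l : ℝ, 0 < l → Integrable (fun ω => Real.exp (l * Z ω)) μ)
    {l : ℝ} (hl : 0 < l) :
    Tendsto (fun n : ℕ => ∫ ω, (Real.exp ((l / 2 ^ n) * Z ω) - 1 - (l / 2 ^ n) * Z ω)
      / (l / 2 ^ n) ∂μ) atTop (𝓝 0) := by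
  set s : ℕ → ℝ := fun n => l / 2 ^ n with hs
  have hspos : ∀ n, 0 < s n := fun n => by positivity
  have hsle : ∀ n, s n ≤ l := fun n => by
    rw [hs]
    simp only []
    rw [div_le_iff₀ (by positivity)]
    nlinarith [one_le_pow₀ (by norm_num : (1:ℝ) ≤ 2) (n := n)]
  have hstend : Tendsto s atTop (𝓝 0) := by
    have : s = fun n : ℕ => l * (1/2 : ℝ) ^ n := by
      funext n; rw [hs]; field_simp; rw [← mul_pow]; norm_num
    rw [this]
    simpa using (tendsto_pow_atTop_nhds_zero_of_lt_one
      (r := (1/2:ℝ)) (by norm_num) (by norm_num)).const_mul l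
  set g : ℕ → Ω → ℝ := fun n ω => (Real.exp (s n * Z ω) - 1 - s n * Z ω) / s n with hg
  have hbound : ∀ n, ∀ ω, |g n ω| ≤ |Z ω| + (1/l) * Real.exp (2 * l * Z ω) := by
    intro n ω
    set z := Z ω with hz'
    have hsn := hspos n
    have hnn : 0 ≤ g n ω := by
      apply div_nonneg _ hsn.le
      nlinarith [Real.add_one_le_exp (s n * z)]
    rw [abs_of_nonneg hnn]
    rcases le_or_gt z 0 with hz | hz
    · have h1 : Real.exp (s n * z) - 1 - s n * z ≤ s n * (-z) := by
        nlinarith [Real.exp_le_one_iff.mpr (by nlinarith : s n * z ≤ 0)]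
      have h2 : g n ω ≤ -z := by
        rw [hg]; simp only []
        rw [div_le_iff₀ hsn]
        nlinarith
      have := Real.exp_pos (2 * l * z)
      have habs : -z ≤ |z| := neg_le_abs z
      nlinarith [mul_pos (show (0:ℝ) < 1/l by positivity) this]
    · have hx : (0:ℝ) ≤ s n * z := by positivity
      have h1 := exp_sub_one_sub_le hx
      have h2 : g n ω ≤ z * Real.exp (s n * z) := by
        rw [hg]; simp only []
        rw [div_le_iff₀ hsn]
        nlinarith
      have h3 : Real.exp (s n * z) ≤ Real.exp (l * z) :=
        Real.exp_le_exp.mpr (by nlinarith [hsle n])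
      have h4 : z * l ≤ Real.exp (l * z) := by
        nlinarith [Real.add_one_le_exp (l * z)]
      have h5 : z * l * Real.exp (l * z) ≤ Real.exp (2 * l * z) := by
        calc z * l * Real.exp (l * z) ≤ Real.exp (l * z) * Real.exp (l * z) :=
              mul_le_mul_of_nonneg_right h4 (Real.exp_pos (l * z)).le
          _ = Real.exp (2 * l * z) := by rw [← Real.exp_add]; ring_nf
      have h6 : z * Real.exp (l * z) ≤ (1/l) * Real.exp (2 * l * z) := by
        rw [show (1/l) * Real.exp (2*l*z) = Real.exp (2*l*z) / l by ring,
          le_div_iff₀ hl]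
        nlinarith
      have h7 : z * Real.exp (s n * z) ≤ z * Real.exp (l * z) :=
        mul_le_mul_of_nonneg_left h3 hz.le
      have habs : (0:ℝ) ≤ |z| := abs_nonneg z
      linarith
  -- dominated convergence
  have hmeas : ∀ n, AEStronglyMeasurable (g n) μ := by
    intro n
    have h1 : AEStronglyMeasurable
        (fun ω => (Real.exp (s n * Z ω) - 1 - s n * Z ω) * (s n)⁻¹) μ :=
      (((Real.continuous_exp.comp_aestronglyMeasurable
        (hZ.1.const_mul (s n))).sub aestronglyMeasurable_const).sub
        (hZ.1.const_mul (s n))).mul_const _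
    exact h1.congr (ae_of_all _ fun ω => (div_eq_mul_inv _ _).symm)
  have hbint : Integrable (fun ω => |Z ω| + (1/l) * Real.exp (2 * l * Z ω)) μ :=
    hZ.abs.add ((hexps (2*l) (by positivity)).const_mul _)
  have hptlim : ∀ᵐ ω ∂μ, Tendsto (fun n => g n ω) atTop (𝓝 0) := by
    refine ae_of_all _ fun ω => ?_
    set z := Z ω with hz'
    have hd : HasDerivAt (fun x : ℝ => Real.exp (x * z)) z 0 := by
      have h1 : HasDerivAt (fun x : ℝ => x * z) z 0 := hasDerivAt_mul_const z
      have := (Real.hasDerivAt_exp (0 * z)).comp 0 h1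
      simpa [Function.comp_def] using this
    have hslope := hasDerivAt_iff_tendsto_slope.mp hd
    have hsne : Tendsto s atTop (𝓝[≠] (0:ℝ)) := by
      rw [tendsto_nhdsWithin_iff]
      exact ⟨hstend, Eventually.of_forall fun n =>
        Set.mem_compl_singleton_iff.mpr (hspos n).ne'⟩
    have htend := hslope.comp hsne
    have heq : (fun n => g n ω) =
        fun n => slope (fun x : ℝ => Real.exp (x * z)) 0 (s n) - z := by
      funext n
      have hne := (hspos n).ne'
      rw [slope_def_field]
      simp only [hg, ← hz', zero_mul, Real.exp_zero, sub_zero]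
      field_simp
    rw [heq]
    simpa using htend.sub_const z
  have := tendsto_integral_of_dominated_convergence _ hmeas hbint
    (fun n => ae_of_all _ fun ω => by
      rw [Real.norm_eq_abs]; exact hbound n ω) hptlim
  simpa using this

/-- Key entropy bound after truncation-duality and absorption. -/
lemma ent_key [IsProbabilityMeasure μ] (hL : 0 < L) (hθ : 0 < θ)
    (hZ : Integrable Z μ)
    (hmom : ∀ l : ℝ, 0 < l →
      Integrable (fun ω => Real.exp (l * Z ω)) μ ∧
      Integrable (fun ω => W ω * Real.exp (l * Z ω)) μ ∧
      entropy μ (fun ω => Real.exp (l * Z ω)) ≤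
        l ^ 2 * ∫ ω, W ω * Real.exp (l * Z ω) ∂μ)
    (htail : ∀ t : ℝ, 0 < t → μ {ω | W ω > L + θ * t} ≤ ENNReal.ofReal (Real.exp (-t)))
    {l : ℝ} (hl : 0 < l) (hl' : l ≤ 1 / (2 * Real.sqrt θ)) :
    entropy μ (fun ω => Real.exp (l * Z ω)) ≤
      2 * (L + 2 * θ) * l ^ 2 * ∫ ω, Real.exp (l * Z ω) ∂μ := by
  obtain ⟨hexpl, hWel, hentl⟩ := hmom l hl
  have hexps : ∀ l : ℝ, 0 < l → Integrable (fun ω => Real.exp (l * Z ω)) μ :=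
    fun l hl => (hmom l hl).1
  set F := ∫ ω, Real.exp (l * Z ω) ∂μ with hFdef
  have hFpos : 0 < F := integral_exp_pos' hZ l hexpl
  have hZe : Integrable (fun ω => Z ω * Real.exp (l * Z ω)) μ :=
    integrable_mul_exp hZ hexps hl
  set U : Ω → ℝ := fun ω => (W ω - L) / (2 * θ) with hUdef
  -- measurability of W and U
  have hWm : AEMeasurable W μ := by
    have h1 : AEMeasurable (fun ω => W ω * Real.exp (l * Z ω)) μ :=
      hWel.aestronglyMeasurable.aemeasurable
    have h2 : AEMeasurable (fun ω => (Real.exp (l * Z ω))⁻¹) μ :=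
      (Real.measurable_exp.comp_aemeasurable
        (hZ.aestronglyMeasurable.aemeasurable.const_mul l)).inv
    have : AEMeasurable (fun ω => W ω * Real.exp (l * Z ω) * (Real.exp (l * Z ω))⁻¹) μ :=
      h1.mul h2
    refine this.congr (ae_of_all _ fun ω => ?_)
    field_simp
  have hUm : AEMeasurable U μ := (hWm.sub aemeasurable_const).div aemeasurable_const
  -- tail bound for U
  have hUtail : ∀ s : ℝ, 0 < s → μ {ω | U ω > s} ≤ ENNReal.ofReal (Real.exp (-(2*s))) := by
    intro s hs
    have hset : {ω | U ω > s} = {ω | W ω > L + θ * (2*s)} := by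
      ext ω
      simp only [mem_setOf_eq, gt_iff_lt, hUdef]
      rw [lt_div_iff₀ (by positivity)]
      constructor <;> intro h <;> nlinarith
    rw [hset]
    exact htail (2*s) (by positivity)
  obtain ⟨heU, heU2⟩ := integral_exp_tail hUm hUtail
  -- pointwise Young inequality
  have hpt : ∀ ω, Real.exp (l * Z ω) * U ω ≤
      Real.exp (l * Z ω) * (l * Z ω - Real.log F) - Real.exp (l * Z ω) +
        F * Real.exp (U ω) := by
    intro ω
    have := young_ineq' (u := Real.exp (l * Z ω)) (v := U ω) (Real.exp_pos _).le hFpos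
    rwa [Real.log_exp] at this
  -- integrability of both sides
  have hfeq : (fun ω => Real.exp (l * Z ω) * U ω) =
      fun ω => (W ω * Real.exp (l * Z ω) - L * Real.exp (l * Z ω)) * (1 / (2*θ)) := by
    funext ω
    simp only [hUdef]
    field_simp
  have hf : Integrable (fun ω => Real.exp (l * Z ω) * U ω) μ := by
    rw [hfeq]
    exact (hWel.sub (hexpl.const_mul L)).mul_const _
  have hgeq : (fun ω => Real.exp (l * Z ω) * (l * Z ω - Real.log F) - Real.exp (l * Z ω) +
      F * Real.exp (U ω)) =
      fun ω => l * (Z ω * Real.exp (l * Z ω)) - Real.log F * Real.exp (l * Z ω) -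
        Real.exp (l * Z ω) + F * Real.exp (U ω) := by
    funext ω; ring
  have hg : Integrable (fun ω => Real.exp (l * Z ω) * (l * Z ω - Real.log F) -
      Real.exp (l * Z ω) + F * Real.exp (U ω)) μ := by
    rw [hgeq]
    exact (((hZe.const_mul l).sub (hexpl.const_mul _)).sub hexpl).add (heU.const_mul F)
  have hint := integral_mono hf hg hpt
  -- compute LHS integral
  have hLHS : ∫ ω, Real.exp (l * Z ω) * U ω ∂μ =
      ((∫ ω, W ω * Real.exp (l * Z ω) ∂μ) - L * F) * (1 / (2*θ)) := by
    rw [hfeq, integral_mul_const, integral_sub hWel (hexpl.const_mul L),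
      integral_const_mul]
  -- compute RHS integral
  have hI1 : Integrable (fun ω => l * (Z ω * Real.exp (l * Z ω))) μ := hZe.const_mul l
  have hI2 : Integrable (fun ω => Real.log F * Real.exp (l * Z ω)) μ := hexpl.const_mul _
  have hI3 : Integrable (fun ω => l * (Z ω * Real.exp (l * Z ω)) -
      Real.log F * Real.exp (l * Z ω)) μ := hI1.sub hI2
  have hI4 : Integrable (fun ω => l * (Z ω * Real.exp (l * Z ω)) -
      Real.log F * Real.exp (l * Z ω) - Real.exp (l * Z ω)) μ := hI3.sub hexpl
  have hI5 : Integrable (fun ω => F * Real.exp (U ω)) μ := heU.const_mul F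
  have hRHS : ∫ ω, (Real.exp (l * Z ω) * (l * Z ω - Real.log F) - Real.exp (l * Z ω) +
      F * Real.exp (U ω)) ∂μ =
      l * (∫ ω, Z ω * Real.exp (l * Z ω) ∂μ) - Real.log F * F - F +
        F * ∫ ω, Real.exp (U ω) ∂μ := by
    rw [hgeq, integral_add hI4 hI5, integral_sub hI3 hexpl, integral_sub hI1 hI2,
      integral_const_mul, integral_const_mul, integral_const_mul]
  -- entropy formula
  have hEnt : entropy μ (fun ω => Real.exp (l * Z ω)) =
      l * (∫ ω, Z ω * Real.exp (l * Z ω) ∂μ) - F * Real.log F := by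
    unfold entropy
    have : (fun ω => Real.exp (l * Z ω) * Real.log (Real.exp (l * Z ω))) =
        fun ω => l * (Z ω * Real.exp (l * Z ω)) := by
      funext ω; rw [Real.log_exp]; ring
    rw [this, integral_const_mul]
  set Ent := entropy μ (fun ω => Real.exp (l * Z ω)) with hEntdef
  -- duality conclusion: E[W e^{lZ}] ≤ L F + 2θ (Ent + F)
  have hdual : ∫ ω, W ω * Real.exp (l * Z ω) ∂μ ≤ L * F + 2 * θ * (Ent + F) := by
    rw [hLHS, hRHS] at hint
    have h2F : F * ∫ ω, Real.exp (U ω) ∂μ ≤ F * 2 :=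
      mul_le_mul_of_nonneg_left heU2 hFpos.le
    rw [mul_one_div, div_le_iff₀ (by positivity)] at hint
    have h3 := mul_le_mul_of_nonneg_right h2F (by positivity : (0:ℝ) ≤ 2*θ)
    nlinarith [hEnt]
  -- absorption
  have hsq : 2 * θ * l ^ 2 ≤ 1 / 2 := by
    have hs : (0:ℝ) < Real.sqrt θ := Real.sqrt_pos.mpr hθ
    have h1 : l ^ 2 ≤ (1 / (2 * Real.sqrt θ)) ^ 2 := pow_le_pow_left₀ hl.le hl' 2
    have h2 : (1 / (2 * Real.sqrt θ)) ^ 2 = 1 / (4 * θ) := by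
      rw [div_pow, mul_pow, Real.sq_sqrt hθ.le]
      norm_num
    rw [h2] at h1
    have h3 := mul_le_mul_of_nonneg_left h1 (by positivity : (0:ℝ) ≤ 2*θ)
    have h4 : 2 * θ * (1 / (4 * θ)) = 1 / 2 := by field_simp; ring
    linarith
  have hfinal : Ent ≤ l ^ 2 * (L * F + 2 * θ * (Ent + F)) :=
    hentl.trans (mul_le_mul_of_nonneg_left hdual (sq_nonneg l))
  rcases le_or_gt Ent 0 with hE | hE
  · have : (0:ℝ) ≤ 2 * (L + 2 * θ) * l ^ 2 * F := by positivity
    linarith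
  · nlinarith [mul_le_mul_of_nonneg_right hsq hE.le]

/-- The doubling step for the log-mgf. -/
lemma log_mgf_step [IsProbabilityMeasure μ] (hZ : Integrable Z μ)
    (hexps : ∀ l : ℝ, 0 < l → Integrable (fun ω => Real.exp (l * Z ω)) μ)
    {K x : ℝ} (hK : 0 ≤ K) (hx : 0 < x)
    (hent : entropy μ (fun ω => Real.exp (x * Z ω)) ≤
      K * x ^ 2 * ∫ ω, Real.exp (x * Z ω) ∂μ) :
    Real.log (∫ ω, Real.exp (x * Z ω) ∂μ) ≤
      2 * Real.log (∫ ω, Real.exp ((x/2) * Z ω) ∂μ) + K * x ^ 2 := by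
  have hexpl := hexps x hx
  have hexpl2 := hexps (x/2) (by positivity)
  set F := ∫ ω, Real.exp (x * Z ω) ∂μ with hF
  set G := ∫ ω, Real.exp ((x/2) * Z ω) ∂μ with hG
  have hFpos : 0 < F := integral_exp_pos' hZ x hexpl
  have hGpos : 0 < G := integral_exp_pos' hZ (x/2) hexpl2
  have hZe : Integrable (fun ω => Z ω * Real.exp (x * Z ω)) μ :=
    integrable_mul_exp hZ hexps hx
  set IZ := ∫ ω, Z ω * Real.exp (x * Z ω) ∂μ with hIZ
  set a := x * IZ / (2 * F) with ha
  have hpt : ∀ ω, Real.exp (-a) * ((a + 1) * Real.exp (x * Z ω) -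
      (x/2) * (Z ω * Real.exp (x * Z ω))) ≤ Real.exp ((x/2) * Z ω) := by
    intro ω
    have h0 := tangent_exp (-a) (-(x/2) * Z ω)
    have h1 := mul_le_mul_of_nonneg_left h0 (Real.exp_pos (x * Z ω)).le
    have h2 : Real.exp (x * Z ω) * Real.exp (-(x/2) * Z ω) =
        Real.exp ((x/2) * Z ω) := by
      rw [← Real.exp_add]; congr 1; ring
    calc Real.exp (-a) * ((a + 1) * Real.exp (x * Z ω) -
          (x/2) * (Z ω * Real.exp (x * Z ω)))
        = Real.exp (x * Z ω) * (Real.exp (-a) * (-(x/2) * Z ω - (-a) + 1)) := by ring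
      _ ≤ Real.exp (x * Z ω) * Real.exp (-(x/2) * Z ω) := h1
      _ = Real.exp ((x/2) * Z ω) := h2
  have hfint1 : Integrable (fun ω => (a + 1) * Real.exp (x * Z ω) -
      (x/2) * (Z ω * Real.exp (x * Z ω))) μ :=
    (hexpl.const_mul _).sub (hZe.const_mul _)
  have hfint : Integrable (fun ω => Real.exp (-a) * ((a + 1) * Real.exp (x * Z ω) -
      (x/2) * (Z ω * Real.exp (x * Z ω)))) μ := hfint1.const_mul _
  have hint := integral_mono hfint hexpl2 hpt
  have hintval : ∫ ω, Real.exp (-a) * ((a + 1) * Real.exp (x * Z ω) -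
      (x/2) * (Z ω * Real.exp (x * Z ω))) ∂μ = Real.exp (-a) * F := by
    have e1 : Integrable (fun ω => (a+1) * Real.exp (x * Z ω)) μ := hexpl.const_mul _
    have e2 : Integrable (fun ω => (x/2) * (Z ω * Real.exp (x * Z ω))) μ := hZe.const_mul _
    rw [integral_const_mul, integral_sub e1 e2, integral_const_mul, integral_const_mul]
    have : (x/2) * IZ = a * F := by
      rw [ha]; field_simp
    rw [← hIZ, ← hF, this]
    ring
  rw [hintval] at hint
  -- hint : exp(-a) * F ≤ G
  have hlog : -a + Real.log F ≤ Real.log G := by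
    have := Real.log_le_log (by positivity) hint
    rwa [Real.log_mul (Real.exp_ne_zero _) hFpos.ne', Real.log_exp] at this
  have hEnt := entropy_exp_eq hZ (μ := μ) (l := x)
  rw [← hF, ← hIZ] at hEnt
  rw [hEnt] at hent
  -- hent : x * IZ - F * log F ≤ K x² F
  have ha2 : 2 * a * F = x * IZ := by
    rw [ha]; field_simp
  have h2a : 2 * a ≤ Real.log F + K * x ^ 2 := by
    have hmul : 2 * a * F ≤ (Real.log F + K * x ^ 2) * F := by
      rw [ha2]; nlinarith
    exact le_of_mul_le_mul_right hmul hFpos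
  linarith

/-- log-mgf bound via Herbst iteration. -/
lemma log_mgf_le [IsProbabilityMeasure μ] (hZ : Integrable Z μ)
    (hexps : ∀ l : ℝ, 0 < l → Integrable (fun ω => Real.exp (l * Z ω)) μ)
    {K b : ℝ} (hK : 0 ≤ K) (hb : 0 < b)
    (hent : ∀ l : ℝ, 0 < l → l ≤ b → entropy μ (fun ω => Real.exp (l * Z ω)) ≤
      K * l ^ 2 * ∫ ω, Real.exp (l * Z ω) ∂μ)
    {l : ℝ} (hl : 0 < l) (hlb : l ≤ b) :
    Real.log (∫ ω, Real.exp (l * Z ω) ∂μ) ≤ l * (∫ ω, Z ω ∂μ) + 2 * K * l ^ 2 := by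
  set f : ℝ → ℝ := fun x => Real.log (∫ ω, Real.exp (x * Z ω) ∂μ) with hf
  have hstep : ∀ x : ℝ, 0 < x → x ≤ b → f x ≤ 2 * f (x / 2) + K * x ^ 2 :=
    fun x hx hxb => log_mgf_step hZ hexps hK hx (hent x hx hxb)
  have hiter := iter_lemma hK hl hlb hstep
  set m := ∫ ω, Z ω ∂μ with hm
  -- lower and upper bounds on bₙ = 2^n f(l/2^n)
  have hlow : ∀ n : ℕ, l * m ≤ 2 ^ n * f (l / 2 ^ n) := by
    intro n
    have hs : (0:ℝ) < l / 2 ^ n := by positivity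
    have h1 : (l / 2 ^ n) * m ≤ f (l / 2 ^ n) := by
      rw [hf]
      simp only []
      rw [Real.le_log_iff_exp_le (integral_exp_pos' hZ _ (hexps _ hs))]
      exact exp_le_integral_exp hZ _ (hexps _ hs)
    have := mul_le_mul_of_nonneg_left h1 (by positivity : (0:ℝ) ≤ 2 ^ n)
    calc l * m = 2 ^ n * ((l / 2 ^ n) * m) := by field_simp
      _ ≤ 2 ^ n * f (l / 2 ^ n) := this
  have hup : ∀ n : ℕ, 2 ^ n * f (l / 2 ^ n) ≤ l * m +
      l * ∫ ω, (Real.exp ((l / 2 ^ n) * Z ω) - 1 - (l / 2 ^ n) * Z ω) / (l / 2 ^ n) ∂μ := by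
    intro n
    set s := l / 2 ^ n with hsdef
    have hs : (0:ℝ) < s := by positivity
    have hFs := integral_exp_pos' hZ s (hexps s hs)
    have h1 : f s ≤ (∫ ω, Real.exp (s * Z ω) ∂μ) - 1 :=
      Real.log_le_sub_one_of_pos hFs
    have hgint : Integrable
        (fun ω => (Real.exp (s * Z ω) - 1 - s * Z ω) / s) μ := by
      have : Integrable (fun ω => (Real.exp (s * Z ω) - 1 - s * Z ω)) μ :=
        ((hexps s hs).sub (integrable_const 1)).sub (hZ.const_mul s)
      simpa [div_eq_mul_inv] using this.mul_const (s⁻¹)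
    have e1 : Integrable (fun ω => Real.exp (s * Z ω) - 1) μ :=
      (hexps s hs).sub (integrable_const 1)
    have e2 : Integrable (fun ω => s * Z ω) μ := hZ.const_mul s
    have e3 : s * (∫ ω, (Real.exp (s * Z ω) - 1 - s * Z ω) / s ∂μ) =
        ∫ ω, (Real.exp (s * Z ω) - 1 - s * Z ω) ∂μ := by
      rw [← integral_const_mul]
      congr 1; funext ω; field_simp
    have e4 : ∫ ω, (Real.exp (s * Z ω) - 1 - s * Z ω) ∂μ =
        (∫ ω, Real.exp (s * Z ω) ∂μ) - 1 - s * m := by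
      rw [integral_sub e1 e2, integral_sub (hexps s hs) (integrable_const 1),
        integral_const, integral_const_mul]
      simp [hm]
    have h2 : (∫ ω, Real.exp (s * Z ω) ∂μ) - 1 =
        s * m + s * ∫ ω, (Real.exp (s * Z ω) - 1 - s * Z ω) / s ∂μ := by
      rw [e3, e4]; ring
    have h3 := mul_le_mul_of_nonneg_left (h1.trans_eq h2)
      (by positivity : (0:ℝ) ≤ (2:ℝ) ^ n)
    have h4 : (2:ℝ) ^ n * s = l := by rw [hsdef]; field_simp
    calc (2:ℝ) ^ n * f (l / 2 ^ n) = 2 ^ n * f s := rfl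
      _ ≤ 2 ^ n * (s * m + s * ∫ ω, (Real.exp (s * Z ω) - 1 - s * Z ω) / s ∂μ) := h3
      _ = l * m + l * ∫ ω, (Real.exp (s * Z ω) - 1 - s * Z ω) / s ∂μ := by
          rw [mul_add, ← mul_assoc, ← mul_assoc, h4]
  -- squeeze
  have hRlim := tendsto_remainder hZ hexps hl
  have huplim : Tendsto (fun n : ℕ => l * m +
      l * ∫ ω, (Real.exp ((l / 2 ^ n) * Z ω) - 1 - (l / 2 ^ n) * Z ω) / (l / 2 ^ n) ∂μ)
      atTop (𝓝 (l * m)) := by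
    have := tendsto_const_nhds (x := l * m) (f := atTop (α := ℕ)) |>.add
      (hRlim.const_mul l)
    simpa using this
  have hblim : Tendsto (fun n : ℕ => 2 ^ n * f (l / 2 ^ n)) atTop (𝓝 (l * m)) :=
    tendsto_of_tendsto_of_tendsto_of_le_of_le tendsto_const_nhds huplim hlow hup
  have hgeo : Tendsto (fun n : ℕ => 2 * K * l ^ 2 * (1 - (1/2:ℝ) ^ n)) atTop
      (𝓝 (2 * K * l ^ 2)) := by
    have := (tendsto_const_nhds (x := (1:ℝ)) (f := atTop (α := ℕ))).sub
      (tendsto_pow_atTop_nhds_zero_of_lt_one (r := (1/2:ℝ)) (by norm_num) (by norm_num))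
    have h2 := this.const_mul (2 * K * l ^ 2)
    simpa using h2
  have hlim : Tendsto (fun n : ℕ => 2 ^ n * f (l / 2 ^ n) +
      2 * K * l ^ 2 * (1 - (1/2:ℝ) ^ n)) atTop (𝓝 (l * m + 2 * K * l ^ 2)) :=
    hblim.add hgeo
  exact ge_of_tendsto' hlim hiter

end AuxProb

/-- Lemma 1.4 (grad-truncation lemma): if `Ent(e^{λZ}) ≤ λ² E[W e^{λZ}]` for all `λ > 0`
and `P(W > L + θ t) ≤ e^{-t}`, then
`P(Z - E Z > t) ≤ exp(-c min(t²/(L+θ), t/√θ))` for an absolute constant `c > 0`. -/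

theorem grad_trunc_lemma :
    ∃ c : ℝ, 0 < c ∧
      ∀ (Ω : Type) (_ : MeasurableSpace Ω) (μ : Measure Ω),
        IsProbabilityMeasure μ →
      ∀ (Z W : Ω → ℝ) (L θ : ℝ), 0 < L → 0 < θ →
        Integrable Z μ →
        (∀ l : ℝ, 0 < l →
          Integrable (fun ω => Real.exp (l * Z ω)) μ ∧
          Integrable (fun ω => W ω * Real.exp (l * Z ω)) μ ∧
          entropy μ (fun ω => Real.exp (l * Z ω)) ≤
            l ^ 2 * ∫ ω, W ω * Real.exp (l * Z ω) ∂μ) →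
        (∀ t : ℝ, 0 < t → μ {ω | W ω > L + θ * t} ≤ ENNReal.ofReal (Real.exp (-t))) →
        ∀ t : ℝ, 0 < t →
          μ {ω | Z ω - ∫ ω', Z ω' ∂μ > t} ≤
            ENNReal.ofReal
              (Real.exp (-c * min (t ^ 2 / (L + θ)) (t / Real.sqrt θ))) := by
  refine ⟨1/32, by norm_num, ?_⟩
  intro Ω mΩ μ hprob Z W L θ hL hθ hZ hmom htail t ht
  have hexps : ∀ l : ℝ, 0 < l → Integrable (fun ω => Real.exp (l * Z ω)) μ :=
    fun l hl => (hmom l hl).1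
  set m := ∫ ω', Z ω' ∂μ with hm
  set K : ℝ := 2 * (L + 2 * θ) with hK
  have hKpos : 0 < K := by rw [hK]; positivity
  have hsθ : 0 < Real.sqrt θ := Real.sqrt_pos.mpr hθ
  set b : ℝ := 1 / (2 * Real.sqrt θ) with hb
  have hbpos : 0 < b := by positivity
  set l : ℝ := min (t / (4 * K)) b with hldef
  have hlpos : 0 < l := lt_min (by positivity) hbpos
  have hlb : l ≤ b := min_le_right _ _
  -- log-mgf bound
  have hent : ∀ x : ℝ, 0 < x → x ≤ b → entropy μ (fun ω => Real.exp (x * Z ω)) ≤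
      K * x ^ 2 * ∫ ω, Real.exp (x * Z ω) ∂μ := by
    intro x hx hxb
    have := ent_key hL hθ hZ hmom htail hx (hxb.trans_eq hb)
    calc entropy μ (fun ω => Real.exp (x * Z ω)) ≤
        2 * (L + 2 * θ) * x ^ 2 * ∫ ω, Real.exp (x * Z ω) ∂μ := this
      _ = K * x ^ 2 * ∫ ω, Real.exp (x * Z ω) ∂μ := by rw [hK]
  have hlog := log_mgf_le hZ hexps hKpos.le hbpos hent hlpos hlb
  -- Chernoff
  have hFpos : 0 < ∫ ω, Real.exp (l * Z ω) ∂μ :=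
    integral_exp_pos' hZ l (hexps l hlpos)
  have hmgf : mgf Z μ l ≤ Real.exp (l * m + 2 * K * l ^ 2) := by
    have : mgf Z μ l = ∫ ω, Real.exp (l * Z ω) ∂μ := rfl
    rw [this, ← Real.exp_log hFpos]
    exact Real.exp_le_exp.mpr hlog
  have hcher := measure_ge_le_exp_mul_mgf (X := Z) (μ := μ) (ε := m + t) hlpos.le
    (hexps l hlpos)
  have hsub : {ω | Z ω - m > t} ⊆ {ω | m + t ≤ Z ω} := by
    intro ω hω
    simp only [mem_setOf_eq] at hω ⊢
    linarith
  have hbound : (μ {ω | Z ω - m > t}).toReal ≤ Real.exp (2 * K * l ^ 2 - l * t) := by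
    calc (μ {ω | Z ω - m > t}).toReal
        ≤ (μ {ω | m + t ≤ Z ω}).toReal := by
          apply ENNReal.toReal_mono (measure_ne_top μ _) (measure_mono hsub)
      _ ≤ Real.exp (-l * (m + t)) * mgf Z μ l := hcher
      _ ≤ Real.exp (-l * (m + t)) * Real.exp (l * m + 2 * K * l ^ 2) :=
          mul_le_mul_of_nonneg_left hmgf (Real.exp_pos _).le
      _ = Real.exp (2 * K * l ^ 2 - l * t) := by rw [← Real.exp_add]; congr 1; ring
  -- optimization
  have hopt : 2 * K * l ^ 2 - l * t ≤
      -(1/32) * min (t ^ 2 / (L + θ)) (t / Real.sqrt θ) := by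
    rcases le_or_gt (t / (4 * K)) b with hcase | hcase
    · have hleq : l = t / (4 * K) := min_eq_left hcase
      have hval : 2 * K * l ^ 2 - l * t = -(t ^ 2 / (8 * K)) := by
        rw [hleq]; field_simp; ring
      rw [hval]
      have h1 : min (t ^ 2 / (L + θ)) (t / Real.sqrt θ) ≤ t ^ 2 / (L + θ) :=
        min_le_left _ _
      have h2 : (1/32) * (t ^ 2 / (L + θ)) ≤ t ^ 2 / (8 * K) := by
        rw [hK, show (1:ℝ)/32 * (t^2/(L+θ)) = t^2/(32*(L+θ)) from by field_simp,
          div_le_div_iff₀ (by positivity) (by positivity)]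
        nlinarith [sq_nonneg t]
      linarith
    · have hleq : l = b := min_eq_right hcase.le
      have h4K : 4 * K * b < t := by
        rw [lt_div_iff₀ (by positivity)] at hcase
        linarith [hcase]
      have hval : 2 * K * l ^ 2 - l * t < -(b * t / 2) := by
        rw [hleq]
        nlinarith [mul_pos hbpos ht, mul_pos hKpos (mul_pos hbpos hbpos)]
      have hbt : b * t = t / (2 * Real.sqrt θ) := by
        rw [hb]; field_simp
      have h1 : min (t ^ 2 / (L + θ)) (t / Real.sqrt θ) ≤ t / Real.sqrt θ :=
        min_le_right _ _
      have h2 : (1/32) * (t / Real.sqrt θ) ≤ b * t / 2 := by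
        rw [hbt, show t / (2*Real.sqrt θ) / 2 = t / (4*Real.sqrt θ) from by ring,
          show (1:ℝ)/32 * (t/Real.sqrt θ) = t/(32*Real.sqrt θ) from by ring,
          div_le_div_iff₀ (by positivity) (by positivity)]
        nlinarith [mul_pos ht hsθ]
      linarith
  -- conclude
  rw [hm] at hbound ⊢
  refine (ENNReal.le_ofReal_iff_toReal_le (measure_ne_top μ _) (Real.exp_pos _).le).mpr ?_
  refine hbound.trans (Real.exp_le_exp.mpr ?_)
  calc 2 * K * l ^ 2 - l * t
      ≤ -(1/32) * min (t ^ 2 / (L + θ)) (t / Real.sqrt θ) := hopt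
    _ = -(1/32) * min (t ^ 2 / (L + θ)) (t / Real.sqrt θ) := rfl
end

section
/- Let Y ∈ ℝⁿ have i.i.d. components with symmetric distribution and let 𝓑 be a finite set of n×n positive-semidefinite symmetric matrices. Then E[sup_{B∈𝓑} Yᵀ Diag(B) Y] ≤ E[sup_{B∈𝓑} Yᵀ B Y], where Diag(B) is the diagonal matrix with the same diagonal entries as B. -/
open MeasureTheory ProbabilityTheory Real Matrix

/-- Joint law of independent components is the product of marginals. -/
lemma joint_eq_pi
    {Ω : Type*} [MeasurableSpace Ω] (μ : Measure Ω) [IsProbabilityMeasure μ]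
    {n : ℕ} (X : Ω → Fin n → ℝ)
    (hmeas : ∀ i, Measurable fun ω => X ω i)
    (hindep : iIndepFun (fun i ω => X ω i) μ) :
    Measure.map (fun ω => X ω) μ =
      Measure.pi (fun i => Measure.map (fun ω => X ω i) μ) := by
  have hXm : Measurable fun ω => X ω := measurable_pi_lambda _ hmeas
  have : ∀ i, IsProbabilityMeasure (Measure.map (fun ω => X ω i) μ) :=
    fun i => Measure.isProbabilityMeasure_map (hmeas i).aemeasurable
  refine (Measure.pi_eq fun s hs => ?_).symm
  rw [Measure.map_apply hXm (MeasurableSet.univ_pi hs)]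
  have hpre : (fun ω => X ω) ⁻¹' (Set.pi Set.univ s)
      = ⋂ i ∈ Finset.univ, (fun ω => X ω i) ⁻¹' (s i) := by
    ext ω; simp [Set.mem_pi]
  rw [hpre, hindep.measure_inter_preimage_eq_mul Finset.univ (fun i _ => hs i)]
  exact Finset.prod_congr rfl fun i _ =>
    (Measure.map_apply (hmeas i) (hs i)).symm

/-- Sum of products of two signs over all sign patterns. -/
lemma signSum_aux {n : ℕ} (i j : Fin n) (hij : i ≠ j) :
    ∑ b : Fin n → Bool,
      ((if b i then (1:ℝ) else -1) * (if b j then (1:ℝ) else -1)) = 0 := by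
  classical
  refine Finset.sum_ninvolution (fun b => Function.update b i (!b i)) ?_ ?_
    (fun _ => Finset.mem_univ _) ?_
  · intro b
    simp [Function.update_apply, hij.symm]
    cases b i <;> cases b j <;> norm_num
  · intro b hb
    intro h
    have := congrFun h i
    simp at this
  · intro b
    ext k
    by_cases hk : k = i <;> simp [Function.update_apply, hk]

/-- Lemma: for `Y` with i.i.d. symmetric components and a finite set `𝓑` of
positive-semidefinite symmetric matrices,
`E sup_{B∈𝓑} Yᵀ Diag(B) Y ≤ E sup_{B∈𝓑} Yᵀ B Y`. -/
theorem diag_quad_comp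
    {Ω : Type*} [MeasurableSpace Ω] (μ : Measure Ω) [IsProbabilityMeasure μ]
    {n : ℕ} (Y : Ω → Fin n → ℝ)
    (hmeas : ∀ i, Measurable fun ω => Y ω i)
    (hindep : iIndepFun (fun i ω => Y ω i) μ)
    (hid : ∀ i j, IdentDistrib (fun ω => Y ω i) (fun ω => Y ω j) μ μ)
    (hsymm : ∀ i, IdentDistrib (fun ω => Y ω i) (fun ω => -(Y ω i)) μ μ)
    (𝓑 : Finset (Matrix (Fin n) (Fin n) ℝ)) (h𝓑 : 𝓑.Nonempty)
    (hpsd : ∀ B ∈ 𝓑, Matrix.PosSemidef B)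
    (hint1 : Integrable (fun ω =>
      𝓑.sup' h𝓑 fun B => Y ω ⬝ᵥ (Matrix.diagonal fun i => B i i).mulVec (Y ω)) μ)
    (hint2 : Integrable (fun ω => 𝓑.sup' h𝓑 fun B => Y ω ⬝ᵥ B.mulVec (Y ω)) μ) :
    ∫ ω, 𝓑.sup' h𝓑 (fun B => Y ω ⬝ᵥ (Matrix.diagonal fun i => B i i).mulVec (Y ω)) ∂μ ≤
      ∫ ω, 𝓑.sup' h𝓑 (fun B => Y ω ⬝ᵥ B.mulVec (Y ω)) ∂μ := by
  classical
  -- signs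
  set ε : (Fin n → Bool) → Fin n → ℝ := fun b i => if b i then 1 else -1 with hε
  -- sign-flipped vectors
  set Z : (Fin n → Bool) → Ω → Fin n → ℝ := fun b ω i => ε b i * Y ω i with hZ
  -- the sup function
  set g : (Fin n → ℝ) → ℝ := fun x => 𝓑.sup' h𝓑 (fun B => x ⬝ᵥ B.mulVec x) with hg
  have hgmeas : Measurable g := by
    have : g = 𝓑.sup' h𝓑 (fun B x => x ⬝ᵥ B.mulVec x) := by
      funext x; rw [hg, Finset.sup'_apply]
    rw [this]
    exact Finset.measurable_sup' h𝓑 fun B _ => Continuous.measurable (by continuity)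
  -- identdistrib of vectors
  have hident : ∀ b, IdentDistrib (fun ω => Y ω) (fun ω => Z b ω) μ μ := by
    intro b
    have hZmeas : ∀ i, Measurable fun ω => Z b ω i :=
      fun i => (measurable_const.mul (hmeas i))
    have hZindep : iIndepFun (fun i ω => Z b ω i) μ := by
      exact hindep.comp (fun i x => ε b i * x) (fun i => measurable_const_mul _)
    have hmarg : ∀ i, Measure.map (fun ω => Z b ω i) μ
        = Measure.map (fun ω => Y ω i) μ := by
      intro i
      by_cases hb : b i
      · simp [hZ, hε, hb]
      · have heq : (fun ω => Z b ω i) = (fun ω => -(Y ω i)) := by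
          funext ω; simp [hZ, hε, hb]
        rw [heq]; exact (hsymm i).map_eq.symm
    refine ⟨(measurable_pi_lambda _ hmeas).aemeasurable,
      (measurable_pi_lambda _ hZmeas).aemeasurable, ?_⟩
    rw [joint_eq_pi μ Y hmeas hindep, joint_eq_pi μ (fun ω => Z b ω) hZmeas hZindep]
    congr 1
    ext i : 1
    exact (hmarg i).symm
  -- identdistrib of sup functionals
  have hidg : ∀ b, IdentDistrib (fun ω => g (Y ω)) (fun ω => g (Z b ω)) μ μ :=
    fun b => (hident b).comp hgmeas
  -- quadratic form identity
  have hquad : ∀ b (B : Matrix (Fin n) (Fin n) ℝ) (ω : Ω),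
      Z b ω ⬝ᵥ B.mulVec (Z b ω)
        = Y ω ⬝ᵥ (Matrix.of fun i j => ε b i * B i j * ε b j).mulVec (Y ω) := by
    intro b B ω
    simp only [dotProduct, mulVec, Matrix.of_apply, Finset.mul_sum, hZ]
    rw [Finset.sum_comm]
    nth_rewrite 2 [Finset.sum_comm]
    refine Finset.sum_congr rfl fun j _ => Finset.sum_congr rfl fun i _ => by ring
  -- averaging identity (pointwise in ω and B)
  have havg : ∀ (B : Matrix (Fin n) (Fin n) ℝ) (x : Fin n → ℝ),
      ∑ b : Fin n → Bool, x ⬝ᵥ (Matrix.of fun i j => ε b i * B i j * ε b j).mulVec x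
        = (2:ℝ)^n * (x ⬝ᵥ (Matrix.diagonal fun i => B i i).mulVec x) := by
    intro B x
    have diagexp : x ⬝ᵥ (Matrix.diagonal fun i => B i i).mulVec x
        = ∑ i, x i * (B i i * x i) := by
      simp [dotProduct, Matrix.mulVec_diagonal]
    have : ∀ i : Fin n, ∑ b : Fin n → Bool, ∑ j, x i * (ε b i * B i j * ε b j * x j)
        = (2:ℝ)^n * (x i * (B i i * x i)) := by
      intro i
      rw [Finset.sum_comm]
      have key : ∀ j : Fin n, ∑ b : Fin n → Bool, x i * (ε b i * B i j * ε b j * x j)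
          = if i = j then (2:ℝ)^n * (x i * (B i i * x i)) else 0 := by
        intro j
        by_cases hij : i = j
        · subst hij
          simp only [if_pos rfl]
          have : ∀ b : Fin n → Bool, x i * (ε b i * B i i * ε b i * x i)
              = x i * (B i i * x i) := by
            intro b
            have h1 : ε b i * ε b i = 1 := by by_cases h : b i <;> simp [hε, h]
            linear_combination (x i * B i i * x i) * h1
          rw [Finset.sum_congr rfl fun b _ => this b, Finset.sum_const]
          simp [Fintype.card_fun, mul_comm]
        · simp only [if_neg hij]
          have := signSum_aux i j hij
          calc ∑ b : Fin n → Bool, x i * (ε b i * B i j * ε b j * x j)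
              = (x i * B i j * x j) *
                ∑ b : Fin n → Bool, (ε b i * ε b j) := by
                rw [Finset.mul_sum]; exact Finset.sum_congr rfl fun b _ => by ring
            _ = 0 := by rw [this]; ring
      rw [Finset.sum_congr rfl fun j _ => key j]
      simp
    calc ∑ b : Fin n → Bool, x ⬝ᵥ (Matrix.of fun i j => ε b i * B i j * ε b j).mulVec x
        = ∑ b : Fin n → Bool, ∑ i, ∑ j, x i * (ε b i * B i j * ε b j * x j) := by
          simp only [dotProduct, mulVec, Matrix.of_apply, Finset.mul_sum]
      _ = ∑ i, ∑ b : Fin n → Bool, ∑ j, x i * (ε b i * B i j * ε b j * x j) :=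
          Finset.sum_comm
      _ = ∑ i, (2:ℝ)^n * (x i * (B i i * x i)) :=
          Finset.sum_congr rfl fun i _ => this i
      _ = (2:ℝ)^n * ∑ i, x i * (B i i * x i) := (Finset.mul_sum _ _ _).symm
      _ = (2:ℝ)^n * (x ⬝ᵥ (Matrix.diagonal fun i => B i i).mulVec x) := by
          rw [diagexp]
  -- pointwise bound
  have hpw : ∀ ω, 𝓑.sup' h𝓑 (fun B => Y ω ⬝ᵥ (Matrix.diagonal fun i => B i i).mulVec (Y ω))
      ≤ ((2:ℝ)^n)⁻¹ * ∑ b : Fin n → Bool, g (Z b ω) := by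
    intro ω
    rw [Finset.sup'_le_iff]
    intro B hB
    have h1 : Y ω ⬝ᵥ (Matrix.diagonal fun i => B i i).mulVec (Y ω)
        = ((2:ℝ)^n)⁻¹ * ∑ b : Fin n → Bool, Z b ω ⬝ᵥ B.mulVec (Z b ω) := by
      rw [Finset.sum_congr rfl fun b _ => hquad b B ω, havg B (Y ω)]
      field_simp
    rw [h1]
    have h2 : ∑ b : Fin n → Bool, Z b ω ⬝ᵥ B.mulVec (Z b ω)
        ≤ ∑ b : Fin n → Bool, g (Z b ω) :=
      Finset.sum_le_sum fun b _ =>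
        Finset.le_sup' (fun B' : Matrix (Fin n) (Fin n) ℝ => Z b ω ⬝ᵥ B'.mulVec (Z b ω)) hB
    have : (0:ℝ) ≤ ((2:ℝ)^n)⁻¹ := by positivity
    exact mul_le_mul_of_nonneg_left h2 this
  -- integrability of each sup of flipped vector
  have hintb : ∀ b, Integrable (fun ω => g (Z b ω)) μ := by
    intro b
    exact ((hidg b).integrable_iff).mp hint2
  have hinteq : ∀ b, ∫ ω, g (Z b ω) ∂μ = ∫ ω, g (Y ω) ∂μ :=
    fun b => ((hidg b).integral_eq).symm
  calc ∫ ω, 𝓑.sup' h𝓑 (fun B => Y ω ⬝ᵥ (Matrix.diagonal fun i => B i i).mulVec (Y ω)) ∂μ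
      ≤ ∫ ω, ((2:ℝ)^n)⁻¹ * ∑ b : Fin n → Bool, g (Z b ω) ∂μ := by
        refine integral_mono hint1 ?_ hpw
        exact (integrable_finset_sum _ fun b _ => hintb b).const_mul _
    _ = ((2:ℝ)^n)⁻¹ * ∑ b : Fin n → Bool, ∫ ω, g (Z b ω) ∂μ := by
        rw [integral_const_mul, integral_finset_sum _ fun b _ => hintb b]
    _ = ((2:ℝ)^n)⁻¹ * ∑ _b : Fin n → Bool, ∫ ω, g (Y ω) ∂μ := by
        rw [Finset.sum_congr rfl fun b _ => hinteq b]
    _ = ∫ ω, g (Y ω) ∂μ := by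
        rw [Finset.sum_const, Finset.card_univ]
        simp [Fintype.card_fun]
    _ = ∫ ω, 𝓑.sup' h𝓑 (fun B => Y ω ⬝ᵥ B.mulVec (Y ω)) ∂μ := rfl
end

section
/- Let ε = (ε₁,…,εₙ) be a vector of independent Rademacher signs and let 𝓑 be a finite set of n×n real matrices. Then (E sup_{B∈𝓑} ‖Bε‖)² ≤ E sup_{B∈𝓑} ‖Bε‖² ≤ 9·(E sup_{B∈𝓑} ‖Bε‖)². -/
set_option maxHeartbeats 1000000

open MeasureTheory ProbabilityTheory Real Matrix

/-- Euclidean norm of a vector in `Fin n → ℝ`. -/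
noncomputable def euclNorm {n : ℕ} (v : Fin n → ℝ) : ℝ :=
  Real.sqrt (∑ i, (v i) ^ 2)

namespace CubeAux

open Finset

variable {n : ℕ}

noncomputable def sg (b : Bool) : ℝ := if b then 1 else -1

lemma sg_mul_self (b : Bool) : sg b * sg b = 1 := by cases b <;> simp [sg]

noncomputable def chi (S : Finset (Fin n)) (σ : Fin n → Bool) : ℝ :=
  ∏ i ∈ S, sg (σ i)

lemma sum_chi (S : Finset (Fin n)) :
    ∑ σ : Fin n → Bool, chi S σ = if S = ∅ then (2 ^ n : ℝ) else 0 := by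
  classical
  have h : ∏ i : Fin n, ∑ b : Bool, (if i ∈ S then sg b else 1)
      = ∑ σ ∈ Fintype.piFinset fun _ : Fin n => (univ : Finset Bool),
          ∏ i, (if i ∈ S then sg (σ i) else 1) :=
    Finset.prod_univ_sum _ _
  rw [Fintype.piFinset_univ] at h
  have h2 : ∀ σ : Fin n → Bool, ∏ i, (if i ∈ S then sg (σ i) else 1) = chi S σ := by
    intro σ
    rw [Finset.prod_ite_mem, univ_inter, chi]
  simp only [h2] at h
  rw [← h]
  by_cases hS : S = ∅
  · simp [hS, sg]
  · obtain ⟨i, hi⟩ := Finset.nonempty_iff_ne_empty.2 hS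
    rw [if_neg hS]
    apply Finset.prod_eq_zero (Finset.mem_univ i)
    simp [hi, sg]

lemma chi_mul_chi (A B : Finset (Fin n)) (σ : Fin n → Bool) :
    chi A σ * chi B σ = chi (symmDiff A B) σ := by
  classical
  rw [chi, chi, ← Finset.prod_union_inter, chi]
  have hu : A ∪ B = symmDiff A B ∪ (A ∩ B) := by
    ext x
    simp [Finset.mem_symmDiff]
    tauto
  rw [hu, Finset.prod_union]
  · rw [mul_assoc, ← Finset.prod_mul_distrib]
    simp [sg_mul_self]
  · rw [Finset.disjoint_left]
    intro a ha
    simp only [Finset.mem_symmDiff] at ha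
    simp only [Finset.mem_inter]
    tauto

lemma sum_chi_mul_chi (A B : Finset (Fin n)) :
    ∑ σ : Fin n → Bool, chi A σ * chi B σ = if A = B then (2 ^ n : ℝ) else 0 := by
  simp only [chi_mul_chi]
  rw [sum_chi]
  congr 1
  simp [symmDiff_eq_bot]

-- dual orthogonality
lemma sum_chi_chi (σ τ : Fin n → Bool) :
    ∑ S : Finset (Fin n), chi S σ * chi S τ = if σ = τ then (2 ^ n : ℝ) else 0 := by
  classical
  have h1 : ∀ S : Finset (Fin n), chi S σ * chi S τ = ∏ i ∈ S, (sg (σ i) * sg (τ i)) := by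
    intro S; rw [chi, chi, Finset.prod_mul_distrib]
  simp only [h1]
  have h2 : ∑ S : Finset (Fin n), ∏ i ∈ S, (sg (σ i) * sg (τ i))
      = ∏ i : Fin n, (sg (σ i) * sg (τ i) + 1) := by
    rw [Finset.prod_add]
    rw [← Finset.powerset_univ]
    refine (Finset.sum_congr rfl ?_).symm
    intro S _
    simp
  rw [h2]
  by_cases h : σ = τ
  · subst h
    have : ∀ i : Fin n, sg (σ i) * sg (σ i) + 1 = 2 := by
      intro i; cases (σ i) <;> simp [sg] <;> norm_num
    simp [this, if_pos rfl]
  · rw [if_neg h]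
    obtain ⟨i, hi⟩ : ∃ i, σ i ≠ τ i := by
      by_contra hc; push_neg at hc; exact h (funext hc)
    apply Finset.prod_eq_zero (Finset.mem_univ i)
    cases hσ : σ i <;> cases hτ : τ i <;> simp_all [sg]

noncomputable def four (f : (Fin n → Bool) → ℝ) (S : Finset (Fin n)) : ℝ :=
  ∑ σ : Fin n → Bool, f σ * chi S σ

lemma parseval (f g : (Fin n → Bool) → ℝ) :
    ∑ S : Finset (Fin n), four f S * four g S = 2 ^ n * ∑ σ : Fin n → Bool, f σ * g σ := by
  classical
  simp only [four, Finset.sum_mul, Finset.mul_sum]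
  rw [Finset.sum_comm]
  have key : ∀ τ : Fin n → Bool,
      ∑ S : Finset (Fin n), ∑ σ : Fin n → Bool, f σ * chi S σ * (g τ * chi S τ)
      = 2 ^ n * (f τ * g τ) := by
    intro τ
    rw [Finset.sum_comm]
    have h1 : ∀ σ, ∑ S : Finset (Fin n), f σ * chi S σ * (g τ * chi S τ)
        = f σ * g τ * (if σ = τ then (2 ^ n : ℝ) else 0) := by
      intro σ
      rw [← sum_chi_chi σ τ, Finset.mul_sum]
      congr 1; ext S; ring
    rw [Finset.sum_congr rfl (fun σ _ => h1 σ), Finset.sum_eq_single τ]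
    · simp; ring
    · intro σ _ hσ; rw [if_neg hσ, mul_zero]
    · intro h; exact absurd (Finset.mem_univ τ) h
  calc ∑ τ : Fin n → Bool, ∑ S : Finset (Fin n), ∑ σ : Fin n → Bool,
        f σ * chi S σ * (g τ * chi S τ)
      = ∑ τ : Fin n → Bool, 2 ^ n * (f τ * g τ) := Finset.sum_congr rfl (fun τ _ => key τ)

def flip (i : Fin n) (σ : Fin n → Bool) : Fin n → Bool := Function.update σ i (!(σ i))

lemma flip_flip (i : Fin n) (σ : Fin n → Bool) : flip i (flip i σ) = σ := by
  funext j
  by_cases h : j = i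
  · subst h; simp [flip]
  · simp [flip, Function.update_of_ne h]

lemma flip_invol (i : Fin n) : Function.Involutive (flip (n := n) i) := flip_flip i

lemma sum_flip (i : Fin n) (h : (Fin n → Bool) → ℝ) :
    ∑ σ : Fin n → Bool, h (flip i σ) = ∑ σ : Fin n → Bool, h σ :=
  Fintype.sum_bijective (flip i) (flip_invol i).bijective _ _ (fun σ => rfl)

lemma sg_not (b : Bool) : sg (!b) = - sg b := by cases b <;> simp [sg]

lemma chi_flip (S : Finset (Fin n)) (i : Fin n) (σ : Fin n → Bool) :
    chi S (flip i σ) = (if i ∈ S then -1 else 1) * chi S σ := by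
  classical
  by_cases hi : i ∈ S
  · rw [if_pos hi, chi, chi, ← Finset.prod_erase_mul _ _ hi, ← Finset.prod_erase_mul _ _ hi]
    have h1 : ∀ j ∈ S.erase i, sg (flip i σ j) = sg (σ j) := by
      intro j hj
      rw [flip, Function.update_of_ne (Finset.ne_of_mem_erase hj)]
    rw [Finset.prod_congr rfl h1]
    have : sg (flip i σ i) = - sg (σ i) := by rw [flip, Function.update_self, sg_not]
    rw [this]; ring
  · rw [if_neg hi, one_mul, chi, chi]
    refine Finset.prod_congr rfl fun j hj => ?_
    have : j ≠ i := by rintro rfl; exact hi hj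
    rw [flip, Function.update_of_ne this]

lemma four_flip (f : (Fin n → Bool) → ℝ) (i : Fin n) (S : Finset (Fin n)) :
    four (fun σ => f (flip i σ)) S = (if i ∈ S then -1 else 1) * four f S := by
  have : ∀ σ, f (flip i σ) * chi S σ
      = (fun τ => f τ * ((if i ∈ S then -1 else 1) * chi S τ)) (flip i σ) := by
    intro σ
    simp only
    rw [← chi_flip, flip_flip]
  calc four (fun σ => f (flip i σ)) S
      = ∑ σ : Fin n → Bool, (fun τ => f τ * ((if i ∈ S then -1 else 1) * chi S τ)) (flip i σ) :=
        Finset.sum_congr rfl (fun σ _ => this σ)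
    _ = ∑ τ : Fin n → Bool, f τ * ((if i ∈ S then -1 else 1) * chi S τ) := sum_flip i (fun τ => f τ * ((if i ∈ S then -1 else 1) * chi S τ))
    _ = (if i ∈ S then -1 else 1) * four f S := by
        rw [four, Finset.mul_sum]
        refine Finset.sum_congr rfl fun τ _ => by ring

lemma four_sub (f g : (Fin n → Bool) → ℝ) (S : Finset (Fin n)) :
    four (fun σ => f σ - g σ) S = four f S - four g S := by
  simp [four, sub_mul, Finset.sum_sub_distrib]

lemma four_empty (f : (Fin n → Bool) → ℝ) : four f ∅ = ∑ σ : Fin n → Bool, f σ := by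
  simp [four, chi]

theorem poincare (f : (Fin n → Bool) → ℝ) :
    4 * ((2 ^ n : ℝ) * (∑ σ : Fin n → Bool, f σ ^ 2) - (∑ σ : Fin n → Bool, f σ) ^ 2)
      ≤ 2 ^ n * ∑ i : Fin n, ∑ σ : Fin n → Bool, (f σ - f (flip i σ)) ^ 2 := by
  classical
  have hpars : ∑ S : Finset (Fin n), four f S ^ 2 = 2 ^ n * ∑ σ : Fin n → Bool, f σ ^ 2 := by
    have := parseval f f
    simpa [sq] using this
  have hsplit : ∑ S : Finset (Fin n), four f S ^ 2
      = (∑ σ : Fin n → Bool, f σ) ^ 2 + ∑ S ∈ Finset.univ.erase ∅, four f S ^ 2 := by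
    rw [← Finset.add_sum_erase _ _ (Finset.mem_univ ∅), four_empty]
  -- per coordinate identity
  have hper : ∀ i : Fin n, 2 ^ n * ∑ σ : Fin n → Bool, (f σ - f (flip i σ)) ^ 2
      = ∑ S : Finset (Fin n), (if i ∈ S then (4:ℝ) else 0) * four f S ^ 2 := by
    intro i
    have h1 : ∀ S, four (fun σ => f σ - f (flip i σ)) S
        = (if i ∈ S then (2:ℝ) else 0) * four f S := by
      intro S
      rw [four_sub, four_flip]
      by_cases h : i ∈ S <;> simp [h] <;> ring
    have h2 := parseval (fun σ => f σ - f (flip i σ)) (fun σ => f σ - f (flip i σ))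
    have h3 : ∑ S : Finset (Fin n), four (fun σ => f σ - f (flip i σ)) S
          * four (fun σ => f σ - f (flip i σ)) S
        = ∑ S : Finset (Fin n), (if i ∈ S then (4:ℝ) else 0) * four f S ^ 2 := by
      refine Finset.sum_congr rfl fun S _ => ?_
      rw [h1]
      by_cases h : i ∈ S <;> simp [h] <;> ring
    rw [← h3, h2]
    simp [sq]
  -- sum over i
  have hsum : 2 ^ n * ∑ i : Fin n, ∑ σ : Fin n → Bool, (f σ - f (flip i σ)) ^ 2
      = ∑ S : Finset (Fin n), (4 * S.card : ℝ) * four f S ^ 2 := by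
    rw [Finset.mul_sum, Finset.sum_congr rfl (fun i _ => hper i), Finset.sum_comm]
    refine Finset.sum_congr rfl fun S _ => ?_
    rw [← Finset.sum_mul]
    congr 1
    rw [Finset.sum_ite_mem]
    simp [Finset.univ_inter, mul_comm]
  rw [hsum]
  have hmain : 4 * ∑ S ∈ Finset.univ.erase ∅, four f S ^ 2
      ≤ ∑ S : Finset (Fin n), (4 * S.card : ℝ) * four f S ^ 2 := by
    rw [← Finset.add_sum_erase _ (fun S => (4 * S.card : ℝ) * four f S ^ 2) (Finset.mem_univ ∅)]
    simp only [Finset.card_empty, Nat.cast_zero, mul_zero, zero_mul, zero_add]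
    rw [Finset.mul_sum]
    refine Finset.sum_le_sum fun S hS => ?_
    have hcard : (1:ℝ) ≤ S.card := by
      have : S ≠ ∅ := Finset.ne_of_mem_erase hS
      have : 1 ≤ S.card := Finset.card_pos.2 (Finset.nonempty_iff_ne_empty.2 this)
      exact_mod_cast this
    nlinarith [sq_nonneg (four f S)]
  have := hsplit ▸ hpars
  nlinarith [hmain]

lemma sum_sq_flip (f : (Fin n → Bool) → ℝ) (i : Fin n) :
    ∑ σ : Fin n → Bool, (f σ - f (flip i σ)) ^ 2
      = 2 * ∑ σ : Fin n → Bool, (max (f σ - f (flip i σ)) 0) ^ 2 := by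
  have hpt : ∀ σ, (f σ - f (flip i σ)) ^ 2
      = (max (f σ - f (flip i σ)) 0) ^ 2 + (max (f (flip i σ) - f σ) 0) ^ 2 := by
    intro σ
    rcases le_total (f σ - f (flip i σ)) 0 with h | h
    · rw [max_eq_right h, max_eq_left (by linarith)]
      nlinarith
    · rw [max_eq_left h, max_eq_right (by linarith)]
      nlinarith
  rw [Finset.sum_congr rfl (fun σ _ => hpt σ), Finset.sum_add_distrib]
  have : ∑ σ : Fin n → Bool, (max (f (flip i σ) - f σ) 0) ^ 2
      = ∑ σ : Fin n → Bool, (max (f σ - f (flip i σ)) 0) ^ 2 := by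
    have := sum_flip i (fun σ => (max (f σ - f (flip i σ)) 0) ^ 2)
    rw [← this]
    refine Finset.sum_congr rfl fun σ _ => ?_
    rw [flip_flip]
  rw [this]; ring

noncomputable def vmap (σ : Fin n → Bool) : Fin n → ℝ := fun i => sg (σ i)

lemma chi_singleton (j : Fin n) (σ : Fin n → Bool) : chi {j} σ = sg (σ j) := by
  simp [chi]

lemma sum_sg_mul_sg (j k : Fin n) :
    ∑ σ : Fin n → Bool, sg (σ j) * sg (σ k) = if j = k then (2 ^ n : ℝ) else 0 := by
  have := sum_chi_mul_chi ({j} : Finset (Fin n)) {k}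
  simp only [chi_singleton] at this
  rw [this]
  congr 1
  simp [Finset.singleton_inj]

-- basic euclNorm facts
lemma euclNorm_nonneg (v : Fin n → ℝ) : 0 ≤ euclNorm v := Real.sqrt_nonneg _

lemma euclNorm_sq (v : Fin n → ℝ) : euclNorm v ^ 2 = ∑ i, (v i) ^ 2 :=
  Real.sq_sqrt (Finset.sum_nonneg fun i _ => sq_nonneg _)

lemma euclNorm_eq_norm (v : Fin n → ℝ) :
    euclNorm v = ‖(WithLp.equiv 2 (Fin n → ℝ)).symm v‖ := by
  rw [EuclideanSpace.norm_eq]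
  simp [euclNorm, Real.norm_eq_abs, sq_abs]

lemma euclNorm_sub_le (x y : Fin n → ℝ) : euclNorm x - euclNorm y ≤ euclNorm (x - y) := by
  rw [euclNorm_eq_norm, euclNorm_eq_norm, euclNorm_eq_norm]
  have : (WithLp.equiv 2 (Fin n → ℝ)).symm (x - y)
      = (WithLp.equiv 2 (Fin n → ℝ)).symm x - (WithLp.equiv 2 (Fin n → ℝ)).symm y := rfl
  rw [this]
  exact norm_sub_norm_le _ _

-- squared norm expansion through the Gram matrix
noncomputable def gram (B : Matrix (Fin n) (Fin n) ℝ) (j k : Fin n) : ℝ :=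
  ∑ i, B i j * B i k

noncomputable def hsq (B : Matrix (Fin n) (Fin n) ℝ) : ℝ := ∑ i, ∑ j, (B i j) ^ 2

lemma mulVec_sq (B : Matrix (Fin n) (Fin n) ℝ) (σ : Fin n → Bool) :
    euclNorm (B.mulVec (vmap σ)) ^ 2
      = ∑ j, ∑ k, gram B j k * (sg (σ j) * sg (σ k)) := by
  rw [euclNorm_sq]
  have h1 : ∀ i, (B.mulVec (vmap σ) i) ^ 2
      = ∑ j, ∑ k, (B i j * B i k) * (sg (σ j) * sg (σ k)) := by
    intro i
    have : B.mulVec (vmap σ) i = ∑ j, B i j * sg (σ j) := by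
      simp [Matrix.mulVec, dotProduct, vmap]
    rw [this, sq, Finset.sum_mul_sum]
    refine Finset.sum_congr rfl fun j _ => Finset.sum_congr rfl fun k _ => by ring
  rw [Finset.sum_congr rfl fun i _ => h1 i, Finset.sum_comm]
  refine Finset.sum_congr rfl fun j _ => ?_
  rw [Finset.sum_comm]
  refine Finset.sum_congr rfl fun k _ => ?_
  rw [gram, Finset.sum_mul]

lemma sum_mulVec_sq (B : Matrix (Fin n) (Fin n) ℝ) :
    ∑ σ : Fin n → Bool, euclNorm (B.mulVec (vmap σ)) ^ 2 = 2 ^ n * hsq B := by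
  rw [Finset.sum_congr rfl fun σ _ => mulVec_sq B σ]
  rw [Finset.sum_comm]
  have h1 : ∀ j, ∑ σ : Fin n → Bool, ∑ k, gram B j k * (sg (σ j) * sg (σ k))
      = 2 ^ n * ∑ i, (B i j) ^ 2 := by
    intro j
    rw [Finset.sum_comm]
    have h2 : ∀ k, ∑ σ : Fin n → Bool, gram B j k * (sg (σ j) * sg (σ k))
        = gram B j k * (if j = k then (2 ^ n : ℝ) else 0) := by
      intro k
      rw [← Finset.mul_sum, sum_sg_mul_sg]
    rw [Finset.sum_congr rfl fun k _ => h2 k, Finset.sum_eq_single j]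
    · rw [if_pos rfl, gram, Finset.sum_mul, Finset.mul_sum]
      exact Finset.sum_congr rfl fun i _ => by ring
    · intro k _ hk; rw [if_neg (Ne.symm hk), mul_zero]
    · intro h; exact absurd (Finset.mem_univ j) h
  rw [Finset.sum_congr rfl fun j _ => h1 j, ← Finset.mul_sum, hsq, Finset.sum_comm]


lemma gram_symm (B : Matrix (Fin n) (Fin n) ℝ) (j k : Fin n) : gram B j k = gram B k j := by
  rw [gram, gram]; exact Finset.sum_congr rfl fun i _ => by ring

lemma pairing {j k l m : Fin n} (h : (symmDiff {j} {k} : Finset (Fin n)) = symmDiff {l} {m}) :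
    (j = k ∧ l = m) ∨ (j = l ∧ k = m) ∨ (j = m ∧ k = l) := by
  classical
  by_cases hjk : j = k
  · subst hjk
    rw [symmDiff_self] at h
    have : l = m := by
      by_contra hlm
      have hl : l ∈ (symmDiff {l} {m} : Finset (Fin n)) := by
        simp [Finset.mem_symmDiff, hlm]
      rw [← h] at hl
      simp at hl
    exact Or.inl ⟨rfl, this⟩
  · by_cases hlm : l = m
    · subst hlm
      rw [symmDiff_self] at h
      have hj : j ∈ (symmDiff {j} {k} : Finset (Fin n)) := by
        simp [Finset.mem_symmDiff, hjk]
      rw [h] at hj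
      simp at hj
    · have hj : j ∈ (symmDiff {l} {m} : Finset (Fin n)) := by
        rw [← h]; simp [Finset.mem_symmDiff, hjk]
      have hk : k ∈ (symmDiff {l} {m} : Finset (Fin n)) := by
        rw [← h]; simp [Finset.mem_symmDiff, Ne.symm hjk]
      simp only [Finset.mem_symmDiff, Finset.mem_singleton] at hj hk
      rcases hj with ⟨hjl, hjm⟩ | ⟨hjm, hjl⟩ <;> rcases hk with ⟨hkl, hkm⟩ | ⟨hkm, hkl⟩
      · exact absurd (hjl.trans hkl.symm) hjk
      · exact Or.inr (Or.inl ⟨hjl, hkm⟩)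
      · exact Or.inr (Or.inr ⟨hjm, hkl⟩)
      · exact absurd (hjm.trans hkm.symm) hjk

noncomputable def D (p : Fin n × Fin n) : Finset (Fin n) := symmDiff {p.1} {p.2}

lemma quad_orth (p q : Fin n × Fin n) :
    ∑ σ : Fin n → Bool, (sg (σ p.1) * sg (σ p.2)) * (sg (σ q.1) * sg (σ q.2))
      = if D p = D q then (2 ^ n : ℝ) else 0 := by
  have h1 : ∀ σ : Fin n → Bool, (sg (σ p.1) * sg (σ p.2)) * (sg (σ q.1) * sg (σ q.2))
      = chi (D p) σ * chi (D q) σ := by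
    intro σ
    rw [D, D, ← chi_mul_chi {p.1} {p.2} σ, ← chi_mul_chi {q.1} {q.2} σ, chi_singleton,
      chi_singleton, chi_singleton, chi_singleton]
  rw [Finset.sum_congr rfl fun σ _ => h1 σ, sum_chi_mul_chi]

lemma fourth_moment (B : Matrix (Fin n) (Fin n) ℝ) :
    ∑ σ : Fin n → Bool, (euclNorm (B.mulVec (vmap σ)) ^ 2) ^ 2
      ≤ 3 * 2 ^ n * hsq B ^ 2 := by
  classical
  set G : Fin n × Fin n → ℝ := fun p => gram B p.1 p.2 with hG
  have hGd : ∀ p : Fin n × Fin n, p.1 = p.2 → 0 ≤ G p := by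
    intro p hp
    rw [hG]; simp only; rw [← hp, gram]
    exact Finset.sum_nonneg fun i _ => by rw [← sq]; positivity
  have hGs : ∀ p : Fin n × Fin n, G (p.2, p.1) = G p := fun p => gram_symm B p.2 p.1
  have claim1 : ∀ σ, euclNorm (B.mulVec (vmap σ)) ^ 2
      = ∑ p : Fin n × Fin n, G p * (sg (σ p.1) * sg (σ p.2)) := by
    intro σ
    rw [mulVec_sq]
    exact (Fintype.sum_prod_type (f := fun p : Fin n × Fin n =>
      G p * (sg (σ p.1) * sg (σ p.2)))).symm
  have claim2 : ∑ σ : Fin n → Bool, (euclNorm (B.mulVec (vmap σ)) ^ 2) ^ 2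
      = ∑ p : Fin n × Fin n, ∑ q : Fin n × Fin n, G p * G q *
          (if D p = D q then (2 ^ n : ℝ) else 0) := by
    have h2 : ∀ σ, (euclNorm (B.mulVec (vmap σ)) ^ 2) ^ 2
        = ∑ p : Fin n × Fin n, ∑ q : Fin n × Fin n,
            G p * G q * ((sg (σ p.1) * sg (σ p.2)) * (sg (σ q.1) * sg (σ q.2))) := by
      intro σ
      rw [claim1 σ, sq, Finset.sum_mul_sum]
      exact Finset.sum_congr rfl fun p _ => Finset.sum_congr rfl fun q _ => by ring
    rw [Finset.sum_congr rfl fun σ _ => h2 σ, Finset.sum_comm]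
    refine Finset.sum_congr rfl fun p _ => ?_
    rw [Finset.sum_comm]
    refine Finset.sum_congr rfl fun q _ => ?_
    rw [← Finset.mul_sum, quad_orth]
  rw [claim2]
  have pairing' : ∀ p q : Fin n × Fin n, D p = D q →
      (p.1 = p.2 ∧ q.1 = q.2) ∨ p = q ∨ (p.1 = q.2 ∧ p.2 = q.1) := by
    intro p q h
    rcases pairing h with h | ⟨h1, h2⟩ | h
    · exact Or.inl h
    · exact Or.inr (Or.inl (Prod.ext h1 h2))
    · exact Or.inr (Or.inr h)
  have claim3 : ∀ p q : Fin n × Fin n,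
      G p * G q * (if D p = D q then (2 ^ n : ℝ) else 0)
      ≤ 2 ^ n * ((if p.1 = p.2 then G p else 0) * (if q.1 = q.2 then G q else 0)
        + (if p = q then G p * G q else 0)
        + (if p.1 = q.2 ∧ p.2 = q.1 then G p * G q else 0)) := by
    intro p q
    by_cases hD : D p = D q
    · rw [if_pos hD]
      -- in each pairing case, G p * G q ≥ 0
      have hnn : 0 ≤ G p * G q := by
        rcases pairing' p q hD with ⟨h1, h2⟩ | h | ⟨h1, h2⟩
        · exact mul_nonneg (hGd p h1) (hGd q h2)
        · subst h; exact mul_self_nonneg _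
        · have : G q = G p := by
            have := hGs q
            rw [← this]
            congr 1
            exact Prod.ext h1.symm h2.symm
          rw [this]; exact mul_self_nonneg _
      have hterm1 : 0 ≤ (if p.1 = p.2 then G p else 0) * (if q.1 = q.2 then G q else 0) := by
        split_ifs with h1 h2
        · exact mul_nonneg (hGd p h1) (hGd q h2)
        all_goals simp
      have hterm2 : (0:ℝ) ≤ if p = q then G p * G q else 0 := by
        split_ifs with h
        · exact hnn
        · exact le_refl 0
      have hterm3 : (0:ℝ) ≤ if p.1 = q.2 ∧ p.2 = q.1 then G p * G q else 0 := by
        split_ifs with h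
        · exact hnn
        · exact le_refl 0
      have hge : G p * G q ≤ (if p.1 = p.2 then G p else 0) * (if q.1 = q.2 then G q else 0)
          + (if p = q then G p * G q else 0)
          + (if p.1 = q.2 ∧ p.2 = q.1 then G p * G q else 0) := by
        rcases pairing' p q hD with ⟨h1, h2⟩ | h | ⟨h1, h2⟩
        · rw [if_pos h1, if_pos h2]; nlinarith
        · rw [if_pos h]; nlinarith
        · rw [if_pos (And.intro h1 h2)]; nlinarith
      calc G p * G q * (2 ^ n : ℝ) = 2 ^ n * (G p * G q) := by ring
        _ ≤ _ := by
            have h2n : (0:ℝ) ≤ 2 ^ n := by positivity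
            exact mul_le_mul_of_nonneg_left hge h2n
    · rw [if_neg hD, mul_zero]
      have e1 : ¬ (p.1 = p.2 ∧ q.1 = q.2) := by
        rintro ⟨a, b⟩; apply hD; rw [D, D, a, b, symmDiff_self, symmDiff_self]
      have e2 : p ≠ q := by rintro rfl; exact hD rfl
      have e3 : ¬ (p.1 = q.2 ∧ p.2 = q.1) := by
        rintro ⟨a, b⟩; apply hD; rw [D, D, a, b, symmDiff_comm]
      rw [if_neg e2, if_neg e3]
      have : (if p.1 = p.2 then G p else 0) * (if q.1 = q.2 then G q else 0) = 0 := by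
        by_cases h1 : p.1 = p.2
        · by_cases h2 : q.1 = q.2
          · exact absurd ⟨h1, h2⟩ e1
          · rw [if_neg h2, mul_zero]
        · rw [if_neg h1, zero_mul]
      rw [this]
      simp
  -- now bound the three collapsed sums
  have hsum3 : ∑ p : Fin n × Fin n, ∑ q : Fin n × Fin n,
      ((if p.1 = p.2 then G p else 0) * (if q.1 = q.2 then G q else 0)
        + (if p = q then G p * G q else 0)
        + (if p.1 = q.2 ∧ p.2 = q.1 then G p * G q else 0)) ≤ 3 * hsq B ^ 2 := by
    have hdiag : ∑ p : Fin n × Fin n, (if p.1 = p.2 then G p else 0) = hsq B := by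
      rw [Fintype.sum_prod_type]
      have : ∀ j : Fin n, ∑ k : Fin n, (if j = k then G (j, k) else 0) = gram B j j := by
        intro j
        rw [Finset.sum_ite_eq (Finset.univ : Finset (Fin n)) j (fun k => G (j, k))]
        simp [hG]
      rw [Finset.sum_congr rfl fun j _ => this j]
      rw [hsq, Finset.sum_comm]
      refine Finset.sum_congr rfl fun j _ => ?_
      rw [gram]
      exact Finset.sum_congr rfl fun i _ => (sq (B i j)) ▸ by ring
    have hGsq : ∑ p : Fin n × Fin n, G p ^ 2 ≤ hsq B ^ 2 := by
      have hcs : ∀ p : Fin n × Fin n, G p ^ 2 ≤ (∑ i, B i p.1 ^ 2) * (∑ i, B i p.2 ^ 2) := by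
        intro p
        rw [hG]
        exact Finset.sum_mul_sq_le_sq_mul_sq Finset.univ _ _
      calc ∑ p : Fin n × Fin n, G p ^ 2
          ≤ ∑ p : Fin n × Fin n, (∑ i, B i p.1 ^ 2) * (∑ i, B i p.2 ^ 2) :=
            Finset.sum_le_sum fun p _ => hcs p
        _ = (∑ j, ∑ i, B i j ^ 2) * (∑ k, ∑ i, B i k ^ 2) := by
            rw [Finset.sum_mul_sum]
            exact Fintype.sum_prod_type (f := fun p : Fin n × Fin n =>
              (∑ i, B i p.1 ^ 2) * (∑ i, B i p.2 ^ 2))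
        _ = hsq B ^ 2 := by rw [sq, hsq, Finset.sum_comm]
    have t1 : ∑ p : Fin n × Fin n, ∑ q : Fin n × Fin n,
        (if p.1 = p.2 then G p else 0) * (if q.1 = q.2 then G q else 0) ≤ hsq B ^ 2 := by
      have : ∀ p : Fin n × Fin n, ∑ q : Fin n × Fin n,
          (if p.1 = p.2 then G p else 0) * (if q.1 = q.2 then G q else 0)
          = (if p.1 = p.2 then G p else 0) * hsq B := by
        intro p; rw [← Finset.mul_sum, hdiag]
      rw [Finset.sum_congr rfl fun p _ => this p, ← Finset.sum_mul, hdiag, ← sq]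
    have t2 : ∑ p : Fin n × Fin n, ∑ q : Fin n × Fin n,
        (if p = q then G p * G q else 0) ≤ hsq B ^ 2 := by
      have : ∀ p : Fin n × Fin n, ∑ q : Fin n × Fin n,
          (if p = q then G p * G q else 0) = G p ^ 2 := by
        intro p
        rw [Finset.sum_ite_eq (Finset.univ : Finset (Fin n × Fin n)) p (fun q => G p * G q)]
        simp [sq]
      rw [Finset.sum_congr rfl fun p _ => this p]
      exact hGsq
    have t3 : ∑ p : Fin n × Fin n, ∑ q : Fin n × Fin n,
        (if p.1 = q.2 ∧ p.2 = q.1 then G p * G q else 0) ≤ hsq B ^ 2 := by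
      have : ∀ p : Fin n × Fin n, ∑ q : Fin n × Fin n,
          (if p.1 = q.2 ∧ p.2 = q.1 then G p * G q else 0) = G p ^ 2 := by
        intro p
        rw [Finset.sum_eq_single (p.2, p.1)]
        · rw [if_pos (And.intro rfl rfl), hGs, sq]
        · intro q _ hq
          rw [if_neg]
          rintro ⟨a, b⟩
          exact hq (Prod.ext b.symm a.symm)
        · intro h; exact absurd (Finset.mem_univ _) h
      rw [Finset.sum_congr rfl fun p _ => this p]
      exact hGsq
    calc ∑ p : Fin n × Fin n, ∑ q : Fin n × Fin n,
        ((if p.1 = p.2 then G p else 0) * (if q.1 = q.2 then G q else 0)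
          + (if p = q then G p * G q else 0)
          + (if p.1 = q.2 ∧ p.2 = q.1 then G p * G q else 0))
        = (∑ p : Fin n × Fin n, ∑ q : Fin n × Fin n,
            (if p.1 = p.2 then G p else 0) * (if q.1 = q.2 then G q else 0))
          + (∑ p : Fin n × Fin n, ∑ q : Fin n × Fin n, (if p = q then G p * G q else 0))
          + (∑ p : Fin n × Fin n, ∑ q : Fin n × Fin n,
              (if p.1 = q.2 ∧ p.2 = q.1 then G p * G q else 0)) := by
          rw [← Finset.sum_add_distrib, ← Finset.sum_add_distrib]
          exact Finset.sum_congr rfl fun p _ => by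
            rw [← Finset.sum_add_distrib, ← Finset.sum_add_distrib]
      _ ≤ 3 * hsq B ^ 2 := by linarith
  calc ∑ p : Fin n × Fin n, ∑ q : Fin n × Fin n, G p * G q *
        (if D p = D q then (2 ^ n : ℝ) else 0)
      ≤ ∑ p : Fin n × Fin n, ∑ q : Fin n × Fin n,
          2 ^ n * ((if p.1 = p.2 then G p else 0) * (if q.1 = q.2 then G q else 0)
            + (if p = q then G p * G q else 0)
            + (if p.1 = q.2 ∧ p.2 = q.1 then G p * G q else 0)) :=
        Finset.sum_le_sum fun p _ => Finset.sum_le_sum fun q _ => claim3 p q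
    _ = 2 ^ n * ∑ p : Fin n × Fin n, ∑ q : Fin n × Fin n,
          ((if p.1 = p.2 then G p else 0) * (if q.1 = q.2 then G q else 0)
            + (if p = q then G p * G q else 0)
            + (if p.1 = q.2 ∧ p.2 = q.1 then G p * G q else 0)) := by
        rw [Finset.mul_sum]
        exact Finset.sum_congr rfl fun p _ => by rw [Finset.mul_sum]
    _ ≤ 2 ^ n * (3 * hsq B ^ 2) := by
        have h2n : (0:ℝ) ≤ 2 ^ n := by positivity
        exact mul_le_mul_of_nonneg_left hsum3 h2n
    _ = 3 * 2 ^ n * hsq B ^ 2 := by ring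

lemma hsq_nonneg (B : Matrix (Fin n) (Fin n) ℝ) : 0 ≤ hsq B :=
  Finset.sum_nonneg fun i _ => Finset.sum_nonneg fun j _ => sq_nonneg _

lemma khinchin (B : Matrix (Fin n) (Fin n) ℝ) :
    ((2:ℝ) ^ n) ^ 2 * hsq B ≤ 3 * (∑ σ : Fin n → Bool, euclNorm (B.mulVec (vmap σ))) ^ 2 := by
  classical
  set N : ℝ := (2:ℝ) ^ n with hN
  set M : ℝ := hsq B with hM
  set X : (Fin n → Bool) → ℝ := fun σ => euclNorm (B.mulVec (vmap σ)) with hX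
  have hX0 : ∀ σ, 0 ≤ X σ := fun σ => euclNorm_nonneg _
  have h2 : ∑ σ : Fin n → Bool, X σ ^ 2 = N * M := sum_mulVec_sq B
  have h4 : ∑ σ : Fin n → Bool, (X σ ^ 2) ^ 2 ≤ 3 * N * M ^ 2 := fourth_moment B
  have hM0 : 0 ≤ M := hsq_nonneg B
  have hN0 : (0:ℝ) < N := by rw [hN]; positivity
  set A : ℝ := ∑ σ : Fin n → Bool, X σ with hA
  have hA0 : 0 ≤ A := Finset.sum_nonneg fun σ _ => hX0 σ
  set C : ℝ := ∑ σ : Fin n → Bool, X σ ^ 3 with hC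
  have hC0 : 0 ≤ C := Finset.sum_nonneg fun σ _ => pow_nonneg (hX0 σ) 3
  have c1 : (N * M) ^ 2 ≤ A * C := by
    have := Finset.sum_mul_sq_le_sq_mul_sq Finset.univ
      (fun σ => Real.sqrt (X σ)) (fun σ => X σ * Real.sqrt (X σ))
    have e1 : ∀ σ : Fin n → Bool, Real.sqrt (X σ) * (X σ * Real.sqrt (X σ)) = X σ ^ 2 := by
      intro σ
      rw [show Real.sqrt (X σ) * (X σ * Real.sqrt (X σ))
        = X σ * (Real.sqrt (X σ) * Real.sqrt (X σ)) by ring,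
        Real.mul_self_sqrt (hX0 σ), sq]
    have e2 : ∀ σ : Fin n → Bool, Real.sqrt (X σ) ^ 2 = X σ := fun σ => Real.sq_sqrt (hX0 σ)
    have e3 : ∀ σ : Fin n → Bool, (X σ * Real.sqrt (X σ)) ^ 2 = X σ ^ 3 := by
      intro σ
      rw [mul_pow, Real.sq_sqrt (hX0 σ)]
      ring
    rw [Finset.sum_congr rfl fun σ _ => e1 σ, Finset.sum_congr rfl fun σ _ => e2 σ,
      Finset.sum_congr rfl fun σ _ => e3 σ, h2] at this
    exact this
  have c2 : C ^ 2 ≤ (N * M) * (3 * N * M ^ 2) := by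
    have := Finset.sum_mul_sq_le_sq_mul_sq Finset.univ (fun σ => X σ) (fun σ => X σ ^ 2)
    have e1 : ∀ σ : Fin n → Bool, X σ * X σ ^ 2 = X σ ^ 3 := fun σ => by ring
    rw [Finset.sum_congr rfl fun σ _ => e1 σ, h2] at this
    refine this.trans ?_
    have h40 : 0 ≤ ∑ σ : Fin n → Bool, (X σ ^ 2) ^ 2 :=
      Finset.sum_nonneg fun σ _ => sq_nonneg _
    exact mul_le_mul_of_nonneg_left h4 (by positivity)
  rcases eq_or_lt_of_le hM0 with hMeq | hMpos
  · rw [← hMeq]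
    have : (0:ℝ) ≤ 3 * A ^ 2 := by positivity
    simpa using this
  · have e1 : (N * M) ^ 4 ≤ A ^ 2 * (3 * N ^ 2 * M ^ 3) := by
      have s1 : ((N * M) ^ 2) ^ 2 ≤ (A * C) ^ 2 :=
        pow_le_pow_left₀ (sq_nonneg _) c1 2
      have s2 : (A * C) ^ 2 = A ^ 2 * C ^ 2 := by ring
      have s3 : A ^ 2 * C ^ 2 ≤ A ^ 2 * ((N * M) * (3 * N * M ^ 2)) :=
        mul_le_mul_of_nonneg_left c2 (sq_nonneg A)
      calc (N * M) ^ 4 = ((N * M) ^ 2) ^ 2 := by ring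
        _ ≤ (A * C) ^ 2 := s1
        _ = A ^ 2 * C ^ 2 := s2
        _ ≤ A ^ 2 * ((N * M) * (3 * N * M ^ 2)) := s3
        _ = A ^ 2 * (3 * N ^ 2 * M ^ 3) := by ring
    have hpos : (0:ℝ) < N ^ 2 * M ^ 3 := by positivity
    have e2 : (N ^ 2 * M) * (N ^ 2 * M ^ 3) ≤ (3 * A ^ 2) * (N ^ 2 * M ^ 3) := by
      calc (N ^ 2 * M) * (N ^ 2 * M ^ 3) = (N * M) ^ 4 := by ring
        _ ≤ A ^ 2 * (3 * N ^ 2 * M ^ 3) := e1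
        _ = (3 * A ^ 2) * (N ^ 2 * M ^ 3) := by ring
    exact le_of_mul_le_mul_right e2 hpos

theorem cube_main (𝓑 : Finset (Matrix (Fin n) (Fin n) ℝ)) (h𝓑 : 𝓑.Nonempty) :
    (∑ σ : Fin n → Bool, 𝓑.sup' h𝓑 (fun B => euclNorm (B.mulVec (vmap σ)))) ^ 2
        ≤ 2 ^ n * ∑ σ : Fin n → Bool, 𝓑.sup' h𝓑 (fun B => euclNorm (B.mulVec (vmap σ))) ^ 2
      ∧ 2 ^ n * ∑ σ : Fin n → Bool, 𝓑.sup' h𝓑 (fun B => euclNorm (B.mulVec (vmap σ))) ^ 2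
        ≤ 9 * (∑ σ : Fin n → Bool, 𝓑.sup' h𝓑 (fun B => euclNorm (B.mulVec (vmap σ)))) ^ 2 := by
  classical
  set f : (Fin n → Bool) → ℝ :=
    fun σ => 𝓑.sup' h𝓑 (fun B => euclNorm (B.mulVec (vmap σ))) with hf
  have hcard : (Finset.univ : Finset (Fin n → Bool)).card = 2 ^ n := by
    simp [Finset.card_univ]
  constructor
  · have := sq_sum_le_card_mul_sum_sq
      (s := (Finset.univ : Finset (Fin n → Bool))) (f := f)
    rw [hcard] at this
    exact_mod_cast this
  · -- the hard direction
    set N : ℝ := (2:ℝ) ^ n with hN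
    have hN0 : (0:ℝ) < N := by rw [hN]; positivity
    set M : ℝ := 𝓑.sup' h𝓑 hsq with hM
    obtain ⟨B₀, hB₀mem, hB₀⟩ := Finset.exists_mem_eq_sup' h𝓑 hsq
    -- Khinchin lower bound on the mean
    have hXf : ∀ σ, euclNorm (B₀.mulVec (vmap σ)) ≤ f σ := by
      intro σ
      apply Finset.le_sup' (fun B => euclNorm (B.mulVec (vmap σ))) hB₀mem
    have hf0 : ∀ σ, 0 ≤ f σ := fun σ => (euclNorm_nonneg _).trans (hXf σ)
    have hAle : ∑ σ : Fin n → Bool, euclNorm (B₀.mulVec (vmap σ))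
        ≤ ∑ σ : Fin n → Bool, f σ := Finset.sum_le_sum fun σ _ => hXf σ
    have hA0 : 0 ≤ ∑ σ : Fin n → Bool, euclNorm (B₀.mulVec (vmap σ)) :=
      Finset.sum_nonneg fun σ _ => euclNorm_nonneg _
    have hKh : N ^ 2 * M ≤ 3 * (∑ σ : Fin n → Bool, f σ) ^ 2 := by
      have h1 := khinchin B₀
      rw [← hB₀] at h1
      refine h1.trans ?_
      have : (∑ σ : Fin n → Bool, euclNorm (B₀.mulVec (vmap σ))) ^ 2
          ≤ (∑ σ : Fin n → Bool, f σ) ^ 2 := pow_le_pow_left₀ hA0 hAle 2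
      linarith
    -- Efron-Stein / Poincaré upper bound on the variance
    choose Bs hBsmem hBseq using fun σ =>
      Finset.exists_mem_eq_sup' h𝓑 (fun B => euclNorm (B.mulVec (vmap σ)))
    have key : ∀ σ (i : Fin n), (max (f σ - f (flip i σ)) 0) ^ 2
        ≤ 4 * ∑ r, (Bs σ r i) ^ 2 := by
      intro σ i
      set B := Bs σ with hB
      have hdiff : vmap σ - vmap (flip i σ) = Pi.single i (2 * sg (σ i)) := by
        funext j
        by_cases hj : j = i
        · subst hj
          simp only [Pi.sub_apply, vmap, flip, Function.update_self, Pi.single_eq_same]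
          cases h : σ j <;> simp [sg, h] <;> ring
        · simp only [Pi.sub_apply, vmap, flip, Function.update_of_ne hj,
            Pi.single_eq_of_ne hj, sub_self]
      have hbound : f σ - f (flip i σ)
          ≤ euclNorm (B.mulVec (vmap σ) - B.mulVec (vmap (flip i σ))) := by
        have h1 : f σ = euclNorm (B.mulVec (vmap σ)) := hBseq σ
        have h2 : euclNorm (B.mulVec (vmap (flip i σ))) ≤ f (flip i σ) := by
          apply Finset.le_sup' (fun B' => euclNorm (B'.mulVec (vmap (flip i σ)))) (hBsmem σ)
        have := euclNorm_sub_le (B.mulVec (vmap σ)) (B.mulVec (vmap (flip i σ)))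
        linarith
      have henn : euclNorm (B.mulVec (vmap σ) - B.mulVec (vmap (flip i σ))) ^ 2
          = 4 * ∑ r, (B r i) ^ 2 := by
        rw [← Matrix.mulVec_sub, hdiff, Matrix.mulVec_single, euclNorm_sq]
        have hcolv : ∀ r, (MulOpposite.op (2 * sg (σ i)) • B.col i) r = B r i * (2 * sg (σ i)) :=
          fun r => rfl
        simp only [hcolv]
        have hterm : ∀ r : Fin n, (B r i * (2 * sg (σ i))) ^ 2 = 4 * B r i ^ 2 := by
          intro r
          have : sg (σ i) ^ 2 = 1 := by cases σ i <;> simp [sg]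
          nlinarith [this]
        rw [Finset.sum_congr rfl fun r _ => hterm r, ← Finset.mul_sum]
      have hnn : 0 ≤ euclNorm (B.mulVec (vmap σ) - B.mulVec (vmap (flip i σ))) :=
        euclNorm_nonneg _
      have hmax : max (f σ - f (flip i σ)) 0
          ≤ euclNorm (B.mulVec (vmap σ) - B.mulVec (vmap (flip i σ))) :=
        max_le hbound hnn
      calc (max (f σ - f (flip i σ)) 0) ^ 2
          ≤ euclNorm (B.mulVec (vmap σ) - B.mulVec (vmap (flip i σ))) ^ 2 :=
            pow_le_pow_left₀ (le_max_right _ _) hmax 2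
        _ = 4 * ∑ r, (B r i) ^ 2 := henn
    have hcol : ∀ σ, ∑ i, (max (f σ - f (flip i σ)) 0) ^ 2 ≤ 4 * M := by
      intro σ
      have h1 : ∑ i, (max (f σ - f (flip i σ)) 0) ^ 2 ≤ ∑ i : Fin n, 4 * ∑ r, (Bs σ r i) ^ 2 :=
        Finset.sum_le_sum fun i _ => key σ i
      have h2 : ∑ i : Fin n, 4 * ∑ r, (Bs σ r i) ^ 2 = 4 * hsq (Bs σ) := by
        rw [← Finset.mul_sum, hsq, Finset.sum_comm]
      have h3 : hsq (Bs σ) ≤ M := by apply Finset.le_sup' hsq (hBsmem σ)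
      linarith
    have hES : ∑ i : Fin n, ∑ σ : Fin n → Bool, (f σ - f (flip i σ)) ^ 2 ≤ 8 * N * M := by
      have h1 : ∑ i : Fin n, ∑ σ : Fin n → Bool, (f σ - f (flip i σ)) ^ 2
          = 2 * ∑ σ : Fin n → Bool, ∑ i : Fin n, (max (f σ - f (flip i σ)) 0) ^ 2 := by
        rw [Finset.sum_congr rfl fun i (_ : i ∈ Finset.univ) => sum_sq_flip f i,
          ← Finset.mul_sum, Finset.sum_comm]
      rw [h1]
      have h2 : ∑ σ : Fin n → Bool, ∑ i : Fin n, (max (f σ - f (flip i σ)) 0) ^ 2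
          ≤ ∑ σ : Fin n → Bool, 4 * M := Finset.sum_le_sum fun σ _ => hcol σ
      have h3 : ∑ σ : Fin n → Bool, (4 * M : ℝ) = N * (4 * M) := by
        rw [Finset.sum_const, hcard, nsmul_eq_mul, hN]
        push_cast
        ring
      rw [h3] at h2
      linarith
    have hpoin := poincare f
    have h4 : (2:ℝ) ^ n * ∑ i : Fin n, ∑ σ : Fin n → Bool, (f σ - f (flip i σ)) ^ 2
        ≤ N * (8 * N * M) := by
      rw [← hN]
      exact mul_le_mul_of_nonneg_left hES (le_of_lt hN0)
    have hfin : N * ∑ σ : Fin n → Bool, f σ ^ 2 ≤ 7 * (∑ σ : Fin n → Bool, f σ) ^ 2 := by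
      rw [hN] at *
      nlinarith [hpoin, h4, hKh, sq_nonneg (∑ σ : Fin n → Bool, f σ)]
    have : (0:ℝ) ≤ (∑ σ : Fin n → Bool, f σ) ^ 2 := sq_nonneg _
    calc N * ∑ σ : Fin n → Bool, f σ ^ 2 ≤ 7 * (∑ σ : Fin n → Bool, f σ) ^ 2 := hfin
      _ ≤ 9 * (∑ σ : Fin n → Bool, f σ) ^ 2 := by linarith

lemma vmap_inj {σ τ : Fin n → Bool} (h : vmap σ = vmap τ) : σ = τ := by
  funext i
  have := congrFun h i
  cases hσ : σ i <;> cases hτ : τ i <;> simp_all [vmap, sg] <;> norm_num at this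

lemma integral_eq_cube_avg
    {Ω : Type*} [MeasurableSpace Ω] (μ : Measure Ω) [IsProbabilityMeasure μ]
    (ε : Ω → Fin n → ℝ)
    (hmeas : ∀ i, Measurable fun ω => ε ω i)
    (hindep : iIndepFun (fun i ω => ε ω i) μ)
    (hrad : ∀ i, μ {ω | ε ω i = 1} = 1/2 ∧ μ {ω | ε ω i = -1} = 1/2)
    (f : (Fin n → ℝ) → ℝ) :
    ∫ ω, f (ε ω) ∂μ = ((2:ℝ) ^ n)⁻¹ * ∑ σ : Fin n → Bool, f (vmap σ) := by
  classical
  set A : (Fin n → Bool) → Set Ω :=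
    fun σ => ⋂ i, (fun ω => ε ω i) ⁻¹' {vmap σ i} with hA
  have hAmeas : ∀ σ, MeasurableSet (A σ) := fun σ =>
    MeasurableSet.iInter fun i => (hmeas i) (measurableSet_singleton _)
  have hμA : ∀ σ, μ (A σ) = ((2:ENNReal) ^ n)⁻¹ := by
    intro σ
    have h1 : μ (A σ) = ∏ i, μ ((fun ω => ε ω i) ⁻¹' {vmap σ i}) := by
      refine hindep.meas_iInter fun i => ?_
      exact ⟨{vmap σ i}, measurableSet_singleton _, rfl⟩
    have h2 : ∀ i, μ ((fun ω => ε ω i) ⁻¹' {vmap σ i}) = (2:ENNReal)⁻¹ := by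
      intro i
      cases hσ : σ i
      · have : (fun ω => ε ω i) ⁻¹' {vmap σ i} = {ω | ε ω i = -1} := by
          ext ω; simp [vmap, sg, hσ]
        rw [this, (hrad i).2]
        simp [ENNReal.div_eq_inv_mul]
      · have : (fun ω => ε ω i) ⁻¹' {vmap σ i} = {ω | ε ω i = 1} := by
          ext ω; simp [vmap, sg, hσ]
        rw [this, (hrad i).1]
        simp [ENNReal.div_eq_inv_mul]
    rw [h1, Finset.prod_congr rfl fun i _ => h2 i, Finset.prod_const]
    simp [ENNReal.inv_pow]
  -- the union of the A σ has full measure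
  have hfull : μ (⋃ σ : Fin n → Bool, A σ)ᶜ = 0 := by
    have hsub : (⋃ σ : Fin n → Bool, A σ)ᶜ ⊆
        ⋃ i : Fin n, {ω | ε ω i ≠ 1 ∧ ε ω i ≠ -1} := by
      intro ω hω
      simp only [Set.mem_compl_iff, Set.mem_iUnion, not_exists] at hω
      by_contra hc
      simp only [Set.mem_iUnion, Set.mem_setOf_eq, not_exists, not_and_or, not_not] at hc
      have hcoord : ∀ i, ε ω i = 1 ∨ ε ω i = -1 := by
        intro i
        rcases hc i with h | h
        · exact Or.inl (by tauto)
        · exact Or.inr (by tauto)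
      apply hω (fun i => decide (ε ω i = 1))
      rw [hA]
      simp only [Set.mem_iInter, Set.mem_preimage, Set.mem_singleton_iff]
      intro i
      rcases hcoord i with h | h
      · simp [vmap, sg, h]
      · have hne : ε ω i ≠ 1 := by rw [h]; norm_num
        simp only [vmap, sg, h]
        rw [if_neg (by norm_num : ¬ (decide ((-1:ℝ) = 1) = true))]
    refine measure_mono_null hsub ?_
    refine (measure_iUnion_null fun i => ?_)
    have hm1 : MeasurableSet {ω | ε ω i = 1} := (hmeas i) (measurableSet_singleton _)
    have hm2 : MeasurableSet {ω | ε ω i = -1} := (hmeas i) (measurableSet_singleton _)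
    have hdisj : Disjoint {ω | ε ω i = 1} {ω | ε ω i = -1} := by
      rw [Set.disjoint_left]
      intro ω h1 h2
      simp only [Set.mem_setOf_eq] at h1 h2
      rw [h1] at h2; norm_num at h2
    have hun : μ ({ω | ε ω i = 1} ∪ {ω | ε ω i = -1}) = 1 := by
      rw [measure_union hdisj hm2, (hrad i).1, (hrad i).2]
      rw [ENNReal.div_add_div_same, one_add_one_eq_two]
      exact ENNReal.div_self (by norm_num) (by norm_num)
    have : {ω | ε ω i ≠ 1 ∧ ε ω i ≠ -1} = ({ω | ε ω i = 1} ∪ {ω | ε ω i = -1})ᶜ := by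
      ext ω; simp [not_or]
    rw [this]
    rw [measure_compl (hm1.union hm2) (measure_ne_top μ _), hun]
    simp
  -- the simple function g
  have hae : (fun ω => f (ε ω)) =ᵐ[μ]
      (fun ω => ∑ σ : Fin n → Bool, (A σ).indicator (fun _ => f (vmap σ)) ω) := by
    rw [Filter.EventuallyEq, ae_iff]
    refine measure_mono_null ?_ hfull
    intro ω hω
    simp only [Set.mem_setOf_eq] at hω
    simp only [Set.mem_compl_iff, Set.mem_iUnion, not_exists]
    intro σ hσ
    apply hω
    have hεω : ε ω = vmap σ := by
      funext i
      have := Set.mem_iInter.1 hσ i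
      simpa using this
    show f (ε ω) = ∑ τ : Fin n → Bool, (A τ).indicator (fun _ => f (vmap τ)) ω
    rw [Finset.sum_eq_single σ]
    · rw [Set.indicator_of_mem hσ, hεω]
    · intro τ _ hτ
      rw [Set.indicator_of_notMem]
      intro hτω
      have hεω' : ε ω = vmap τ := by
        funext i
        have := Set.mem_iInter.1 hτω i
        simpa using this
      exact hτ (vmap_inj (hεω' ▸ hεω ▸ rfl)).symm
    · intro h; exact absurd (Finset.mem_univ σ) h
  rw [integral_congr_ae hae]
  rw [integral_finset_sum _ fun σ _ => (integrable_const (f (vmap σ))).indicator (hAmeas σ)]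
  have hint : ∀ σ : Fin n → Bool,
      ∫ ω, (A σ).indicator (fun _ => f (vmap σ)) ω ∂μ = ((2:ℝ) ^ n)⁻¹ * f (vmap σ) := by
    intro σ
    rw [integral_indicator_const _ (hAmeas σ), measureReal_def, hμA σ]
    rw [ENNReal.toReal_inv, smul_eq_mul]
    congr 2
  rw [Finset.sum_congr rfl fun σ _ => hint σ, ← Finset.mul_sum]

end CubeAux

/-- For a Rademacher vector `ε` and a finite set `𝓑` of matrices,
`(E sup_B ‖Bε‖)² ≤ E sup_B ‖Bε‖² ≤ 9 (E sup_B ‖Bε‖)²`. -/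
theorem sup_norm_rademacher_square_comparison
    {Ω : Type*} [MeasurableSpace Ω] (μ : Measure Ω) [IsProbabilityMeasure μ]
    {n : ℕ} (ε : Ω → Fin n → ℝ)
    (hmeas : ∀ i, Measurable fun ω => ε ω i)
    (hindep : iIndepFun (fun i ω => ε ω i) μ)
    (hrad : ∀ i, μ {ω | ε ω i = 1} = 1/2 ∧ μ {ω | ε ω i = -1} = 1/2)
    (𝓑 : Finset (Matrix (Fin n) (Fin n) ℝ)) (h𝓑 : 𝓑.Nonempty) :
    (∫ ω, 𝓑.sup' h𝓑 (fun B => euclNorm (B.mulVec (ε ω))) ∂μ) ^ 2 ≤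
        ∫ ω, 𝓑.sup' h𝓑 (fun B => (euclNorm (B.mulVec (ε ω))) ^ 2) ∂μ ∧
      ∫ ω, 𝓑.sup' h𝓑 (fun B => (euclNorm (B.mulVec (ε ω))) ^ 2) ∂μ ≤
        9 * (∫ ω, 𝓑.sup' h𝓑 (fun B => euclNorm (B.mulVec (ε ω))) ∂μ) ^ 2 := by
  classical
  have hsup : ∀ w : Fin n → ℝ, 𝓑.sup' h𝓑 (fun B => euclNorm (B.mulVec w) ^ 2)
      = (𝓑.sup' h𝓑 fun B => euclNorm (B.mulVec w)) ^ 2 := by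
    intro w
    apply le_antisymm
    · apply Finset.sup'_le
      intro B hB
      have h1 : euclNorm (B.mulVec w) ≤ 𝓑.sup' h𝓑 fun B => euclNorm (B.mulVec w) := by
        apply Finset.le_sup' (fun B => euclNorm (B.mulVec w)) hB
      exact pow_le_pow_left₀ (CubeAux.euclNorm_nonneg _) h1 2
    · obtain ⟨B, hBm, hBe⟩ := Finset.exists_mem_eq_sup' h𝓑 (fun B => euclNorm (B.mulVec w))
      rw [hBe]
      apply Finset.le_sup' (fun B => euclNorm (B.mulVec w) ^ 2) hBm
  have h1 : ∫ ω, 𝓑.sup' h𝓑 (fun B => euclNorm (B.mulVec (ε ω))) ∂μ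
      = ((2:ℝ) ^ n)⁻¹ * ∑ σ : Fin n → Bool,
          𝓑.sup' h𝓑 (fun B => euclNorm (B.mulVec (CubeAux.vmap σ))) :=
    CubeAux.integral_eq_cube_avg μ ε hmeas hindep hrad
      (fun w => 𝓑.sup' h𝓑 (fun B => euclNorm (B.mulVec w)))
  have h2 : ∫ ω, 𝓑.sup' h𝓑 (fun B => euclNorm (B.mulVec (ε ω)) ^ 2) ∂μ
      = ((2:ℝ) ^ n)⁻¹ * ∑ σ : Fin n → Bool,
          𝓑.sup' h𝓑 (fun B => euclNorm (B.mulVec (CubeAux.vmap σ)) ^ 2) :=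
    CubeAux.integral_eq_cube_avg μ ε hmeas hindep hrad
      (fun w => 𝓑.sup' h𝓑 (fun B => euclNorm (B.mulVec w) ^ 2))
  rw [Finset.sum_congr rfl fun σ _ => hsup (CubeAux.vmap σ)] at h2
  obtain ⟨c1, c2⟩ := CubeAux.cube_main 𝓑 h𝓑
  set S1 : ℝ := ∑ σ : Fin n → Bool,
    𝓑.sup' h𝓑 (fun B => euclNorm (B.mulVec (CubeAux.vmap σ))) with hS1
  set S2 : ℝ := ∑ σ : Fin n → Bool,
    (𝓑.sup' h𝓑 (fun B => euclNorm (B.mulVec (CubeAux.vmap σ)))) ^ 2 with hS2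
  set N : ℝ := (2:ℝ) ^ n with hN
  have hN0 : (0:ℝ) < N := by rw [hN]; positivity
  set u : ℝ := N⁻¹ with hu
  have huN : u * N = 1 := inv_mul_cancel₀ (ne_of_gt hN0)
  rw [h1, h2]
  constructor
  · calc (u * S1) ^ 2 = u ^ 2 * S1 ^ 2 := by ring
      _ ≤ u ^ 2 * (N * S2) := mul_le_mul_of_nonneg_left c1 (sq_nonneg u)
      _ = (u * N) * (u * S2) := by ring
      _ = u * S2 := by rw [huN, one_mul]
  · calc u * S2 = (u * N) * (u * S2) := by rw [huN, one_mul]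
      _ = u ^ 2 * (N * S2) := by ring
      _ ≤ u ^ 2 * (9 * S1 ^ 2) := mul_le_mul_of_nonneg_left c2 (sq_nonneg u)
      _ = 9 * (u * S1) ^ 2 := by ring
end

section
/- Let X = (X₁,…,Xₙ) have independent mean-zero components and let 𝓐 be a finite set of n×n real matrices. Then E sup_{A∈𝓐} ‖Diag(A) X‖ ≤ C · E sup_{A∈𝓐} ‖A X‖ for an absolute constant C > 0. -/
open MeasureTheory ProbabilityTheory Real Matrix

def Pm {n : ℕ} (ε : Fin n → Bool) : Matrix (Fin n) (Fin n) ℝ :=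
  Matrix.diagonal fun j => if ε j then 1 else 0

def Qm {n : ℕ} (ε : Fin n → Bool) : Matrix (Fin n) (Fin n) ℝ :=
  Matrix.diagonal fun j => if ε j then 0 else 1

lemma counting {n : ℕ} {i j : Fin n} (hij : i ≠ j) :
    ∑ ε : Fin n → Bool, ((if ε i then (1:ℝ) else 0) * (if ε j then 0 else 1))
      = 2 ^ n / 4 := by
  classical
  set g : Fin n → Bool → ℝ := fun k b =>
    if k = i then (if b then 1 else 0) else if k = j then (if b then 0 else 1) else 1 with hg
  have step1 : ∀ ε : Fin n → Bool,
      ((if ε i then (1:ℝ) else 0) * (if ε j then 0 else 1)) = ∏ k, g k (ε k) := by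
    intro ε
    rw [← Finset.mul_prod_erase Finset.univ _ (Finset.mem_univ i),
      ← Finset.mul_prod_erase _ _ (Finset.mem_erase.2 ⟨Ne.symm hij, Finset.mem_univ j⟩)]
    have h1 : ∏ k ∈ (Finset.univ.erase i).erase j, g k (ε k) = 1 := by
      apply Finset.prod_eq_one
      intro k hk
      simp only [Finset.mem_erase] at hk
      simp [hg, hk.1, hk.2.1]
    rw [h1]
    simp [hg, hij, Ne.symm hij]
  simp_rw [step1]
  have step2 : ∑ ε : Fin n → Bool, ∏ k, g k (ε k) = ∏ k, ∑ b : Bool, g k b := by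
    rw [Finset.prod_univ_sum]
    rw [← Fintype.piFinset_univ]
  rw [step2]
  have step3 : ∀ k, (∑ b : Bool, g k b) = if k = i then 1 else if k = j then 1 else 2 := by
    intro k
    by_cases h1 : k = i <;> by_cases h2 : k = j <;> simp [hg, h1, h2] <;> norm_num
  simp_rw [step3]
  rw [← Finset.mul_prod_erase Finset.univ _ (Finset.mem_univ i),
    ← Finset.mul_prod_erase _ _ (Finset.mem_erase.2 ⟨Ne.symm hij, Finset.mem_univ j⟩)]
  have h1 : ∏ k ∈ (Finset.univ.erase i).erase j,
      (if k = i then (1:ℝ) else if k = j then 1 else 2) = 2 ^ (n - 2) := by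
    rw [Finset.prod_congr rfl (g := fun _ => (2:ℝ))]
    · rw [Finset.prod_const]
      congr 1
      rw [Finset.card_erase_of_mem (Finset.mem_erase.2 ⟨Ne.symm hij, Finset.mem_univ j⟩),
        Finset.card_erase_of_mem (Finset.mem_univ i)]
      simp only [Finset.card_univ, Fintype.card_fin]
      omega
    · intro k hk
      simp only [Finset.mem_erase] at hk
      simp [hk.1, hk.2.1]
  rw [h1]
  have hn : 2 ≤ n := by
    have : Nontrivial (Fin n) := ⟨⟨i, j, hij⟩⟩
    have h := Fintype.one_lt_card (α := Fin n)
    exact Nat.succ_le_of_lt (by simpa using h)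
  have h2 : (2:ℝ) ^ n = 2 ^ (n - 2) * 2 ^ 2 := by
    rw [← pow_add]; congr 1; omega
  simp only [if_pos rfl, if_neg (Ne.symm hij), h2]
  norm_num

lemma PQ_entry {n : ℕ} (ε : Fin n → Bool) (A : Matrix (Fin n) (Fin n) ℝ) (i j : Fin n) :
    (Pm ε * A * Qm ε) i j = (if ε i then (1:ℝ) else 0) * (if ε j then 0 else 1) * A i j := by
  simp [Pm, Qm, Matrix.mul_apply, Matrix.diagonal, Finset.sum_ite_eq, Finset.sum_ite_eq']

lemma matrix_decomp {n : ℕ} (A : Matrix (Fin n) (Fin n) ℝ) :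
    Matrix.diagonal (fun i => A i i)
      = A - (4 / 2 ^ n : ℝ) • ∑ ε : Fin n → Bool, (Pm ε * A * Qm ε) := by
  ext i j
  simp only [Matrix.sub_apply, Matrix.smul_apply, Matrix.sum_apply, smul_eq_mul,
    Matrix.diagonal_apply]
  by_cases hij : i = j
  · subst hij
    simp only [if_pos rfl]
    have : ∀ ε : Fin n → Bool, (Pm ε * A * Qm ε) i i = 0 := by
      intro ε
      rw [PQ_entry]
      cases h : ε i <;> simp [h]
    rw [Finset.sum_congr rfl fun ε _ => this ε]
    simp
  · rw [if_neg hij]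
    have : ∀ ε : Fin n → Bool, (Pm ε * A * Qm ε) i j
        = ((if ε i then (1:ℝ) else 0) * (if ε j then 0 else 1)) * A i j :=
      fun ε => PQ_entry ε A i j
    rw [Finset.sum_congr rfl fun ε _ => this ε, ← Finset.sum_mul, counting hij]
    have h4 : (0:ℝ) < 2 ^ n := by positivity
    field_simp
    ring

lemma euclNorm_eq_norm {n : ℕ} (v : Fin n → ℝ) :
    euclNorm v = ‖(WithLp.equiv 2 (Fin n → ℝ)).symm v‖ := by
  rw [EuclideanSpace.norm_eq]
  simp [euclNorm, sq_abs]

lemma euclNorm_nonneg {n : ℕ} (v : Fin n → ℝ) : 0 ≤ euclNorm v := Real.sqrt_nonneg _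

lemma euclNorm_mono {n : ℕ} (v w : Fin n → ℝ) (h : ∀ i, v i ^ 2 ≤ w i ^ 2) :
    euclNorm v ≤ euclNorm w := by
  apply Real.sqrt_le_sqrt
  exact Finset.sum_le_sum fun i _ => h i

lemma euclNorm_Pm_le {n : ℕ} (ε : Fin n → Bool) (v : Fin n → ℝ) :
    euclNorm ((Pm ε).mulVec v) ≤ euclNorm v := by
  apply euclNorm_mono
  intro i
  have : (Pm ε).mulVec v i = (if ε i then (1:ℝ) else 0) * v i := by
    simp [Pm, Matrix.mulVec_diagonal]
  rw [this]
  cases h : ε i <;> simp [mul_pow]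
  positivity

lemma key_pointwise {n : ℕ} (A : Matrix (Fin n) (Fin n) ℝ) (x : Fin n → ℝ) :
    euclNorm ((Matrix.diagonal fun i => A i i).mulVec x)
      ≤ euclNorm (A.mulVec x)
        + (4 / 2 ^ n : ℝ) * ∑ ε : Fin n → Bool, euclNorm ((Pm ε * A * Qm ε).mulVec x) := by
  have hd : (Matrix.diagonal fun i => A i i).mulVec x
      = A.mulVec x - (4 / 2 ^ n : ℝ) • (∑ ε : Fin n → Bool, (Pm ε * A * Qm ε)).mulVec x := by
    rw [matrix_decomp A]
    rw [Matrix.sub_mulVec, Matrix.smul_mulVec]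
  set e := (WithLp.equiv 2 (Fin n → ℝ)).symm with he
  have hsum : (∑ ε : Fin n → Bool, (Pm ε * A * Qm ε)).mulVec x
      = ∑ ε : Fin n → Bool, (Pm ε * A * Qm ε).mulVec x := by
    ext i
    simp only [Matrix.mulVec, Matrix.sum_apply, dotProduct, Finset.sum_mul]
    rw [Finset.sum_comm]
    simp [Matrix.mulVec, dotProduct]
  calc euclNorm ((Matrix.diagonal fun i => A i i).mulVec x)
      = ‖e (A.mulVec x) - (4 / 2 ^ n : ℝ) • e ((∑ ε : Fin n → Bool, (Pm ε * A * Qm ε)).mulVec x)‖ := by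
        rw [hd, euclNorm_eq_norm]; rfl
    _ ≤ ‖e (A.mulVec x)‖ + ‖(4 / 2 ^ n : ℝ) • e ((∑ ε : Fin n → Bool, (Pm ε * A * Qm ε)).mulVec x)‖ :=
        norm_sub_le _ _
    _ ≤ euclNorm (A.mulVec x)
        + (4 / 2 ^ n : ℝ) * ∑ ε : Fin n → Bool, euclNorm ((Pm ε * A * Qm ε).mulVec x) := by
        rw [← euclNorm_eq_norm, norm_smul]
        gcongr
        · rw [Real.norm_eq_abs, abs_of_pos (by positivity)]
        · have h2 : e ((∑ ε : Fin n → Bool, (Pm ε * A * Qm ε)).mulVec x)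
              = ∑ ε : Fin n → Bool, e ((Pm ε * A * Qm ε).mulVec x) := by
            rw [hsum, he, WithLp.equiv_symm_apply, WithLp.toLp_sum]
          rw [h2]
          refine le_trans (norm_sum_le _ _) ?_
          simp only [he, ← euclNorm_eq_norm]
          exact le_refl _

noncomputable def toE {n : ℕ} : (Fin n → ℝ) ≃L[ℝ] EuclideanSpace ℝ (Fin n) :=
  (EuclideanSpace.equiv (Fin n) ℝ).symm

lemma toE_apply {n : ℕ} (v : Fin n → ℝ) (i : Fin n) : toE v i = v i := rfl

lemma euclNorm_eq_norm' {n : ℕ} (v : Fin n → ℝ) : euclNorm v = ‖toE v‖ := by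
  rw [EuclideanSpace.norm_eq]
  simp [euclNorm, toE_apply, sq_abs]


variable {n : ℕ} {Ω : Type} [MeasurableSpace Ω] {μ : Measure Ω}

lemma map_eq_pi [IsProbabilityMeasure μ] (X : Ω → Fin n → ℝ)
    (hXm : ∀ i, Measurable fun ω => X ω i)
    (hind : iIndepFun (fun i ω => X ω i) μ) :
    μ.map (fun ω => X ω) = Measure.pi (fun i => μ.map fun ω => X ω i) := by
  haveI : ∀ i, IsProbabilityMeasure (μ.map fun ω => X ω i) :=
    fun i => Measure.isProbabilityMeasure_map (hXm i).aemeasurable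
  symm
  apply Measure.pi_eq
  intro s hs
  rw [Measure.map_apply (measurable_pi_lambda _ hXm) (MeasurableSet.univ_pi hs)]
  have hpre : (fun ω => X ω) ⁻¹' (Set.univ.pi s)
      = ⋂ i ∈ Finset.univ, (fun ω => X ω i) ⁻¹' s i := by
    ext ω; simp [Set.mem_univ_pi]
  rw [hpre, hind.measure_inter_preimage_eq_mul Finset.univ (fun i _ => hs i)]
  refine Finset.prod_congr rfl fun i _ => ?_
  rw [Measure.map_apply (hXm i) (hs i)]

lemma mapZ_eq_pi [IsProbabilityMeasure μ] (X : Ω → Fin n → ℝ)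
    (hXm : ∀ i, Measurable fun ω => X ω i)
    (hind : iIndepFun (fun i ω => X ω i) μ)
    (ε : Fin n → Bool) :
    (μ.prod μ).map (fun p : Ω × Ω => fun j => if ε j then X p.2 j else X p.1 j)
      = Measure.pi (fun i => μ.map fun ω => X ω i) := by
  haveI : ∀ i, IsProbabilityMeasure (μ.map fun ω => X ω i) :=
    fun i => Measure.isProbabilityMeasure_map (hXm i).aemeasurable
  have hZm : Measurable (fun p : Ω × Ω => fun j => if ε j then X p.2 j else X p.1 j) := by
    apply measurable_pi_lambda
    intro j
    cases h : ε j <;> simp only [h, Bool.false_eq_true, if_false, if_true]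
    · exact (hXm j).comp measurable_fst
    · exact (hXm j).comp measurable_snd
  symm
  apply Measure.pi_eq
  intro s hs
  rw [Measure.map_apply hZm (MeasurableSet.univ_pi hs)]
  have hpre : (fun p : Ω × Ω => fun j => if ε j then X p.2 j else X p.1 j) ⁻¹' (Set.univ.pi s)
      = (⋂ j ∈ Finset.univ.filter (fun j => ¬ (ε j = true)), (fun ω => X ω j) ⁻¹' s j)
        ×ˢ (⋂ j ∈ Finset.univ.filter (fun j => ε j = true), (fun ω => X ω j) ⁻¹' s j) := by
    ext p
    simp only [Set.mem_preimage, Set.mem_univ_pi, Set.mem_prod, Set.mem_iInter,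
      Finset.mem_filter, Finset.mem_univ, true_and]
    constructor
    · intro h
      refine ⟨fun j hj => ?_, fun j hj => ?_⟩
      · have := h j; rw [if_neg hj] at this; exact this
      · have := h j; rw [if_pos hj] at this; exact this
    · rintro ⟨h1, h2⟩ j
      by_cases hj : ε j = true
      · rw [if_pos hj]; exact h2 j hj
      · rw [if_neg hj]; exact h1 j hj
  rw [hpre, Measure.prod_prod,
    hind.measure_inter_preimage_eq_mul _ (fun i _ => hs i),
    hind.measure_inter_preimage_eq_mul _ (fun i _ => hs i)]
  rw [mul_comm,
    Finset.prod_filter_mul_prod_filter_not Finset.univ (fun j => ε j = true)]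
  refine Finset.prod_congr rfl fun i _ => ?_
  rw [Measure.map_apply (hXm i) (hs i)]

set_option maxHeartbeats 1000000 in
lemma eps_bound [IsProbabilityMeasure μ] (X : Ω → Fin n → ℝ)
    (hXm : ∀ i, Measurable fun ω => X ω i)
    (hind : iIndepFun (fun i ω => X ω i) μ)
    (hXint : ∀ i, Integrable (fun ω => X ω i) μ ∧ ∫ ω, X ω i ∂μ = 0)
    (𝓐 : Finset (Matrix (Fin n) (Fin n) ℝ)) (h𝓐 : 𝓐.Nonempty)
    (hS : Integrable (fun ω => 𝓐.sup' h𝓐 fun A => euclNorm (A.mulVec (X ω))) μ)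
    (ε : Fin n → Bool) :
    ∃ H : Ω → ℝ, Integrable H μ ∧
      (∫ ω, H ω ∂μ = ∫ ω, 𝓐.sup' h𝓐 (fun A => euclNorm (A.mulVec (X ω))) ∂μ) ∧
      ∀ᵐ ω ∂μ, (𝓐.sup' h𝓐 fun A => euclNorm ((Pm ε * A * Qm ε).mulVec (X ω))) ≤ H ω := by
  classical
  set F : (Fin n → ℝ) → ℝ := fun v => 𝓐.sup' h𝓐 fun A => euclNorm (A.mulVec v) with hF
  have hFc : Continuous F := by
    apply Continuous.finset_sup'_apply h𝓐
    intro A _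
    have h1 : Continuous fun v : Fin n → ℝ => A.mulVec v := by
      apply continuous_pi
      intro i
      simp only [Matrix.mulVec, dotProduct]
      exact continuous_finset_sum _ fun j _ => (continuous_const.mul (continuous_apply j))
    have h2 : Continuous fun v : Fin n → ℝ => euclNorm v := by
      apply Real.continuous_sqrt.comp
      exact continuous_finset_sum _ fun i _ => (continuous_apply i).pow 2
    exact h2.comp h1
  set Z : Ω × Ω → Fin n → ℝ := fun p => fun j => if ε j then X p.2 j else X p.1 j with hZ
  have hZm : Measurable Z := by
    apply measurable_pi_lambda
    intro j
    cases h : ε j <;> simp only [hZ, h, Bool.false_eq_true, if_false, if_true]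
    · exact (hXm j).comp measurable_fst
    · exact (hXm j).comp measurable_snd
  have hXmv : Measurable fun ω => X ω := measurable_pi_lambda _ hXm
  have hlaw : (μ.prod μ).map Z = μ.map (fun ω => X ω) := by
    rw [mapZ_eq_pi X hXm hind ε, map_eq_pi X hXm hind]
  have hFX : Integrable F (μ.map fun ω => X ω) :=
    (integrable_map_measure hFc.aestronglyMeasurable hXmv.aemeasurable).mpr hS
  have hGint : Integrable (fun p => F (Z p)) (μ.prod μ) := by
    rw [← hlaw] at hFX
    exact (integrable_map_measure hFc.aestronglyMeasurable hZm.aemeasurable).mp hFX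
  refine ⟨fun ω => ∫ ω₂, F (Z (ω, ω₂)) ∂μ, hGint.integral_prod_left, ?_, ?_⟩
  · rw [← MeasureTheory.integral_prod _ hGint,
      ← integral_map hZm.aemeasurable hFc.aestronglyMeasurable, hlaw,
      integral_map hXmv.aemeasurable hFc.aestronglyMeasurable]
  · filter_upwards [hGint.prod_right_ae] with ω hω
    apply Finset.sup'_le
    intro A hA
    set M : Matrix (Fin n) (Fin n) ℝ := Pm ε * A with hM
    set u : Ω → EuclideanSpace ℝ (Fin n) := fun ω₂ => toE (M.mulVec (Z (ω, ω₂))) with hu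
    have hZk : ∀ k, Integrable (fun ω₂ => Z (ω, ω₂) k) μ := by
      intro k
      cases h : ε k <;> simp only [hZ, h, Bool.false_eq_true, if_false, if_true]
      · exact integrable_const _
      · exact (hXint k).1
    have hZkint : ∀ k, ∫ ω₂, Z (ω, ω₂) k ∂μ = (Qm ε).mulVec (X ω) k := by
      intro k
      have hq : (Qm ε).mulVec (X ω) k = (if ε k then 0 else 1) * X ω k := by
        simp [Qm, Matrix.mulVec_diagonal]
      cases h : ε k <;> simp only [hZ, h, Bool.false_eq_true, if_false, if_true] at hq ⊢
      · rw [integral_const]; simp [hq]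
      · rw [(hXint k).2, hq]; ring
    have hcoef : ∀ i, Integrable (fun ω₂ => M.mulVec (Z (ω, ω₂)) i) μ := by
      intro i
      simp only [Matrix.mulVec, dotProduct]
      exact integrable_finset_sum _ fun k _ => (hZk k).const_mul _
    have hrep : ∀ v : Fin n → ℝ, toE v
        = ∑ j, v j • toE (fun i => if j = i then (1:ℝ) else 0) := by
      intro v
      conv_lhs => rw [pi_eq_sum_univ v]
      rw [map_sum]
      refine Finset.sum_congr rfl fun j _ => ?_
      exact _root_.map_smul toE _ _
    have huint : Integrable u μ := by
      have : u = fun ω₂ => ∑ j, (M.mulVec (Z (ω, ω₂)) j) •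
          toE (fun i => if j = i then (1:ℝ) else 0) := by
        funext ω₂
        simp only [hu]
        rw [hrep]
      rw [this]
      exact integrable_finset_sum _ fun j _ => (hcoef j).smul_const _
    have hintu : ∫ ω₂, u ω₂ ∂μ = toE ((Pm ε * A * Qm ε).mulVec (X ω)) := by
      have hcomp : ∀ i, (∫ ω₂, u ω₂ ∂μ) i = ∫ ω₂, u ω₂ i ∂μ := by
        intro i
        exact ((EuclideanSpace.proj i).integral_comp_comm huint).symm
      have : ∀ i, (∫ ω₂, u ω₂ ∂μ) i = ((Pm ε * A * Qm ε).mulVec (X ω)) i := by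
        intro i
        rw [hcomp i]
        have h1 : ∀ ω₂, u ω₂ i = ∑ k, M i k * Z (ω, ω₂) k := by
          intro ω₂
          simp only [hu]
          rw [toE_apply]
          rfl
        simp_rw [h1]
        rw [integral_finset_sum _ fun k _ => (hZk k).const_mul _]
        have h2 : ∀ k, ∫ ω₂, M i k * Z (ω, ω₂) k ∂μ = M i k * (Qm ε).mulVec (X ω) k := by
          intro k
          rw [integral_const_mul, hZkint k]
        rw [Finset.sum_congr rfl fun k _ => h2 k]
        have h3 : (Pm ε * A * Qm ε).mulVec (X ω) = M.mulVec ((Qm ε).mulVec (X ω)) := by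
          rw [hM, Matrix.mulVec_mulVec]
        rw [h3]
        rfl
      ext i
      · exact this i
    have hfinal : euclNorm ((Pm ε * A * Qm ε).mulVec (X ω)) ≤ ∫ ω₂, F (Z (ω, ω₂)) ∂μ := by
      rw [euclNorm_eq_norm', ← hintu]
      refine le_trans (norm_integral_le_integral_norm u) ?_
      apply integral_mono_of_nonneg
      · exact Filter.Eventually.of_forall fun ω₂ => norm_nonneg _
      · exact hω
      · apply Filter.Eventually.of_forall
        intro ω₂
        show ‖u ω₂‖ ≤ F (Z (ω, ω₂))
        have h4 : ‖u ω₂‖ = euclNorm (M.mulVec (Z (ω, ω₂))) := (euclNorm_eq_norm' _).symm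
        rw [h4]
        have h5 : M.mulVec (Z (ω, ω₂)) = (Pm ε).mulVec (A.mulVec (Z (ω, ω₂))) := by
          rw [hM, ← Matrix.mulVec_mulVec]
        rw [h5]
        have h6 : euclNorm ((Pm ε).mulVec (A.mulVec (Z (ω, ω₂))))
            ≤ euclNorm (A.mulVec (Z (ω, ω₂))) := euclNorm_Pm_le ε (A.mulVec (Z (ω, ω₂)))
        have h7 : euclNorm (A.mulVec (Z (ω, ω₂))) ≤ F (Z (ω, ω₂)) := by
          rw [hF]
          apply Finset.le_sup' (f := fun B => euclNorm (B.mulVec (Z (ω, ω₂)))) hA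
        exact le_trans h6 h7
    exact hfinal


/-- Lemma: for `X` with independent mean-zero components and a finite set `𝓐` of
matrices, `E sup_{A∈𝓐} ‖Diag(A) X‖ ≤ C E sup_{A∈𝓐} ‖A X‖` for an absolute `C > 0`. -/
theorem diag_compare :
    ∃ C : ℝ, 0 < C ∧
      ∀ (n : ℕ) (Ω : Type) (_ : MeasurableSpace Ω) (μ : Measure Ω),
        IsProbabilityMeasure μ →
      ∀ (X : Ω → Fin n → ℝ),
        (∀ i, Measurable fun ω => X ω i) →
        iIndepFun (fun i ω => X ω i) μ →
        (∀ i, Integrable (fun ω => X ω i) μ ∧ ∫ ω, X ω i ∂μ = 0) →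
      ∀ (𝓐 : Finset (Matrix (Fin n) (Fin n) ℝ)) (h𝓐 : 𝓐.Nonempty),
        Integrable (fun ω =>
          𝓐.sup' h𝓐 fun A => euclNorm ((Matrix.diagonal fun i => A i i).mulVec (X ω))) μ →
        Integrable (fun ω => 𝓐.sup' h𝓐 fun A => euclNorm (A.mulVec (X ω))) μ →
        ∫ ω, 𝓐.sup' h𝓐 (fun A =>
            euclNorm ((Matrix.diagonal fun i => A i i).mulVec (X ω))) ∂μ ≤
          C * ∫ ω, 𝓐.sup' h𝓐 (fun A => euclNorm (A.mulVec (X ω))) ∂μ := by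
  refine ⟨5, by norm_num, ?_⟩
  intro n Ω _ μ hμ X hXm hind hXint 𝓐 h𝓐 hD hS
  set c : ℝ := 4 / 2 ^ n with hc
  have hc0 : 0 ≤ c := by rw [hc]; positivity
  choose H hHint hHeq hHae using fun ε : Fin n → Bool =>
    eps_bound X hXm hind hXint 𝓐 h𝓐 hS ε
  have hae : ∀ᵐ ω ∂μ, ∀ ε : Fin n → Bool,
      (𝓐.sup' h𝓐 fun A => euclNorm ((Pm ε * A * Qm ε).mulVec (X ω))) ≤ H ε ω :=
    ae_all_iff.2 hHae
  have hbound : ∀ᵐ ω ∂μ,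
      (𝓐.sup' h𝓐 fun A => euclNorm ((Matrix.diagonal fun i => A i i).mulVec (X ω)))
        ≤ (𝓐.sup' h𝓐 fun A => euclNorm (A.mulVec (X ω))) + c * ∑ ε : Fin n → Bool, H ε ω := by
    filter_upwards [hae] with ω hω
    apply Finset.sup'_le
    intro A hA
    refine le_trans (key_pointwise A (X ω)) ?_
    have h1 : euclNorm (A.mulVec (X ω)) ≤ 𝓐.sup' h𝓐 fun B => euclNorm (B.mulVec (X ω)) := by
      apply Finset.le_sup' (f := fun B => euclNorm (B.mulVec (X ω))) hA
    have h2 : ∑ ε : Fin n → Bool, euclNorm ((Pm ε * A * Qm ε).mulVec (X ω))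
        ≤ ∑ ε : Fin n → Bool, H ε ω := by
      refine Finset.sum_le_sum fun ε _ => ?_
      refine le_trans ?_ (hω ε)
      apply Finset.le_sup' (f := fun B => euclNorm ((Pm ε * B * Qm ε).mulVec (X ω))) hA
    have := add_le_add h1 (mul_le_mul_of_nonneg_left h2 hc0)
    exact this
  have hint : Integrable (fun ω =>
      (𝓐.sup' h𝓐 fun A => euclNorm (A.mulVec (X ω))) + c * ∑ ε : Fin n → Bool, H ε ω) μ :=
    hS.add ((integrable_finset_sum _ fun ε _ => hHint ε).const_mul c)
  have hnonneg : ∀ ω, 0 ≤ 𝓐.sup' h𝓐 fun A =>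
      euclNorm ((Matrix.diagonal fun i => A i i).mulVec (X ω)) := by
    intro ω
    obtain ⟨A₀, hA₀⟩ := h𝓐
    refine le_trans (euclNorm_nonneg ((Matrix.diagonal fun i => A₀ i i).mulVec (X ω))) ?_
    apply Finset.le_sup'
      (f := fun A => euclNorm ((Matrix.diagonal fun i => A i i).mulVec (X ω))) hA₀
  refine le_trans (integral_mono_of_nonneg (Filter.Eventually.of_forall hnonneg) hint hbound) ?_
  rw [integral_add hS ((integrable_finset_sum _ fun ε _ => hHint ε).const_mul c)]
  rw [integral_const_mul, integral_finset_sum _ fun ε _ => hHint ε]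
  have hsum : ∑ ε : Fin n → Bool, ∫ ω, H ε ω ∂μ
      = (2 ^ n : ℝ) * ∫ ω, 𝓐.sup' h𝓐 (fun A => euclNorm (A.mulVec (X ω))) ∂μ := by
    rw [Finset.sum_congr rfl fun ε _ => hHeq ε, Finset.sum_const]
    simp [Fintype.card_fun, mul_comm]
  rw [hsum]
  have h2n : c * ((2 ^ n : ℝ) * ∫ ω, 𝓐.sup' h𝓐 (fun A => euclNorm (A.mulVec (X ω))) ∂μ)
      = 4 * ∫ ω, 𝓐.sup' h𝓐 (fun A => euclNorm (A.mulVec (X ω))) ∂μ := by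
    rw [hc]
    have : (2:ℝ) ^ n ≠ 0 := by positivity
    field_simp
  rw [h2n]
  ring_nf
  nlinarith [le_refl (∫ ω, 𝓐.sup' h𝓐 (fun A => euclNorm (A.mulVec (X ω))) ∂μ)]
end

section
/- Let δ₁ be a Bernoulli random variable with mean δ ∈ (0, 1/4] and X₁ = δ₁ − δ. Then the subgaussian norm satisfies ‖X₁‖²_{ψ₂} ≍ 1/|log δ|, i.e., there exist absolute constants c, C > 0 with c/|log δ| ≤ ‖X₁‖²_{ψ₂} ≤ C/|log δ|. -/
open MeasureTheory ProbabilityTheory Real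

/-- The ψ₂ (subgaussian) norm of a real random variable:
`‖Y‖_{ψ₂} = inf {t > 0 : E exp(Y²/t²) ≤ 2}`. -/
noncomputable def psi2 {Ω : Type*} [MeasurableSpace Ω] (μ : Measure Ω) (Y : Ω → ℝ) : ℝ :=
  sInf {t : ℝ | 0 < t ∧ ∫ ω, Real.exp ((Y ω) ^ 2 / t ^ 2) ∂μ ≤ 2}


lemma bern_integral {Ω : Type} [MeasurableSpace Ω] (μ : Measure Ω)
    [IsProbabilityMeasure μ] (d : ℝ) (hd0 : 0 < d) (hd1 : d < 1)
    (δ1 : Ω → ℝ) (hm : Measurable δ1)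
    (h1 : μ {ω | δ1 ω = 1} = ENNReal.ofReal d)
    (h0 : μ {ω | δ1 ω = 0} = ENNReal.ofReal (1 - d)) (g : ℝ → ℝ) :
    ∫ ω, g (δ1 ω) ∂μ = d * g 1 + (1 - d) * g 0 := by
  set A := {ω | δ1 ω = 1} with hA
  set B := {ω | δ1 ω = 0} with hB
  have hAm : MeasurableSet A := hm (measurableSet_singleton 1)
  have hBm : MeasurableSet B := hm (measurableSet_singleton 0)
  have hdisj : Disjoint A B := by
    rw [Set.disjoint_left]; intro ω hA' hB'
    simp only [A, B, Set.mem_setOf_eq] at hA' hB'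
    rw [hA'] at hB'; norm_num at hB'
  have hunion : μ (A ∪ B) = 1 := by
    rw [measure_union hdisj hBm, h1, h0, ← ENNReal.ofReal_add hd0.le (by linarith)]
    norm_num
  have hcompl : μ (A ∪ B)ᶜ = 0 := by
    rw [measure_compl (hAm.union hBm) (measure_ne_top _ _), hunion, measure_univ]
    simp
  have hae : (fun ω => g (δ1 ω)) =ᵐ[μ]
      (fun ω => A.indicator (fun _ => g 1) ω + B.indicator (fun _ => g 0) ω) := by
    rw [Filter.EventuallyEq, ae_iff]
    refine measure_mono_null (fun ω hω => ?_) hcompl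
    simp only [Set.mem_setOf_eq] at hω
    simp only [Set.mem_compl_iff, Set.mem_union, not_or]
    by_contra hc
    rw [not_and_or, not_not, not_not] at hc
    rcases hc with h | h
    · have hω1 : δ1 ω = 1 := h
      have hnb : ω ∉ B := Set.disjoint_left.mp hdisj h
      rw [Set.indicator_of_mem h, Set.indicator_of_notMem hnb, hω1] at hω
      simp at hω
    · have hω0 : δ1 ω = 0 := h
      have hna : ω ∉ A := Set.disjoint_right.mp hdisj h
      rw [Set.indicator_of_mem h, Set.indicator_of_notMem hna, hω0] at hω
      simp at hω
  rw [integral_congr_ae hae, integral_add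
    ((integrable_const (g 1)).indicator hAm) ((integrable_const (g 0)).indicator hBm),
    integral_indicator_const _ hAm, integral_indicator_const _ hBm, measureReal_def, measureReal_def, h1, h0,
    ENNReal.toReal_ofReal hd0.le, ENNReal.toReal_ofReal (by linarith)]
  simp [smul_eq_mul]

set_option maxHeartbeats 1000000 in
/-- For a centered Bernoulli variable `X₁ = δ₁ - δ` with mean `δ ∈ (0, 1/4]`,
the squared subgaussian norm is of order `1/|log δ|`. -/
theorem bernoulli_psi2_order :
    ∃ c C : ℝ, 0 < c ∧ 0 < C ∧
      ∀ (Ω : Type) (_ : MeasurableSpace Ω) (μ : Measure Ω),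
        IsProbabilityMeasure μ →
      ∀ (d : ℝ), 0 < d → d ≤ 1/4 →
      ∀ (δ1 : Ω → ℝ), Measurable δ1 →
        μ {ω | δ1 ω = 1} = ENNReal.ofReal d →
        μ {ω | δ1 ω = 0} = ENNReal.ofReal (1 - d) →
        c / |Real.log d| ≤ (psi2 μ (fun ω => δ1 ω - d)) ^ 2 ∧
          (psi2 μ (fun ω => δ1 ω - d)) ^ 2 ≤ C / |Real.log d| := by
  refine ⟨9/32, 2, by norm_num, by norm_num, ?_⟩
  intro Ω _ μ hprob d hd0 hd14 δ1 hm h1 h0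
  have hd1 : d < 1 := by linarith
  obtain ⟨L, hL⟩ : ∃ L : ℝ, L = -Real.log d := ⟨_, rfl⟩
  have hlogneg : Real.log d < 0 := Real.log_neg hd0 hd1
  have hLpos : 0 < L := by rw [hL]; linarith
  have habs : |Real.log d| = L := by rw [hL]; exact abs_of_neg hlogneg
  have hLge : Real.log 4 ≤ L := by
    rw [hL, ← Real.log_inv]
    refine Real.log_le_log (by norm_num) ?_
    rw [le_inv_comm₀ (by norm_num) hd0]
    linarith
  have hfint : ∀ t : ℝ, ∫ ω, Real.exp ((δ1 ω - d) ^ 2 / t ^ 2) ∂μ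
      = d * Real.exp ((1 - d) ^ 2 / t ^ 2) + (1 - d) * Real.exp (d ^ 2 / t ^ 2) := by
    intro t
    have h := bern_integral μ d hd0 hd1 δ1 hm h1 h0
      (fun x => Real.exp ((x - d) ^ 2 / t ^ 2))
    simpa using h
  obtain ⟨S, hS⟩ :
      ∃ S : Set ℝ, S = {t : ℝ | 0 < t ∧ ∫ ω, Real.exp ((δ1 ω - d) ^ 2 / t ^ 2) ∂μ ≤ 2} :=
    ⟨_, rfl⟩
  have hpsi : psi2 μ (fun ω => δ1 ω - d) = sInf S := by rw [hS]; rfl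
  have hmemS : ∀ t : ℝ, t ∈ S ↔ 0 < t ∧
      d * Real.exp ((1 - d) ^ 2 / t ^ 2) + (1 - d) * Real.exp (d ^ 2 / t ^ 2) ≤ 2 := by
    intro t; rw [hS]; simp only [Set.mem_setOf_eq, hfint t]
  -- the upper-bound witness
  obtain ⟨t₀, ht₀⟩ : ∃ t : ℝ, t = Real.sqrt (2 / L) := ⟨_, rfl⟩
  have hdiv : (0:ℝ) < 2 / L := div_pos (by norm_num) hLpos
  have ht₀pos : 0 < t₀ := by rw [ht₀]; exact Real.sqrt_pos.mpr hdiv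
  have ht₀sq : t₀ ^ 2 = 2 / L := by rw [ht₀]; exact Real.sq_sqrt hdiv.le
  have hlogd_le : Real.log d ≤ -(2 * Real.log 2) := by
    have h := Real.log_le_log hd0 hd14
    have h4 : Real.log (1/4) = -(2 * Real.log 2) := by
      rw [show (1:ℝ)/4 = ((2:ℝ)⁻¹) ^ 2 by norm_num, Real.log_pow, Real.log_inv]
      push_cast; ring
    linarith [h4 ▸ h]
  have h1b : d * Real.exp ((1 - d) ^ 2 / t₀ ^ 2) ≤ 1/2 := by
    have hle : (1 - d) ^ 2 / t₀ ^ 2 ≤ L / 2 := by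
      rw [ht₀sq, div_div_eq_mul_div]
      have hsq : (1 - d) ^ 2 ≤ 1 := by nlinarith
      nlinarith
    calc d * Real.exp ((1 - d) ^ 2 / t₀ ^ 2) ≤ d * Real.exp (L / 2) :=
          mul_le_mul_of_nonneg_left (Real.exp_le_exp.mpr hle) hd0.le
      _ = Real.exp (Real.log d + L / 2) := by rw [Real.exp_add, Real.exp_log hd0]
      _ = Real.exp (Real.log d / 2) := by rw [hL]; ring_nf
      _ ≤ Real.exp (-Real.log 2) := Real.exp_le_exp.mpr (by linarith)
      _ = 1/2 := by rw [Real.exp_neg, Real.exp_log (by norm_num : (0:ℝ) < 2)]; norm_num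
  have hLlt : L < 1 / d := by
    have h := Real.log_le_sub_one_of_pos (inv_pos.mpr hd0)
    rw [hL, ← Real.log_inv, one_div]
    have : d⁻¹ - 1 < d⁻¹ := by linarith
    linarith
  have h2b : (1 - d) * Real.exp (d ^ 2 / t₀ ^ 2) ≤ 8/7 := by
    have hle : d ^ 2 / t₀ ^ 2 ≤ 1/8 := by
      rw [ht₀sq, div_div_eq_mul_div]
      have hdL : d ^ 2 * L ≤ d := by
        calc d ^ 2 * L ≤ d ^ 2 * (1 / d) :=
              mul_le_mul_of_nonneg_left hLlt.le (sq_nonneg d)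
          _ = d := by field_simp
      linarith
    have hexp : Real.exp (1/8 : ℝ) ≤ 8/7 := by
      have h := Real.add_one_le_exp (-(1/8) : ℝ)
      have hthis : (7/8 : ℝ) ≤ Real.exp (-(1/8)) := by linarith
      rw [Real.exp_neg] at hthis
      rw [le_inv_comm₀ (by norm_num) (Real.exp_pos _)] at hthis
      calc Real.exp (1/8 : ℝ) ≤ ((7:ℝ)/8)⁻¹ := hthis
        _ = 8/7 := by norm_num
    calc (1 - d) * Real.exp (d ^ 2 / t₀ ^ 2) ≤ 1 * Real.exp (1/8) :=
          mul_le_mul (by linarith) (Real.exp_le_exp.mpr hle) (Real.exp_pos _).le one_pos.le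
      _ ≤ 8/7 := by linarith
  have ht₀mem : t₀ ∈ S := (hmemS t₀).mpr ⟨ht₀pos, by linarith⟩
  -- lower bound
  obtain ⟨a, ha⟩ : ∃ a : ℝ, a = Real.sqrt (9 / (32 * L)) := ⟨_, rfl⟩
  have hdiv2 : (0:ℝ) < 9 / (32 * L) := div_pos (by norm_num) (by linarith)
  have hapos : 0 < a := by rw [ha]; exact Real.sqrt_pos.mpr hdiv2
  have hasq : a ^ 2 = 9 / (32 * L) := by rw [ha]; exact Real.sq_sqrt hdiv2.le
  have hlow : ∀ t ∈ S, a ≤ t := by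
    intro t ht
    obtain ⟨htpos, hint⟩ := (hmemS t).mp ht
    have ht2 : (0:ℝ) < t ^ 2 := by positivity
    have hsecond : (3:ℝ)/4 ≤ (1 - d) * Real.exp (d ^ 2 / t ^ 2) := by
      have hge1 : (1:ℝ) ≤ Real.exp (d ^ 2 / t ^ 2) := Real.one_le_exp (by positivity)
      nlinarith
    have hfirst : d * Real.exp ((1 - d) ^ 2 / t ^ 2) ≤ 2 := by
      have := (Real.exp_pos (d ^ 2 / t ^ 2)).le
      nlinarith
    have hexp : Real.exp ((1 - d) ^ 2 / t ^ 2) ≤ 2 / d := by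
      rw [le_div_iff₀ hd0]
      linarith [mul_comm d (Real.exp ((1 - d) ^ 2 / t ^ 2))]
    have hlog : (1 - d) ^ 2 / t ^ 2 ≤ Real.log (2 / d) := by
      have := Real.log_le_log (Real.exp_pos _) hexp
      rwa [Real.log_exp] at this
    have hlog2 : Real.log (2 / d) ≤ 2 * L := by
      rw [Real.log_div (by norm_num) (ne_of_gt hd0)]
      have h2le : Real.log 2 ≤ L :=
        le_trans (Real.log_le_log (by norm_num) (by norm_num : (2:ℝ) ≤ 4)) hLge
      rw [hL]
      linarith [hL ▸ hLpos]
    have hq : (1 - d) ^ 2 ≤ 2 * L * t ^ 2 := by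
      have := (div_le_iff₀ ht2).mp (le_trans hlog hlog2)
      linarith
    have h9 : (9:ℝ)/16 ≤ (1 - d) ^ 2 := by nlinarith
    have hat : a ^ 2 ≤ t ^ 2 := by
      rw [hasq, div_le_iff₀ (by linarith : (0:ℝ) < 32 * L)]
      nlinarith
    calc a = Real.sqrt (a ^ 2) := (Real.sqrt_sq hapos.le).symm
      _ ≤ Real.sqrt (t ^ 2) := Real.sqrt_le_sqrt hat
      _ = t := Real.sqrt_sq htpos.le
  have hbdd : BddBelow S := ⟨a, fun t ht => hlow t ht⟩
  have hSne : S.Nonempty := ⟨t₀, ht₀mem⟩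
  have hub : psi2 μ (fun ω => δ1 ω - d) ≤ t₀ := by
    rw [hpsi]; exact csInf_le hbdd ht₀mem
  have hlb : a ≤ psi2 μ (fun ω => δ1 ω - d) := by
    rw [hpsi]; exact le_csInf hSne hlow
  rw [habs]
  constructor
  · calc (9:ℝ)/32 / L = a ^ 2 := by rw [hasq]; ring
      _ ≤ _ := pow_le_pow_left₀ hapos.le hlb 2
  · calc (psi2 μ (fun ω => δ1 ω - d)) ^ 2 ≤ t₀ ^ 2 :=
        pow_le_pow_left₀ (le_trans hapos.le hlb) hub 2
      _ = 2 / L := ht₀sq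
end

section
/- There exists a family of symmetric random variables X₁ indexed by r ≥ 4, with P(|X₁| = 1) = 1 − e^{−r} and P(|X₁| = √r) = e^{−r}, such that ‖X₁‖_{ψ₂} ≤ √2 and ‖X₁‖_{L₂} ≥ 1/√2, yet for every constant A > 1 there exist r and t ≥ E X₁² with P(X₁² > A t) > (1/A)·P(X₁² > t). In particular, the tail-regularity property P(X₁² > A t) ≤ A^{−1} P(X₁² > t) for all t ≥ E|X₁|² fails for this family uniformly in A. -/
open MeasureTheory ProbabilityTheory Real

noncomputable def μ0 : Measure ℝ := (2 : ENNReal)⁻¹ • (volume.restrict (Set.Ioo (-1:ℝ) 1))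

noncomputable def X0 (r : ℝ) (ω : ℝ) : ℝ :=
  Real.sign ω * (if |ω| ≤ Real.exp (-r) then Real.sqrt r else 1)

lemma measurable_real_sign : Measurable Real.sign := by
  unfold Real.sign
  exact Measurable.ite (measurableSet_lt measurable_id measurable_const) measurable_const
    (Measurable.ite (measurableSet_lt measurable_const measurable_id) measurable_const
      measurable_const)

lemma measurable_X0 (r : ℝ) : Measurable (X0 r) :=
  measurable_real_sign.mul <| Measurable.ite
    (measurableSet_le measurable_abs measurable_const) measurable_const measurable_const

lemma μ0_apply {s : Set ℝ} (hs : MeasurableSet s) :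
    μ0 s = 2⁻¹ * volume (s ∩ Set.Ioo (-1:ℝ) 1) := by
  rw [μ0, Measure.smul_apply, Measure.restrict_apply hs, smul_eq_mul]

instance : IsProbabilityMeasure μ0 := ⟨by
  rw [μ0_apply MeasurableSet.univ, Set.univ_inter, Real.volume_Ioo]
  rw [show (1:ℝ) - -1 = 2 by norm_num, ENNReal.ofReal_ofNat]
  simp [ENNReal.inv_mul_cancel]⟩

lemma μ0_singleton_zero : μ0 {(0:ℝ)} = 0 := by
  rw [μ0_apply (measurableSet_singleton 0)]
  have h : volume ({(0:ℝ)} ∩ Set.Ioo (-1:ℝ) 1) = 0 :=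
    measure_mono_null Set.inter_subset_left Real.volume_singleton
  rw [h, mul_zero]

lemma μ0_abs_le {c : ℝ} (h0 : 0 ≤ c) (h1 : c < 1) :
    μ0 {ω : ℝ | |ω| ≤ c} = ENNReal.ofReal c := by
  have hset : {ω : ℝ | |ω| ≤ c} = Set.Icc (-c) c := by
    ext ω; simp [abs_le, Set.mem_Icc]
  rw [hset, μ0_apply measurableSet_Icc]
  have hsub : Set.Icc (-c) c ∩ Set.Ioo (-1:ℝ) 1 = Set.Icc (-c) c := by
    apply Set.inter_eq_self_of_subset_left
    intro x hx
    exact ⟨by linarith [hx.1], by linarith [hx.2]⟩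
  rw [hsub, Real.volume_Icc, show c - -c = 2 * c by ring,
    ENNReal.ofReal_mul (by norm_num : (0:ℝ) ≤ 2), ENNReal.ofReal_ofNat, ← mul_assoc,
    ENNReal.inv_mul_cancel (by norm_num) (by norm_num), one_mul]

lemma μ0_abs_gt {c : ℝ} (h0 : 0 ≤ c) (h1 : c < 1) :
    μ0 {ω : ℝ | c < |ω|} = ENNReal.ofReal (1 - c) := by
  have hmeas : MeasurableSet {ω : ℝ | |ω| ≤ c} :=
    measurableSet_le measurable_abs measurable_const
  have hset : {ω : ℝ | c < |ω|} = {ω : ℝ | |ω| ≤ c}ᶜ := by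
    ext ω; simp [not_le]
  rw [hset, measure_compl hmeas (measure_ne_top _ _), measure_univ, μ0_abs_le h0 h1,
    ← ENNReal.ofReal_one, ← ENNReal.ofReal_sub _ h0]

lemma μ0_map_neg : Measure.map (fun ω : ℝ => -ω) μ0 = μ0 := by
  have h1 : (fun ω : ℝ => -ω) ⁻¹' (Set.Ioo (-1:ℝ) 1) = Set.Ioo (-1:ℝ) 1 := by
    ext x
    simp only [Set.mem_preimage, Set.mem_Ioo]
    constructor <;> (rintro ⟨a, b⟩; constructor <;> linarith)
  rw [μ0, Measure.map_smul]
  congr 1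
  calc Measure.map (fun ω:ℝ => -ω) (volume.restrict (Set.Ioo (-1:ℝ) 1))
      = Measure.map (fun ω:ℝ => -ω)
          (volume.restrict ((fun ω:ℝ => -ω) ⁻¹' Set.Ioo (-1:ℝ) 1)) := by rw [h1]
    _ = (Measure.map (fun ω:ℝ => -ω) volume).restrict (Set.Ioo (-1:ℝ) 1) :=
        (Measure.restrict_map measurable_neg measurableSet_Ioo).symm
    _ = volume.restrict (Set.Ioo (-1:ℝ) 1) := by
        rw [show (fun ω:ℝ => -ω) = (Neg.neg : ℝ → ℝ) from rfl, Measure.map_neg_eq_self]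

lemma X0_zero (r : ℝ) : X0 r 0 = 0 := by simp [X0]

lemma abs_X0 {r ω : ℝ} (hω : ω ≠ 0) :
    |X0 r ω| = if |ω| ≤ Real.exp (-r) then Real.sqrt r else 1 := by
  rw [X0, abs_mul]
  have hs : |Real.sign ω| = 1 := by
    rcases hω.lt_or_gt with h | h
    · rw [Real.sign_of_neg h]; norm_num
    · rw [Real.sign_of_pos h]; norm_num
  rw [hs, one_mul]
  split
  · exact abs_of_nonneg (Real.sqrt_nonneg r)
  · norm_num

lemma sq_X0 {r ω : ℝ} (hr : 0 ≤ r) (hω : ω ≠ 0) :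
    (X0 r ω) ^ 2 = if |ω| ≤ Real.exp (-r) then r else 1 := by
  rw [← sq_abs, abs_X0 hω]
  split
  · exact Real.sq_sqrt hr
  · norm_num

lemma two_le_sqrt {r : ℝ} (hr : 4 ≤ r) : (2:ℝ) ≤ Real.sqrt r := by
  have : Real.sqrt 4 ≤ Real.sqrt r := Real.sqrt_le_sqrt hr
  rwa [show (4:ℝ) = 2 ^ 2 by norm_num, Real.sqrt_sq (by norm_num : (0:ℝ) ≤ 2)] at this

lemma set_abs_one {r : ℝ} (hr : 4 ≤ r) :
    {ω : ℝ | |X0 r ω| = 1} = {ω : ℝ | Real.exp (-r) < |ω|} := by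
  have h2 := two_le_sqrt hr
  ext ω
  by_cases hω : ω = 0
  · subst hω
    simp only [Set.mem_setOf_eq, X0_zero, abs_zero]
    constructor
    · intro h; norm_num at h
    · intro h; exact absurd h (not_lt.mpr (Real.exp_pos (-r)).le)
  · simp only [Set.mem_setOf_eq, abs_X0 hω]
    split_ifs with h
    · constructor
      · intro he; linarith
      · intro hgt; exact absurd h (not_le.mpr hgt)
    · simp [not_le.mp h]

lemma set_abs_sqrt {r : ℝ} (hr : 4 ≤ r) :
    {ω : ℝ | |X0 r ω| = Real.sqrt r} = {ω : ℝ | |ω| ≤ Real.exp (-r)} \ {0} := by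
  have h2 := two_le_sqrt hr
  ext ω
  by_cases hω : ω = 0
  · subst hω
    simp only [Set.mem_setOf_eq, X0_zero, abs_zero, Set.mem_diff, Set.mem_singleton_iff,
      not_true, and_false, iff_false]
    intro h; linarith
  · simp only [Set.mem_setOf_eq, abs_X0 hω, Set.mem_diff, Set.mem_singleton_iff, hω,
      not_false_iff, and_true]
    split_ifs with h
    · simp [h]
    · constructor
      · intro he; linarith
      · intro hh; exact absurd hh h

lemma integral_piece (r a b : ℝ) (hr : 4 ≤ r) (f : ℝ → ℝ)
    (hf : ∀ ω : ℝ, ω ≠ 0 → f ω = if |ω| ≤ Real.exp (-r) then a else b) :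
    ∫ ω, f ω ∂μ0 = a * Real.exp (-r) + b * (1 - Real.exp (-r)) := by
  set c := Real.exp (-r) with hc
  have hc0 : 0 < c := Real.exp_pos _
  have hc1 : c < 1 := Real.exp_lt_one_iff.mpr (by linarith)
  set S : Set ℝ := {ω : ℝ | |ω| ≤ c} with hSdef
  have hS : MeasurableSet S := measurableSet_le measurable_abs measurable_const
  set g : ℝ → ℝ := fun ω => S.indicator (fun _ => a) ω + Sᶜ.indicator (fun _ => b) ω with hg
  have hae : f =ᵐ[μ0] g := by
    rw [Filter.eventuallyEq_iff_exists_mem]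
    refine ⟨{0}ᶜ, ?_, ?_⟩
    · rw [mem_ae_iff, compl_compl]; exact μ0_singleton_zero
    · intro ω hω
      have hω0 : ω ≠ 0 := hω
      rw [hf ω hω0, hg]
      by_cases hm : ω ∈ S
      · simp only [Set.indicator_of_mem hm, Set.indicator_of_notMem
          (Set.notMem_compl_iff.mpr hm), add_zero]
        rw [if_pos (show |ω| ≤ c from hm)]
      · simp only [Set.indicator_of_notMem hm, Set.indicator_of_mem (Set.mem_compl hm),
          zero_add]
        rw [if_neg (show ¬ |ω| ≤ c from hm)]
  rw [integral_congr_ae hae, hg]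
  rw [integral_add ((integrable_const a).indicator hS) ((integrable_const b).indicator hS.compl)]
  rw [integral_indicator_const a hS, integral_indicator_const b hS.compl]
  have h1 : μ0 S = ENNReal.ofReal c := μ0_abs_le hc0.le hc1
  have h2 : μ0 Sᶜ = ENNReal.ofReal (1 - c) := by
    rw [measure_compl hS (measure_ne_top _ _), measure_univ, h1, ← ENNReal.ofReal_one,
      ← ENNReal.ofReal_sub _ hc0.le]
  rw [measureReal_def, measureReal_def, h1, h2, ENNReal.toReal_ofReal hc0.le, ENNReal.toReal_ofReal (by linarith)]
  simp [smul_eq_mul]; ring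

lemma integral_sq {r : ℝ} (hr : 4 ≤ r) :
    ∫ ω, (X0 r ω) ^ 2 ∂μ0 = r * Real.exp (-r) + (1 - Real.exp (-r)) := by
  have h := integral_piece r r 1 hr (fun ω => (X0 r ω) ^ 2)
    (fun ω hω => sq_X0 (by linarith) hω)
  simpa using h

lemma integral_sq_ge_one {r : ℝ} (hr : 4 ≤ r) : 1 ≤ ∫ ω, (X0 r ω) ^ 2 ∂μ0 := by
  rw [integral_sq hr]
  have hc0 : 0 < Real.exp (-r) := Real.exp_pos _
  nlinarith

lemma psi2_le {r : ℝ} (hr : 4 ≤ r) : psi2 μ0 (X0 r) ≤ Real.sqrt 2 := by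
  apply csInf_le
  · exact ⟨0, fun t ht => ht.1.le⟩
  · refine ⟨Real.sqrt_pos.mpr (by norm_num), ?_⟩
    have hsq : (Real.sqrt 2) ^ 2 = 2 := Real.sq_sqrt (by norm_num)
    have hcalc : ∫ ω, Real.exp ((X0 r ω) ^ 2 / (Real.sqrt 2) ^ 2) ∂μ0 =
        Real.exp (r / 2) * Real.exp (-r) + Real.exp (1 / 2) * (1 - Real.exp (-r)) := by
      apply integral_piece r _ _ hr
      intro ω hω
      rw [hsq, sq_X0 (by linarith) hω]
      split_ifs <;> norm_num
    rw [hcalc]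
    have h1 : Real.exp (r / 2) * Real.exp (-r) = Real.exp (-(r / 2)) := by
      rw [← Real.exp_add]; ring_nf
    have h2 : Real.exp (-(r / 2)) ≤ Real.exp (-2) := Real.exp_le_exp.mpr (by linarith)
    have h3 : Real.exp (-2) ≤ 1 / 3 := by
      rw [Real.exp_neg]
      have h4 : (3:ℝ) ≤ Real.exp 2 := by
        have := Real.add_one_le_exp (2:ℝ); linarith
      rw [inv_le_comm₀ (by positivity) (by norm_num)]
      linarith
    have h5 : Real.exp (1 / 2) ≤ 5 / 3 := by
      have hh : Real.exp (1 / 2) * Real.exp (1 / 2) = Real.exp 1 := by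
        rw [← Real.exp_add]; norm_num
      nlinarith [Real.exp_pos (1/2 : ℝ), Real.exp_one_lt_d9]
    have hc0 : 0 < Real.exp (-r) := Real.exp_pos _
    have hc1 : Real.exp (-r) < 1 := Real.exp_lt_one_iff.mpr (by linarith)
    nlinarith [Real.exp_pos (1/2 : ℝ)]

lemma tail_set {r s : ℝ} (hr : 4 ≤ r) (h1 : 1 ≤ s) (h2 : s < r) :
    {ω : ℝ | (X0 r ω) ^ 2 > s} = {ω : ℝ | |ω| ≤ Real.exp (-r)} \ {0} := by
  ext ω
  by_cases hω : ω = 0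
  · subst hω
    simp only [Set.mem_setOf_eq, X0_zero, Set.mem_diff, Set.mem_singleton_iff,
      not_true, and_false, iff_false]
    intro h; norm_num at h; linarith
  · simp only [Set.mem_setOf_eq, sq_X0 (by linarith : (0:ℝ) ≤ r) hω, Set.mem_diff,
      Set.mem_singleton_iff, hω, not_false_iff, and_true]
    split_ifs with h
    · simp [h, h2]
    · constructor
      · intro hh; linarith
      · intro hh; exact absurd hh h

lemma μ0_tail {r : ℝ} (hr : 4 ≤ r) :
    μ0 ({ω : ℝ | |ω| ≤ Real.exp (-r)} \ {0}) = ENNReal.ofReal (Real.exp (-r)) := by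
  rw [measure_diff_null μ0_singleton_zero]
  exact μ0_abs_le (Real.exp_pos _).le (Real.exp_lt_one_iff.mpr (by linarith))

/-- Counterexample family: symmetric random variables `X r` (for `r ≥ 4`) with
`P(|X r| = 1) = 1 - e^{-r}`, `P(|X r| = √r) = e^{-r}`, subgaussian norm at most `√2`
and `L₂` norm at least `1/√2`, such that for every `A > 1` the tail-regularity
property `P(X² > A t) ≤ A⁻¹ P(X² > t)` (for all `t ≥ E X²`) fails. -/
theorem tail_regularity_counterexample :
    ∃ (Ω : Type) (_ : MeasurableSpace Ω) (μ : Measure Ω) (_ : IsProbabilityMeasure μ)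
      (X : ℝ → Ω → ℝ),
      (∀ r : ℝ, 4 ≤ r →
        Measurable (X r) ∧
        IdentDistrib (X r) (fun ω => -(X r ω)) μ μ ∧
        μ {ω | |X r ω| = 1} = ENNReal.ofReal (1 - Real.exp (-r)) ∧
        μ {ω | |X r ω| = Real.sqrt r} = ENNReal.ofReal (Real.exp (-r)) ∧
        psi2 μ (X r) ≤ Real.sqrt 2 ∧
        1 / Real.sqrt 2 ≤ Real.sqrt (∫ ω, (X r ω) ^ 2 ∂μ)) ∧
      (∀ A : ℝ, 1 < A → ∃ r : ℝ, 4 ≤ r ∧ ∃ t : ℝ,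
        (∫ ω, (X r ω) ^ 2 ∂μ) ≤ t ∧
        ENNReal.ofReal A⁻¹ * μ {ω | (X r ω) ^ 2 > t} <
          μ {ω | (X r ω) ^ 2 > A * t}) := by
  refine ⟨ℝ, inferInstance, μ0, inferInstance, X0, ?_, ?_⟩
  · intro r hr
    have hc0 : 0 < Real.exp (-r) := Real.exp_pos _
    have hc1 : Real.exp (-r) < 1 := Real.exp_lt_one_iff.mpr (by linarith)
    refine ⟨measurable_X0 r, ?_, ?_, ?_, psi2_le hr, ?_⟩
    · refine ⟨(measurable_X0 r).aemeasurable, ((measurable_X0 r).neg).aemeasurable, ?_⟩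
      have hXneg : (fun ω => -(X0 r ω)) = (X0 r) ∘ (fun ω : ℝ => -ω) := by
        funext ω
        simp only [Function.comp_apply, X0, Real.sign_neg, abs_neg, neg_mul]
      rw [hXneg, ← Measure.map_map (measurable_X0 r) measurable_neg, μ0_map_neg]
    · rw [set_abs_one hr, μ0_abs_gt hc0.le hc1]
    · rw [set_abs_sqrt hr, μ0_tail hr]
    · have h1 : (1:ℝ) ≤ ∫ ω, (X0 r ω) ^ 2 ∂μ0 := integral_sq_ge_one hr
      have h2 : (1:ℝ) ≤ Real.sqrt (∫ ω, (X0 r ω) ^ 2 ∂μ0) := by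
        rw [show (1:ℝ) = Real.sqrt 1 by simp]
        exact Real.sqrt_le_sqrt h1
      have h3 : 1 / Real.sqrt 2 ≤ 1 := by
        rw [div_le_one (Real.sqrt_pos.mpr (by norm_num))]
        rw [show (1:ℝ) = Real.sqrt 1 by simp]
        exact Real.sqrt_le_sqrt (by norm_num)
      linarith
  · intro A hA
    set r : ℝ := 2 * A + 4 with hrdef
    have hr : 4 ≤ r := by simp only [hrdef]; linarith
    refine ⟨r, hr, ∫ ω, (X0 r ω) ^ 2 ∂μ0, le_refl _, ?_⟩
    set c : ℝ := Real.exp (-r) with hcdef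
    have hc0 : 0 < c := Real.exp_pos _
    set t : ℝ := ∫ ω, (X0 r ω) ^ 2 ∂μ0 with htdef
    have ht_eq : t = r * c + (1 - c) := integral_sq hr
    have ht1 : 1 ≤ t := integral_sq_ge_one hr
    have ht2 : t ≤ 2 := by
      have hexp : r + 1 ≤ Real.exp r := Real.add_one_le_exp r
      have h4 : (r - 1) * c ≤ 1 := by
        rw [hcdef, Real.exp_neg, ← div_eq_mul_inv, div_le_one (Real.exp_pos r)]
        linarith
      nlinarith
    have htr : t < r := by linarith
    have hAt : A * t < r := by nlinarith
    have hAt1 : 1 ≤ A * t := by nlinarith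
    rw [tail_set hr ht1 htr, tail_set hr hAt1 hAt, μ0_tail hr]
    have hne0 : ENNReal.ofReal c ≠ 0 := by
      simp [ENNReal.ofReal_eq_zero, not_le, hc0]
    calc ENNReal.ofReal A⁻¹ * ENNReal.ofReal c < 1 * ENNReal.ofReal c := by
          apply ENNReal.mul_lt_mul_left hne0 ENNReal.ofReal_ne_top
          exact ENNReal.ofReal_lt_one.mpr (inv_lt_one_of_one_lt₀ hA)
      _ = ENNReal.ofReal c := one_mul _
end

section
/- Let W₁,…,Wₙ be independent nonnegative random variables with P(max_i W_i > 0) ≤ 1/8. Then E[W₁ + ⋯ + Wₙ] ≤ 8·E[max_i W_i]. -/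
open MeasureTheory ProbabilityTheory Real

/-- Hoffman–Jørgensen type bound: for independent nonnegative random variables
`W₁, …, Wₙ` with `P(max_i W_i > 0) ≤ 1/8`, one has `E[∑ W_i] ≤ 8 E[max_i W_i]`. -/
theorem hoffman_jorgensen_nonneg
    {Ω : Type*} [MeasurableSpace Ω] (μ : Measure Ω) [IsProbabilityMeasure μ]
    {n : ℕ} (W : Fin n → Ω → ℝ)
    (hmeas : ∀ i, Measurable (W i))
    (hnonneg : ∀ i ω, 0 ≤ W i ω)
    (hindep : iIndepFun W μ)
    (hsmall : μ {ω | (⨆ i, W i ω) > 0} ≤ 1/8) :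
    ∫ ω, ∑ i, W i ω ∂μ ≤ 8 * ∫ ω, ⨆ i, W i ω ∂μ := by
  have hFnonneg : ∀ ω, 0 ≤ ⨆ i, W i ω := fun ω => Real.iSup_nonneg (fun i => hnonneg i ω)
  have hFintnn : 0 ≤ ∫ ω, ⨆ i, W i ω ∂μ := integral_nonneg hFnonneg
  rcases Nat.eq_zero_or_pos n with hn | hn
  · subst hn
    simp only [Finset.univ_eq_empty, Finset.sum_empty, integral_zero]
    linarith
  haveI : Nonempty (Fin n) := ⟨⟨0, hn⟩⟩
  have hFsup' : ∀ ω, (⨆ i, W i ω) = Finset.univ.sup' Finset.univ_nonempty (fun i => W i ω) :=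
    fun ω => (Finset.sup'_univ_eq_ciSup _).symm
  have hFmeas : Measurable (fun ω => ⨆ i, W i ω) := by
    have h := Finset.measurable_sup' (Finset.univ_nonempty (α := Fin n))
      (fun i _ => hmeas i)
    have : (fun ω => ⨆ i, W i ω) = Finset.univ.sup' Finset.univ_nonempty W := by
      funext ω; rw [hFsup' ω, Finset.sup'_apply]
    rw [this]; exact h
  have hle_sup : ∀ i ω, W i ω ≤ ⨆ j, W j ω :=
    fun i ω => le_ciSup (f := fun j => W j ω) (Set.Finite.bddAbove (Set.finite_range _)) i
  have hF_le_sum : ∀ ω, (⨆ i, W i ω) ≤ ∑ i, W i ω := by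
    intro ω
    rw [hFsup' ω]
    exact Finset.sup'_le _ _ fun j _ =>
      Finset.single_le_sum (fun k _ => hnonneg k ω) (Finset.mem_univ j)
  by_cases hint : Integrable (fun ω => ∑ i, W i ω) μ
  swap
  · rw [integral_undef hint]; linarith
  have hWint : ∀ i, Integrable (W i) μ := by
    intro i
    refine hint.mono' (hmeas i).aestronglyMeasurable (ae_of_all _ fun ω => ?_)
    rw [Real.norm_eq_abs, abs_of_nonneg (hnonneg i ω)]
    exact Finset.single_le_sum (fun k _ => hnonneg k ω) (Finset.mem_univ i)
  have hFint : Integrable (fun ω => ⨆ i, W i ω) μ := by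
    refine hint.mono' hFmeas.aestronglyMeasurable (ae_of_all _ fun ω => ?_)
    rw [Real.norm_eq_abs, abs_of_nonneg (hFnonneg ω)]
    exact hF_le_sum ω
  -- the events
  set A : Fin n → Set Ω := fun i => {ω | ∀ j, j ≠ i → W j ω = 0} with hA
  have hAmeas : ∀ i, MeasurableSet (A i) := by
    intro i
    have : A i = ⋂ j ∈ {j | j ≠ i}, (W j) ⁻¹' {0} := by
      ext ω; simp [hA]
    rw [this]
    exact MeasurableSet.biInter (Set.to_countable _)
      fun j _ => (hmeas j) (measurableSet_singleton 0)
  set Z : Fin n → Ω → ℝ := fun i => (A i).indicator (fun _ => (1:ℝ)) with hZ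
  have hZmeas : ∀ i, Measurable (Z i) := fun i => measurable_const.indicator (hAmeas i)
  have hZ0 : ∀ i ω, 0 ≤ Z i ω := fun i ω => Set.indicator_nonneg (fun _ _ => zero_le_one) ω
  have hZ1 : ∀ i ω, Z i ω ≤ 1 := by
    intro i ω
    simp only [hZ, Set.indicator_apply]
    split_ifs <;> norm_num
  have hZint : ∀ i, Integrable (Z i) μ := fun i => (integrable_const (1:ℝ)).indicator (hAmeas i)
  -- independence of W i and Z i
  have hIndepZ : ∀ i, IndepFun (W i) (Z i) μ := by
    intro i
    have hdisj : Disjoint ({i} : Finset (Fin n)) ({i}ᶜ) := by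
      simp [Finset.disjoint_left]
    have h1 := hindep.indepFun_finset {i} {i}ᶜ hdisj hmeas
    set φ : ((({i} : Finset (Fin n))) → ℝ) → ℝ := fun g => g ⟨i, Finset.mem_singleton_self i⟩
      with hφ
    set B : Set ((({i}ᶜ : Finset (Fin n))) → ℝ) := {g | ∀ j, g j = 0} with hBdef
    have hB : MeasurableSet B := by
      have : B = ⋂ j, (fun g => g j) ⁻¹' {0} := by
        ext g; simp [hBdef, Set.mem_iInter]
      rw [this]
      exact MeasurableSet.iInter fun j => (measurable_pi_apply j) (measurableSet_singleton _)
    set ψ : ((({i}ᶜ : Finset (Fin n))) → ℝ) → ℝ := B.indicator (fun _ => (1:ℝ)) with hψ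
    have h2 := h1.comp (_mγ := inferInstance) (_mγ' := inferInstance) (φ := φ) (ψ := ψ)
      (measurable_pi_apply _) (measurable_const.indicator hB)
    have e1 : (φ ∘ fun a (j : ({i} : Finset (Fin n))) => W j a) = W i := by
      funext ω; simp [hφ]
    have e2 : (ψ ∘ fun a (j : ({i}ᶜ : Finset (Fin n))) => W j a) = Z i := by
      funext ω
      simp only [hψ, hZ, Function.comp_apply, Set.indicator_apply]
      congr 1
      simp only [hBdef, Set.mem_setOf_eq, hA, eq_iff_iff]
      constructor
      · intro h j hj
        exact h ⟨j, by simpa [Finset.mem_compl, Finset.mem_singleton] using hj⟩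
      · intro h j
        have hj2 : (j : Fin n) ∈ ({i}ᶜ : Finset (Fin n)) := j.2
        rw [Finset.mem_compl, Finset.mem_singleton] at hj2
        exact h j.1 hj2
    rw [e1, e2] at h2
    exact h2
  have key : ∀ i, ∫ ω, W i ω * Z i ω ∂μ = (∫ ω, W i ω ∂μ) * (μ (A i)).toReal := by
    intro i
    have hm := (hIndepZ i).integral_mul_eq_mul_integral (hWint i).aestronglyMeasurable
      (hZint i).aestronglyMeasurable
    have he : (fun ω => W i ω * Z i ω) = W i * Z i := rfl
    rw [he, hm]
    congr 1
    exact integral_indicator_one (hAmeas i)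
  -- measure lower bound
  have hA78 : ∀ i, (7:ℝ)/8 ≤ (μ (A i)).toReal := by
    intro i
    have hcompl : (A i)ᶜ ⊆ {ω | (⨆ j, W j ω) > 0} := by
      intro ω hω
      simp only [hA, Set.mem_compl_iff, Set.mem_setOf_eq, not_forall] at hω
      obtain ⟨j, hj, hWj⟩ := hω
      have h0 : 0 < W j ω := lt_of_le_of_ne (hnonneg j ω) (Ne.symm hWj)
      exact lt_of_lt_of_le h0 (hle_sup j ω)
    have h1 : μ ((A i)ᶜ) ≤ 1/8 := le_trans (measure_mono hcompl) hsmall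
    have h2 : (μ ((A i)ᶜ)).toReal ≤ 1/8 := by
      calc (μ ((A i)ᶜ)).toReal ≤ ((1:ENNReal)/8).toReal :=
            ENNReal.toReal_mono (by norm_num) h1
        _ = 1/8 := by norm_num
    have h3 : (μ (A i)).toReal + (μ ((A i)ᶜ)).toReal = 1 := by
      rw [← ENNReal.toReal_add (measure_ne_top _ _) (measure_ne_top _ _),
        measure_add_measure_compl (hAmeas i), measure_univ, ENNReal.toReal_one]
    linarith
  -- pointwise bound
  have hptwise : ∀ ω, ∑ i, W i ω * Z i ω ≤ ⨆ i, W i ω := by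
    intro ω
    by_cases hz : ∀ j, W j ω = 0
    · rw [Finset.sum_eq_zero (fun i _ => by rw [hz i, zero_mul])]
      exact hFnonneg ω
    · push_neg at hz
      obtain ⟨k, hk⟩ := hz
      have hsum : ∑ i, W i ω * Z i ω = W k ω * Z k ω := by
        refine Finset.sum_eq_single k (fun i _ hik => ?_)
          (fun h => absurd (Finset.mem_univ k) h)
        have hnA : ω ∉ A i := fun hAi => hk (hAi k (fun h => hik h.symm))
        simp [hZ, Set.indicator_of_notMem hnA]
      rw [hsum]
      calc W k ω * Z k ω ≤ W k ω * 1 :=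
            mul_le_mul_of_nonneg_left (hZ1 k ω) (hnonneg k ω)
        _ = W k ω := mul_one _
        _ ≤ ⨆ i, W i ω := hle_sup k ω
  have hWZint : ∀ i, Integrable (fun ω => W i ω * Z i ω) μ := by
    intro i
    refine (hWint i).mono' ((hmeas i).mul (hZmeas i)).aestronglyMeasurable
      (ae_of_all _ fun ω => ?_)
    rw [Real.norm_eq_abs, abs_of_nonneg (mul_nonneg (hnonneg i ω) (hZ0 i ω))]
    calc W i ω * Z i ω ≤ W i ω * 1 := mul_le_mul_of_nonneg_left (hZ1 i ω) (hnonneg i ω)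
      _ = W i ω := mul_one _
  calc ∫ ω, ∑ i, W i ω ∂μ = ∑ i, ∫ ω, W i ω ∂μ :=
        integral_finset_sum _ (fun i _ => hWint i)
    _ ≤ ∑ i, (8/7 : ℝ) * ∫ ω, W i ω * Z i ω ∂μ := by
        refine Finset.sum_le_sum fun i _ => ?_
        have hI : 0 ≤ ∫ ω, W i ω ∂μ := integral_nonneg (fun ω => hnonneg i ω)
        have h7 : (∫ ω, W i ω ∂μ) * (7/8) ≤ (∫ ω, W i ω ∂μ) * (μ (A i)).toReal :=
          mul_le_mul_of_nonneg_left (hA78 i) hI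
        rw [key i]
        linarith
    _ = (8/7 : ℝ) * ∑ i, ∫ ω, W i ω * Z i ω ∂μ := by rw [Finset.mul_sum]
    _ = (8/7 : ℝ) * ∫ ω, ∑ i, W i ω * Z i ω ∂μ := by
        rw [integral_finset_sum _ (fun i _ => hWZint i)]
    _ ≤ (8/7 : ℝ) * ∫ ω, ⨆ i, W i ω ∂μ := by
        refine mul_le_mul_of_nonneg_left ?_ (by norm_num)
        exact integral_mono (integrable_finset_sum _ (fun i _ => hWZint i)) hFint
          (fun ω => hptwise ω)
    _ ≤ 8 * ∫ ω, ⨆ i, W i ω ∂μ := by nlinarith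
end

section
/- Let δ = (δ₁,…,δₙ) be independent Bernoulli(δ) random variables and let A be a symmetric n×n real matrix. Then E[(δδᵀ ⊙ A)²] = δ³A² + (δ² − δ³)[Diag(A²) + Off(A)·Diag(A) + Diag(A)·Off(A)] + (δ − δ²)·Diag(A)², where ⊙ is the Hadamard (entrywise) product, Diag(A) is the diagonal part, and Off(A) = A − Diag(A). -/
open MeasureTheory ProbabilityTheory Real Matrix

/-- Exact formula for `E[(δδᵀ ⊙ A)²]` for a vector `δ` of i.i.d. Bernoulli(p)
variables and a symmetric matrix `A`:
`E[(δδᵀ ⊙ A)²] = p³A² + (p² − p³)[Diag(A²) + Off(A)Diag(A) + Diag(A)Off(A)]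
  + (p − p²) Diag(A)²`. -/
theorem bernoulli_hadamard_square_formula
    {Ω : Type*} [MeasurableSpace Ω] (μ : Measure Ω) [IsProbabilityMeasure μ]
    {n : ℕ} (δv : Ω → Fin n → ℝ) (p : ℝ) (hp0 : 0 ≤ p) (hp1 : p ≤ 1)
    (hmeas : ∀ i, Measurable fun ω => δv ω i)
    (hindep : iIndepFun (fun i ω => δv ω i) μ)
    (hber : ∀ i, μ {ω | δv ω i = 1} = ENNReal.ofReal p ∧
      μ {ω | δv ω i = 0} = ENNReal.ofReal (1 - p))
    (A : Matrix (Fin n) (Fin n) ℝ) (hA : A.IsSymm) :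
    ∀ i j, (∫ ω,
        ((Matrix.of fun k l => δv ω k * δv ω l * A k l) *
          (Matrix.of fun k l => δv ω k * δv ω l * A k l)) i j ∂μ) =
      (p ^ 3 • (A * A)
        + (p ^ 2 - p ^ 3) •
            (Matrix.diagonal (fun k => (A * A) k k)
              + (A - Matrix.diagonal fun k => A k k) * (Matrix.diagonal fun k => A k k)
              + (Matrix.diagonal fun k => A k k) * (A - Matrix.diagonal fun k => A k k))
        + (p - p ^ 2) • ((Matrix.diagonal fun k => A k k) *
            (Matrix.diagonal fun k => A k k))) i j := by
  set S : Fin n → Set Ω := fun i => (fun ω => δv ω i) ⁻¹' {1} with hS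
  have hSm : ∀ i, MeasurableSet (S i) := fun i => (hmeas i) (measurableSet_singleton 1)
  have hSμ : ∀ i, μ (S i) = ENNReal.ofReal p := fun i => (hber i).1
  -- a.e. equality with indicator
  have hae : ∀ i, (fun ω => δv ω i) =ᵐ[μ] (S i).indicator (1 : Ω → ℝ) := by
    intro i
    have hz : μ ((S i ∪ (fun ω => δv ω i) ⁻¹' {0})ᶜ) = 0 := by
      have hd : Disjoint (S i) ((fun ω => δv ω i) ⁻¹' {0}) := by
        apply Set.disjoint_left.2
        intro ω h1 h0
        simp only [hS, Set.mem_preimage, Set.mem_singleton_iff] at h1 h0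
        norm_num [h1] at h0
      have hu : μ (S i ∪ (fun ω => δv ω i) ⁻¹' {0}) = 1 := by
        have h2 : μ ((fun ω => δv ω i) ⁻¹' {0}) = ENNReal.ofReal (1 - p) := (hber i).2
        rw [measure_union hd ((hmeas i) (measurableSet_singleton 0)), hSμ i, h2,
          ← ENNReal.ofReal_add hp0 (by linarith)]
        norm_num
      rw [measure_compl ((hSm i).union ((hmeas i) (measurableSet_singleton 0))) (by simp), hu]
      simp
    refine Filter.eventuallyEq_of_mem (by rwa [MeasureTheory.mem_ae_iff]) ?_
    intro ω hω
    show δv ω i = (S i).indicator (1 : Ω → ℝ) ω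
    rcases hω with h1 | h0
    · rw [Set.indicator_of_mem h1]; exact h1
    · simp only [Set.mem_preimage, Set.mem_singleton_iff] at h0
      rw [h0, Set.indicator_of_notMem]
      simp [hS, h0]
  -- measure of intersections via independence
  have hinter : ∀ (t : Finset (Fin n)), μ (⋂ m ∈ t, S m) = ENNReal.ofReal p ^ t.card := by
    intro t
    have h := hindep.measure_inter_preimage_eq_mul t
      (sets := fun _ => ({1} : Set ℝ)) (fun m _ => measurableSet_singleton 1)
    rw [hS]
    rw [h]
    rw [Finset.prod_congr rfl fun m _ => hSμ m, Finset.prod_const]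
  -- integral of a product of four coordinates
  have hint3 : ∀ i k j : Fin n,
      (∫ ω, δv ω i * δv ω k * (δv ω k * δv ω j) ∂μ)
        = p ^ ({i, k, j} : Finset (Fin n)).card := by
    intro i k j
    have he : (fun ω => δv ω i * δv ω k * (δv ω k * δv ω j)) =ᵐ[μ]
        (S i ∩ S k ∩ S j).indicator (1 : Ω → ℝ) := by
      filter_upwards [hae i, hae k, hae j] with ω hi hk hj
      rw [hi, hk, hj]
      by_cases h1 : ω ∈ S i <;> by_cases h2 : ω ∈ S k <;> by_cases h3 : ω ∈ S j <;>
        simp [Set.indicator, h1, h2, h3, Pi.one_apply]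
    rw [integral_congr_ae he, integral_indicator_one (((hSm i).inter (hSm k)).inter (hSm j))]
    have hset : S i ∩ S k ∩ S j = ⋂ m ∈ ({i, k, j} : Finset (Fin n)), S m := by
      ext ω
      simp only [Finset.mem_insert, Finset.mem_singleton, Set.mem_iInter, Set.mem_inter_iff]
      constructor
      · rintro ⟨⟨h1, h2⟩, h3⟩ m hm
        rcases hm with rfl | rfl | rfl <;> assumption
      · intro h
        exact ⟨⟨h i (Or.inl rfl), h k (Or.inr (Or.inl rfl))⟩, h j (Or.inr (Or.inr rfl))⟩
    rw [hset, measureReal_def, hinter, ENNReal.toReal_pow, ENNReal.toReal_ofReal hp0]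
  -- integrability
  have hintg : ∀ i k j : Fin n,
      Integrable (fun ω => δv ω i * δv ω k * (δv ω k * δv ω j)) μ := by
    intro i k j
    have he : (fun ω => δv ω i * δv ω k * (δv ω k * δv ω j)) =ᵐ[μ]
        (S i ∩ S k ∩ S j).indicator (1 : Ω → ℝ) := by
      filter_upwards [hae i, hae k, hae j] with ω hi hk hj
      rw [hi, hk, hj]
      by_cases h1 : ω ∈ S i <;> by_cases h2 : ω ∈ S k <;> by_cases h3 : ω ∈ S j <;>
        simp [Set.indicator, h1, h2, h3, Pi.one_apply]
    exact ((integrable_const (1:ℝ)).indicator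
      (((hSm i).inter (hSm k)).inter (hSm j))).congr he.symm
  intro i j
  have hL : (∫ ω, ((Matrix.of fun k l => δv ω k * δv ω l * A k l) *
        (Matrix.of fun k l => δv ω k * δv ω l * A k l)) i j ∂μ)
      = ∑ k, (A i k * A k j) * p ^ ({i, k, j} : Finset (Fin n)).card := by
    have h1 : (∫ ω, ((Matrix.of fun k l => δv ω k * δv ω l * A k l) *
          (Matrix.of fun k l => δv ω k * δv ω l * A k l)) i j ∂μ)
        = ∫ ω, ∑ k, (A i k * A k j) * (δv ω i * δv ω k * (δv ω k * δv ω j)) ∂μ := by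
      refine integral_congr_ae (Filter.Eventually.of_forall fun ω => ?_)
      simp only [Matrix.mul_apply, Matrix.of_apply]
      exact Finset.sum_congr rfl fun k _ => by ring
    rw [h1, integral_finset_sum _ (fun k _ => (hintg i k j).const_mul _)]
    refine Finset.sum_congr rfl fun k _ => ?_
    rw [MeasureTheory.integral_const_mul, hint3 i k j]
  rw [hL]
  -- now pure algebra
  rcases eq_or_ne i j with rfl | hij
  · -- diagonal case
    have hterm : ∀ k : Fin n, A i k * A k i * p ^ ({i, k, i} : Finset (Fin n)).card
        = A i k * A k i * p ^ 2 + (if k = i then (p - p ^ 2) * (A i i * A i i) else 0) := by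
      intro k
      by_cases hk : k = i
      · subst hk
        have hc : ({k, k, k} : Finset (Fin n)).card = 1 := by simp
        rw [hc, if_pos rfl]; ring
      · have h1 : ({i, k, i} : Finset (Fin n)) = insert k {i} := by
          ext a; simp
        have hc : ({i, k, i} : Finset (Fin n)).card = 2 := by
          rw [h1, Finset.card_insert_of_notMem (by simp [hk])]; simp
        rw [hc, if_neg hk]; ring
    rw [Finset.sum_congr rfl fun k _ => hterm k, Finset.sum_add_distrib,
      Finset.sum_ite_eq' Finset.univ i, if_pos (Finset.mem_univ i)]
    simp only [Matrix.add_apply, Matrix.smul_apply, smul_eq_mul, Matrix.mul_diagonal,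
      Matrix.diagonal_mul, Matrix.sub_apply, Matrix.diagonal_apply_eq]
    rw [Matrix.mul_apply, ← Finset.sum_mul]
    ring
  · -- off-diagonal case
    have hterm : ∀ k : Fin n, A i k * A k j * p ^ ({i, k, j} : Finset (Fin n)).card
        = A i k * A k j * p ^ 3 + (if k = i then (p ^ 2 - p ^ 3) * (A i i * A i j) else 0)
          + (if k = j then (p ^ 2 - p ^ 3) * (A i j * A j j) else 0) := by
      intro k
      by_cases hki : k = i
      · subst hki
        have hc : ({k, k, j} : Finset (Fin n)).card = 2 := by
          have h1 : ({k, k, j} : Finset (Fin n)) = {k, j} := by ext a; simp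
          rw [h1, Finset.card_pair hij]
        rw [hc, if_pos rfl, if_neg hij]; ring
      · by_cases hkj : k = j
        · subst hkj
          have hc : ({i, k, k} : Finset (Fin n)).card = 2 := by
            have h1 : ({i, k, k} : Finset (Fin n)) = {i, k} := by ext a; simp
            rw [h1, Finset.card_pair hij]
          rw [hc, if_neg hki, if_pos rfl]; ring
        · have hc : ({i, k, j} : Finset (Fin n)).card = 3 := by
            rw [Finset.card_insert_of_notMem (by simp [Ne.symm hki, hij]),
              Finset.card_pair hkj]
          rw [hc, if_neg hki, if_neg hkj]; ring
    rw [Finset.sum_congr rfl fun k _ => hterm k, Finset.sum_add_distrib, Finset.sum_add_distrib,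
      Finset.sum_ite_eq' Finset.univ i, Finset.sum_ite_eq' Finset.univ j,
      if_pos (Finset.mem_univ i), if_pos (Finset.mem_univ j)]
    simp only [Matrix.add_apply, Matrix.smul_apply, smul_eq_mul, Matrix.mul_diagonal,
      Matrix.diagonal_mul, Matrix.sub_apply, Matrix.diagonal_apply_ne _ hij,
      Matrix.diagonal_apply_eq]
    rw [Matrix.mul_apply, ← Finset.sum_mul]
    ring
end

section
/- Let δ = (δ₁,…,δₙ) be independent Bernoulli(δ) variables with δ ≤ 1 and A a symmetric n×n real matrix. Then E[(δδᵀ ⊙ A)²] ⪯ δ²(A² + Diag(A²)) + δ·Diag(A)² in the positive semidefinite order. -/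
open MeasureTheory ProbabilityTheory Real Matrix

private lemma psd_smul_aux {n : ℕ} {c : ℝ} (hc : 0 ≤ c) {M : Matrix (Fin n) (Fin n) ℝ}
    (h : M.PosSemidef) : (c • M).PosSemidef := by
  constructor
  · show (c • M)ᴴ = c • M
    rw [Matrix.conjTranspose_smul, star_trivial, h.1]
  · intro x
    have h2 := mul_nonneg hc (h.2 x)
    convert h2 using 1
    simp only [Finsupp.sum, Finset.mul_sum, Matrix.smul_apply, smul_eq_mul]
    exact Finset.sum_congr rfl fun _ _ => Finset.sum_congr rfl fun _ _ => by ring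

/-- Loewner bound: for a vector `δ` of i.i.d. Bernoulli(p) variables (`p ≤ 1`) and a
symmetric matrix `A`, `E[(δδᵀ ⊙ A)²] ⪯ p²(A² + Diag(A²)) + p Diag(A)²`. -/
theorem bernoulli_hadamard_square_loewner
    {Ω : Type*} [MeasurableSpace Ω] (μ : Measure Ω) [IsProbabilityMeasure μ]
    {n : ℕ} (δv : Ω → Fin n → ℝ) (p : ℝ) (hp0 : 0 ≤ p) (hp1 : p ≤ 1)
    (hmeas : ∀ i, Measurable fun ω => δv ω i)
    (hindep : iIndepFun (fun i ω => δv ω i) μ)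
    (hber : ∀ i, μ {ω | δv ω i = 1} = ENNReal.ofReal p ∧
      μ {ω | δv ω i = 0} = ENNReal.ofReal (1 - p))
    (A : Matrix (Fin n) (Fin n) ℝ) (hA : A.IsSymm) :
    (p ^ 2 • (A * A + Matrix.diagonal fun k => (A * A) k k)
      + p • ((Matrix.diagonal fun k => A k k) * (Matrix.diagonal fun k => A k k))
      - Matrix.of (fun i j => ∫ ω,
          ((Matrix.of fun k l => δv ω k * δv ω l * A k l) *
            (Matrix.of fun k l => δv ω k * δv ω l * A k l)) i j ∂μ)).PosSemidef := by
  classical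
  -- measurability of the basic events
  have hms1 : ∀ i : Fin n, MeasurableSet {ω | δv ω i = 1} :=
    fun i => (hmeas i) (measurableSet_singleton 1)
  have hms0 : ∀ i : Fin n, MeasurableSet {ω | δv ω i = 0} :=
    fun i => (hmeas i) (measurableSet_singleton 0)
  -- a.e. the variables take values in {0,1}
  have h01 : ∀ᵐ ω ∂μ, ∀ i, δv ω i = 0 ∨ δv ω i = 1 := by
    rw [ae_all_iff]
    intro i
    have hdisj : Disjoint {ω | δv ω i = 0} {ω | δv ω i = 1} := by
      rw [Set.disjoint_left]
      intro ω h0 h1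
      simp only [Set.mem_setOf_eq] at h0 h1
      rw [h0] at h1; norm_num at h1
    have hunion : μ ({ω | δv ω i = 0} ∪ {ω | δv ω i = 1}) = 1 := by
      rw [measure_union hdisj (hms1 i), (hber i).1, (hber i).2,
        ← ENNReal.ofReal_add (by linarith) hp0]
      norm_num
    have hcompl : μ ({ω | δv ω i = 0} ∪ {ω | δv ω i = 1})ᶜ = 0 := by
      rw [measure_compl ((hms0 i).union (hms1 i)) (measure_ne_top μ _), hunion,
        measure_univ, tsub_self]
    have hseteq : {a | ¬(δv a i = 0 ∨ δv a i = 1)}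
        = ({ω | δv ω i = 0} ∪ {ω | δv ω i = 1})ᶜ := by
      ext ω; simp [not_or]
    rw [ae_iff, hseteq]
    exact hcompl
  -- the moment function
  set m : Fin n → Fin n → Fin n → ℝ :=
    fun i k j => p * (if i = k then 1 else p) * (if i = j ∨ k = j then 1 else p) with hm
  -- key integral computation
  have key : ∀ i k j : Fin n,
      (Integrable (fun ω => (δv ω i * δv ω k * A i k) * (δv ω k * δv ω j * A k j)) μ) ∧
      ∫ ω, (δv ω i * δv ω k * A i k) * (δv ω k * δv ω j * A k j) ∂μ
        = m i k j * (A i k * A k j) := by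
    intro i k j
    set s : Finset (Fin n) := {i, k, j} with hs
    set S : Set Ω := ⋂ l ∈ s, ((fun ω => δv ω l) ⁻¹' {1}) with hS
    have hSmeas : MeasurableSet S :=
      MeasurableSet.biInter (Finset.countable_toSet s)
        (fun l _ => (hmeas l) (measurableSet_singleton 1))
    have hmemS : ∀ ω, ω ∈ S ↔ (δv ω i = 1 ∧ δv ω k = 1 ∧ δv ω j = 1) := by
      intro ω
      simp [hS, hs, Set.mem_iInter]
    have hrep : (fun ω => (δv ω i * δv ω k * A i k) * (δv ω k * δv ω j * A k j))
        =ᵐ[μ] S.indicator (fun _ => A i k * A k j) := by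
      filter_upwards [h01] with ω hω
      rcases hω i with hi | hi <;> rcases hω k with hk | hk <;> rcases hω j with hj | hj <;>
        simp [Set.indicator_apply, hmemS, hi, hk, hj]
    have hInt : Integrable (fun ω => (δv ω i * δv ω k * A i k) * (δv ω k * δv ω j * A k j)) μ :=
      ((integrable_const (A i k * A k j)).indicator hSmeas).congr hrep.symm
    refine ⟨hInt, ?_⟩
    rw [integral_congr_ae hrep, integral_indicator_const _ hSmeas]
    have hμS : μ S = ENNReal.ofReal p ^ s.card := by
      rw [hS, hindep.measure_inter_preimage_eq_mul s
        (sets := fun _ => ({1} : Set ℝ)) (fun l _ => measurableSet_singleton 1)]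
      rw [← Finset.prod_const]
      exact Finset.prod_congr rfl fun l _ => (hber l).1
    have hcard : s.card = if i = k then (if i = j ∨ k = j then 1 else 2)
        else (if i = j ∨ k = j then 2 else 3) := by
      split_ifs with h1 h2 h2
      · obtain rfl : j = i := by
          rcases h2 with h | h
          · exact h.symm
          · exact (h1.trans h).symm
        subst h1
        simp [hs]
      · subst h1
        have hij : i ≠ j := fun h => h2 (Or.inl h)
        simp [hs, Finset.card_insert_of_notMem, hij]
      · rcases h2 with rfl | rfl
        · have : s = {i, k} := by
            ext x; simp [hs]; try tauto
          rw [this, Finset.card_insert_of_notMem (by simpa using h1)]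
          simp
        · have : s = {i, k} := by
            ext x; simp [hs]; try tauto
          rw [this, Finset.card_insert_of_notMem (by simpa using h1)]
          simp
      · push_neg at h2
        rw [hs, Finset.card_insert_of_notMem (by simp [h1, h2.1]),
          Finset.card_insert_of_notMem (by simp [fun h : k = j => h2.2 h]),
          Finset.card_singleton]
    rw [measureReal_def, hμS, hcard, ENNReal.toReal_pow, ENNReal.toReal_ofReal hp0, smul_eq_mul]
    simp only [hm]
    split_ifs <;> ring
  -- rewrite the matrix of integrals
  have hM : (Matrix.of (fun i j => ∫ ω,
          ((Matrix.of fun k l => δv ω k * δv ω l * A k l) *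
            (Matrix.of fun k l => δv ω k * δv ω l * A k l)) i j ∂μ))
      = Matrix.of (fun i j => ∑ k, m i k j * (A i k * A k j)) := by
    ext i j
    simp only [Matrix.of_apply, Matrix.mul_apply]
    rw [integral_finset_sum _ (fun k _ => (key i k j).1)]
    exact Finset.sum_congr rfl fun k _ => (key i k j).2
  rw [hM]
  -- abbreviations
  set D : Matrix (Fin n) (Fin n) ℝ := Matrix.diagonal (fun k => A k k) with hDdef
  set B : Matrix (Fin n) (Fin n) ℝ := A - (2 : ℝ) • D with hBdef
  set q : ℝ := p ^ 2 * (1 - p) / 2 with hq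
  have hq0 : 0 ≤ q := by
    have h1 : (0:ℝ) ≤ 1 - p := by linarith
    positivity
  -- the algebraic identity
  have hgoal : p ^ 2 • (A * A + Matrix.diagonal fun k => (A * A) k k) + p • (D * D)
      - Matrix.of (fun i j => ∑ k, m i k j * (A i k * A k j))
      = q • (A * A) + q • (B * B)
        + p ^ 3 • (Matrix.diagonal fun k => (A * A) k k) + p ^ 2 • (D * D) := by
    have hDD : D * D = Matrix.diagonal (fun k => A k k * A k k) := by
      rw [hDdef, Matrix.diagonal_mul_diagonal]
    rw [hDD]
    ext i j
    simp only [Matrix.add_apply, Matrix.sub_apply, Matrix.smul_apply, smul_eq_mul,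
      Matrix.of_apply, Matrix.mul_apply, Matrix.diagonal_apply, hBdef, hDdef,
      Matrix.sub_apply, Matrix.smul_apply, smul_eq_mul]
    rcases eq_or_ne i j with rfl | hij
    · simp only [if_pos rfl, hm, eq_self_iff_true, true_or, if_true]
      have e1 : p * (A i i * A i i)
          = ∑ k, (if i = k then p * (A i i * A i i) else 0) := by
        rw [Finset.sum_ite_eq]; simp
      have e2 : p ^ 2 * (A i i * A i i)
          = ∑ k, (if i = k then p ^ 2 * (A i i * A i i) else 0) := by
        rw [Finset.sum_ite_eq]; simp
      rw [e1, e2]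
      simp only [Finset.mul_sum, ← Finset.sum_add_distrib, ← Finset.sum_sub_distrib]
      refine Finset.sum_congr rfl fun k _ => ?_
      by_cases h : i = k
      · subst h; simp; try ring
      · have h' : ¬ k = i := fun hh => h hh.symm
        simp [h, h']
        try ring
    · simp only [if_neg hij, hm, hij, false_or, if_false, mul_zero, add_zero]
      simp only [Finset.mul_sum, ← Finset.sum_add_distrib, ← Finset.sum_sub_distrib]
      refine Finset.sum_congr rfl fun k _ => ?_
      by_cases h1 : i = k <;> by_cases h2 : k = j
      · exact absurd (h1.trans h2) hij
      · simp [h1, h2, hij]; try ring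
      · simp [h1, h2, hij]; try ring
      · simp [h1, h2, hij]; try ring
  rw [hgoal]
  -- positive semidefiniteness of each piece
  have hAH : Aᴴ = A := by
    rw [Matrix.conjTranspose_eq_transpose_of_trivial, hA.eq]
  have hAA : (A * A).PosSemidef := by
    have := Matrix.posSemidef_conjTranspose_mul_self A
    rwa [hAH] at this
  have hBH : Bᴴ = B := by
    rw [hBdef, Matrix.conjTranspose_sub, Matrix.conjTranspose_smul, hAH, star_trivial,
      Matrix.conjTranspose_eq_transpose_of_trivial, hDdef, Matrix.diagonal_transpose]
  have hBB : (B * B).PosSemidef := by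
    have := Matrix.posSemidef_conjTranspose_mul_self B
    rwa [hBH] at this
  have hdiag : (Matrix.diagonal fun k => (A * A) k k).PosSemidef := by
    refine Matrix.PosSemidef.diagonal fun k => ?_
    simp only [Matrix.mul_apply]
    refine Finset.sum_nonneg fun l _ => ?_
    rw [hA.apply l k]
    exact mul_self_nonneg _
  have hDD2 : (D * D).PosSemidef := by
    rw [hDdef, Matrix.diagonal_mul_diagonal]
    exact Matrix.PosSemidef.diagonal fun k => mul_self_nonneg _
  exact ((((psd_smul_aux hq0 hAA).add (psd_smul_aux hq0 hBB)).add
    (psd_smul_aux (by positivity) hdiag)).add (psd_smul_aux (by positivity) hDD2))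
end
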